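/- arXiv:2210.16211 — 6 statements merged into one kernel-verified Lean document; each statement's English description precedes it below -/
import Mathlib

section
/- Let q ≥ 3 and n = 2q. If F ⊆ C([n],2) is a non-trivial union-q-efficient family (viewing 2-sets as edges of a graph covering all of [n]), then |F| ≤ C(q+1,2). -/
set_option maxRecDepth 4000

open Finset

lemma uniq_cover {n q : ℕ} (hn : n = 2 * q)
    (G : Finset (Finset (Fin n))) (hc : ∀ A ∈ G, A.card = 2)
    (hcard : G.card = q) (hu : G.sup id = Finset.univ) (v : Fin n) :
    ∃! A, A ∈ G ∧ v ∈ A := by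
  have hpos : 0 < n := v.pos
  have hv : v ∈ G.sup id := by rw [hu]; exact mem_univ v
  rw [Finset.mem_sup] at hv
  obtain ⟨A, hA, hvA⟩ := hv
  refine ⟨A, ⟨hA, hvA⟩, ?_⟩
  rintro B ⟨hB, hvB⟩
  by_contra hne
  have hsub : (Finset.univ : Finset (Fin n)) ⊆ (G.erase B).sup id ∪ B.erase v := by
    intro x _
    have hx : x ∈ G.sup id := by rw [hu]; exact mem_univ x
    rw [Finset.mem_sup] at hx
    obtain ⟨C, hC, hxC⟩ := hx
    by_cases hCB : C = B
    · subst hCB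
      by_cases hxv : x = v
      · subst hxv
        exact mem_union_left _ (Finset.mem_sup.mpr
          ⟨A, Finset.mem_erase.mpr ⟨fun h => hne h.symm, hA⟩, hvA⟩)
      · exact mem_union_right _ (Finset.mem_erase.mpr ⟨hxv, hxC⟩)
    · exact mem_union_left _ (Finset.mem_sup.mpr ⟨C, Finset.mem_erase.mpr ⟨hCB, hC⟩, hxC⟩)
  have h1 : ((G.erase B).sup id).card ≤ 2 * (q - 1) := by
    rw [Finset.sup_eq_biUnion]
    calc ((G.erase B).biUnion id).card ≤ ∑ C ∈ G.erase B, (id C).card :=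
          Finset.card_biUnion_le
      _ = ∑ C ∈ G.erase B, 2 :=
          Finset.sum_congr rfl (fun C hC => hc C (Finset.mem_of_mem_erase hC))
      _ = (G.erase B).card * 2 := by rw [Finset.sum_const, smul_eq_mul]
      _ = 2 * (q - 1) := by rw [Finset.card_erase_of_mem hB, hcard, Nat.mul_comm]
  have h2 : (B.erase v).card ≤ 1 := by
    have hB2 := hc B hB
    have := Finset.card_erase_of_mem hvB
    omega
  have h3 : n ≤ 2 * (q - 1) + 1 := by
    calc n = (Finset.univ : Finset (Fin n)).card := (Finset.card_fin n).symm
      _ ≤ ((G.erase B).sup id ∪ B.erase v).card := Finset.card_le_card hsub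
      _ ≤ ((G.erase B).sup id).card + (B.erase v).card := Finset.card_union_le _ _
      _ ≤ 2 * (q - 1) + 1 := by omega
  omega
/-- Let `n = 2q`, `q ≥ 3`. A non-trivial union-`q`-efficient family of `2`-sets
`F ⊆ C([n],2)` has at most `C(q+1,2)` members. -/
theorem stmt5 (q n : ℕ) (hq : 3 ≤ q) (hn : n = 2 * q)
    (F : Finset (Finset (Fin n))) (hF : ∀ A ∈ F, A.card = 2)
    (hnontriv : F.sup id = Finset.univ)
    (heff : ∀ F' ⊆ F, F'.sup id = Finset.univ →
      ∃ G ⊆ F', G.card = q ∧ G.sup id = Finset.univ) :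
    F.card ≤ (q + 1).choose 2 := by
  classical
  obtain ⟨M, hMF, hMcard, hMsup⟩ := heff F (Finset.Subset.refl F) hnontriv
  have hMc : ∀ A ∈ M, A.card = 2 := fun A hA => hF A (hMF hA)
  have hMuniq : ∀ v : Fin n, ∃! A, A ∈ M ∧ v ∈ A := uniq_cover hn M hMc hMcard hMsup
  obtain ⟨E, hE⟩ : ∃ E : Fin n → Finset (Fin n), ∀ v, E v ∈ M ∧ v ∈ E v :=
    ⟨fun v => (hMuniq v).exists.choose, fun v => (hMuniq v).exists.choose_spec⟩
  have hEuniq : ∀ {v : Fin n} {A}, A ∈ M → v ∈ A → A = E v :=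
    fun {v A} h1 h2 => (hMuniq v).unique ⟨h1, h2⟩ (hE v)
  have hex : ∀ v : Fin n, ∃ u, u ∈ E v ∧ u ≠ v := by
    intro v
    obtain ⟨b, hb1, hb2⟩ := Finset.exists_mem_ne
      (by rw [hMc _ (hE v).1]; norm_num) v
    exact ⟨b, hb1, hb2⟩
  choose P hP1 hP2 using hex
  have hEv : ∀ v, E v = {v, P v} := by
    intro v
    refine (Finset.eq_of_subset_of_card_le ?_ ?_).symm
    · intro x hx
      rcases Finset.mem_insert.mp hx with h | h
      · rw [h]; exact (hE v).2
      · rw [Finset.mem_singleton] at h; rw [h]; exact hP1 v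
    · rw [hMc _ (hE v).1, Finset.card_insert_of_notMem
        (by simp [Ne.symm (hP2 v)]), Finset.card_singleton]
  have hmemE : ∀ {x v : Fin n}, x ∈ E v → x = v ∨ x = P v := by
    intro x v hx
    rw [hEv v] at hx
    simpa using hx
  have hEPv : ∀ v, E (P v) = E v := fun v => (hEuniq (hE v).1 (hP1 v)).symm
  have hPP : ∀ v, P (P v) = v := by
    intro v
    have h := hP1 (P v)
    rw [hEPv v] at h
    rcases hmemE h with h' | h'
    · exact h'
    · exact absurd h' (hP2 (P v))
  have hother : ∀ f ∈ F, ∀ a ∈ f, ∃ x, x ≠ a ∧ f = {a, x} := by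
    intro f hf a ha
    obtain ⟨x, y, hxy, rfl⟩ := Finset.card_eq_two.mp (hF f hf)
    rcases Finset.mem_insert.mp ha with h | h
    · subst h; exact ⟨y, Ne.symm hxy, rfl⟩
    · rw [Finset.mem_singleton] at h; subst h
      exact ⟨x, hxy, Finset.pair_comm x a⟩
  have hnotpartner : ∀ f ∈ F, f ∉ M → ∀ {a x : Fin n}, f = {a, x} → x ≠ a →
      E a ≠ E x := by
    intro f hfF hfM a x hfx hxa hEE
    have hx : x ∈ E a := by rw [hEE]; exact (hE x).2
    rcases hmemE hx with h | h
    · exact hxa h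
    · apply hfM
      rw [hfx, h, ← hEv a]
      exact (hE a).1
  have keyL : ∀ u v : Fin n, ({u, v} : Finset (Fin n)) ∈ F → E u ≠ E v →
      ∀ f ∈ F, P u ∈ f → f = E u ∨ f = ({P u, P v} : Finset (Fin n)) := by
    intro u v huvF hEuv f hfF hPuf
    by_contra hcon
    push_neg at hcon
    obtain ⟨hf1, hf2⟩ := hcon
    have hvu : v ≠ u := fun h => hEuv (congrArg E h.symm)
    have hPuu : P u ≠ u := hP2 u
    have hPvv : P v ≠ v := hP2 v
    have huPv : u ≠ P v := by intro h; apply hEuv; rw [h, hEPv]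
    have hPuPv : P u ≠ P v := by
      intro h; apply hEuv; rw [← hEPv u, ← hEPv v, h]
    obtain ⟨w, hwPu, hfw⟩ := hother f hfF (P u) hPuf
    have hwu : w ≠ u := by
      intro h; apply hf1; rw [hfw, h, Finset.pair_comm, ← hEv]
    have hwPv : w ≠ P v := by intro h; apply hf2; rw [hfw, h]
    set H := insert ({u, v} : Finset (Fin n)) (insert f (M.erase (E u))) with hH
    have hHF : H ⊆ F := by
      intro A hA
      rcases Finset.mem_insert.mp hA with rfl | hA
      · exact huvF
      rcases Finset.mem_insert.mp hA with rfl | hA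
      · exact hfF
      · exact hMF (Finset.mem_of_mem_erase hA)
    have hHsup : H.sup id = Finset.univ := by
      apply Finset.eq_univ_of_forall
      intro x
      rw [Finset.mem_sup]
      by_cases hx : x ∈ E u
      · rcases hmemE hx with h | h
        · refine ⟨({u, v} : Finset (Fin n)), Finset.mem_insert_self _ _, ?_⟩
          rw [h]; exact Finset.mem_insert_self _ _
        · refine ⟨f, Finset.mem_insert_of_mem (Finset.mem_insert_self _ _), ?_⟩
          rw [h]; exact hPuf
      · exact ⟨E x, Finset.mem_insert_of_mem (Finset.mem_insert_of_mem
          (Finset.mem_erase.mpr ⟨fun h => hx (h ▸ (hE x).2), (hE x).1⟩)), (hE x).2⟩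
    obtain ⟨G, hGH, hGq, hGsup⟩ := heff H hHF hHsup
    have hGc : ∀ A ∈ G, A.card = 2 := fun A hA => hF A (hHF (hGH hA))
    have hGuniq := uniq_cover hn G hGc hGq hGsup
    obtain ⟨g1, hg1, hg1u⟩ := hGuniq u
    obtain ⟨hg1G, hug1⟩ := hg1
    obtain ⟨g2, hg2, hg2u⟩ := hGuniq (P v)
    obtain ⟨hg2G, hPvg2⟩ := hg2
    have hg1H := hGH hg1G
    have hg1uv : g1 = {u, v} := by
      rcases Finset.mem_insert.mp hg1H with h | h
      · exact h
      rcases Finset.mem_insert.mp h with rfl | h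
      · exfalso
        rw [hfw] at hug1
        rcases Finset.mem_insert.mp hug1 with h' | h'
        · exact hPuu h'.symm
        · exact hwu ((Finset.mem_singleton.mp h').symm)
      · exfalso
        have hEq : g1 = E u := hEuniq (Finset.mem_of_mem_erase h) hug1
        exact (Finset.mem_erase.mp h).1 hEq
    have hg2H := hGH hg2G
    have hg2Ev : g2 = E v := by
      rcases Finset.mem_insert.mp hg2H with rfl | h
      · exfalso
        rcases Finset.mem_insert.mp hPvg2 with h' | h'
        · exact huPv h'.symm
        · exact hPvv (Finset.mem_singleton.mp h')
      rcases Finset.mem_insert.mp h with rfl | h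
      · exfalso
        rw [hfw] at hPvg2
        rcases Finset.mem_insert.mp hPvg2 with h' | h'
        · exact hPuPv h'.symm
        · exact hwPv ((Finset.mem_singleton.mp h').symm)
      · have hEq : g2 = E (P v) := hEuniq (Finset.mem_of_mem_erase h) hPvg2
        rw [hEPv] at hEq
        exact hEq
    have hvg1 : v ∈ g1 := by rw [hg1uv]; simp
    have hvg2 : v ∈ g2 := by rw [hg2Ev]; exact (hE v).2
    obtain ⟨gv, hgv, hgvu⟩ := hGuniq v
    have h12 : g1 = g2 := (hgvu g1 ⟨hg1G, hvg1⟩).trans (hgvu g2 ⟨hg2G, hvg2⟩).symm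
    rw [hg1uv, hg2Ev, hEv v] at h12
    have hu' : u ∈ ({v, P v} : Finset (Fin n)) := h12 ▸ Finset.mem_insert_self u {v}
    rcases Finset.mem_insert.mp hu' with h' | h'
    · exact hvu h'.symm
    · exact huPv (Finset.mem_singleton.mp h')
  -- counting
  set CR := F \ M with hCRdef
  have hCRF : ∀ f ∈ CR, f ∈ F ∧ f ∉ M := fun f hf => Finset.mem_sdiff.mp hf
  -- each cross edge meets exactly two matching edges
  have htwo : ∀ f ∈ CR, (M.filter (fun A => (A ∩ f).Nonempty)).card = 2 := by
    intro f hf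
    obtain ⟨hfF, hfM⟩ := hCRF f hf
    have hne : f.Nonempty := Finset.card_pos.mp (by rw [hF f hfF]; norm_num)
    obtain ⟨u, hu⟩ := hne
    obtain ⟨v, hvu, hfuv⟩ := hother f hfF u hu
    have hEuv : E u ≠ E v := hnotpartner f hfF hfM hfuv hvu
    have hset : M.filter (fun A => (A ∩ f).Nonempty) = {E u, E v} := by
      ext A
      simp only [Finset.mem_filter, Finset.mem_insert, Finset.mem_singleton]
      constructor
      · rintro ⟨hAM, z, hz⟩
        rw [Finset.mem_inter] at hz
        have hzf := hz.2
        rw [hfuv] at hzf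
        rcases Finset.mem_insert.mp hzf with h | h
        · left; rw [h] at hz; exact hEuniq hAM hz.1
        · right; rw [Finset.mem_singleton] at h; rw [h] at hz
          exact hEuniq hAM hz.1
      · rintro (rfl | rfl)
        · exact ⟨(hE u).1, ⟨u, Finset.mem_inter.mpr ⟨(hE u).2, hu⟩⟩⟩
        · refine ⟨(hE v).1, ⟨v, Finset.mem_inter.mpr ⟨(hE v).2, ?_⟩⟩⟩
          rw [hfuv]; simp
    rw [hset, Finset.card_insert_of_notMem (by simpa using hEuv),
      Finset.card_singleton]
  -- double count
  have hdc : ∑ A ∈ M, (CR.filter (fun f => (A ∩ f).Nonempty)).card = 2 * CR.card := by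
    calc ∑ A ∈ M, (CR.filter (fun f => (A ∩ f).Nonempty)).card
        = ∑ A ∈ M, ∑ f ∈ CR, if (A ∩ f).Nonempty then 1 else 0 :=
          Finset.sum_congr rfl (fun A _ => Finset.card_filter _ _)
      _ = ∑ f ∈ CR, ∑ A ∈ M, if (A ∩ f).Nonempty then 1 else 0 := Finset.sum_comm
      _ = ∑ f ∈ CR, (M.filter (fun A => (A ∩ f).Nonempty)).card :=
          Finset.sum_congr rfl (fun f _ => (Finset.card_filter _ _).symm)
      _ = ∑ f ∈ CR, 2 := Finset.sum_congr rfl htwo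
      _ = 2 * CR.card := by rw [Finset.sum_const, smul_eq_mul, Nat.mul_comm]
  -- helper: when all cross edges meeting E a go through a
  have helperH : ∀ a : Fin n,
      (∀ f ∈ CR, (E a ∩ f).Nonempty → a ∈ f) →
      (CR.filter (fun f => (E a ∩ f).Nonempty)).card ≤ q - 1 := by
    intro a ha
    have hcard : (M.erase (E a)).card = q - 1 := by
      rw [Finset.card_erase_of_mem (hE a).1, hMcard]
    rw [← hcard]
    apply Finset.card_le_card_of_injOn (fun f => (f.erase a).sup E)
    · intro f hf
      rw [Finset.mem_coe, Finset.mem_filter] at hf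
      obtain ⟨hfCR, hmeet⟩ := hf
      obtain ⟨hfF, hfM⟩ := hCRF f hfCR
      have haf : a ∈ f := ha f hfCR hmeet
      obtain ⟨x, hxa, hfx⟩ := hother f hfF a haf
      have hEax : E a ≠ E x := hnotpartner f hfF hfM hfx hxa
      have hphi : (f.erase a).sup E = E x := by
        rw [hfx, Finset.erase_insert (by simpa using hxa.symm)]
        exact Finset.sup_singleton
      show (f.erase a).sup E ∈ M.erase (E a)
      rw [hphi]
      exact Finset.mem_erase.mpr ⟨fun h => hEax h.symm, (hE x).1⟩
    · intro f hf g hg hfg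
      rw [Finset.mem_coe, Finset.mem_filter] at hf hg
      obtain ⟨hfCR, hfmeet⟩ := hf
      obtain ⟨hgCR, hgmeet⟩ := hg
      obtain ⟨hfF, hfM⟩ := hCRF f hfCR
      obtain ⟨hgF, hgM⟩ := hCRF g hgCR
      have haf : a ∈ f := ha f hfCR hfmeet
      have hag : a ∈ g := ha g hgCR hgmeet
      obtain ⟨x, hxa, hfx⟩ := hother f hfF a haf
      obtain ⟨y, hya, hgy⟩ := hother g hgF a hag
      have hEax : E a ≠ E x := hnotpartner f hfF hfM hfx hxa
      have hphif : (f.erase a).sup E = E x := by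
        rw [hfx, Finset.erase_insert (by simpa using hxa.symm)]
        exact Finset.sup_singleton
      have hphig : (g.erase a).sup E = E y := by
        rw [hgy, Finset.erase_insert (by simpa using hya.symm)]
        exact Finset.sup_singleton
      have hExy : E x = E y := by
        rw [← hphif, ← hphig]; exact hfg
      have hy : y ∈ E x := by rw [hExy]; exact (hE y).2
      rcases hmemE hy with h | h
      · rw [hfx, hgy, h]
      · -- y = P x : impossible via keyL
        exfalso
        have hxaF : ({x, a} : Finset (Fin n)) ∈ F := by
          rw [← Finset.pair_comm, ← hfx]; exact hfF
        have hkl := keyL x a hxaF (fun hh => hEax hh.symm) g hgF (by rw [← h]; exact hgy ▸ Finset.mem_insert_of_mem (Finset.mem_singleton_self y))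
        rcases hkl with hk | hk
        · exact hgM (hk ▸ (hE x).1)
        · -- g = {P x, P a}, but a ∈ g
          rw [hk] at hag
          rcases Finset.mem_insert.mp hag with h' | h'
          · -- a = P x so x = P a, E x = E a
            apply hEax
            rw [h', hEPv]
          · exact (hP2 a) (Finset.mem_singleton.mp h').symm
  -- each matching edge meets at most q-1 cross edges
  have hbound : ∀ A ∈ M, (CR.filter (fun f => (A ∩ f).Nonempty)).card ≤ q - 1 := by
    intro A hAM
    have hAne : A.Nonempty := Finset.card_pos.mp (by rw [hMc A hAM]; norm_num)
    obtain ⟨a, haA⟩ := hAne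
    have hAE : A = E a := hEuniq hAM haA
    rw [hAE]
    by_cases hPa : ∃ g ∈ CR, (E a ∩ g).Nonempty ∧ P a ∈ g
    · by_cases haEx : ∃ f ∈ CR, (E a ∩ f).Nonempty ∧ a ∈ f
      · -- both vertices busy: the filter has at most 2 elements
        obtain ⟨g0, hg0CR, hg0meet, hg0Pa⟩ := hPa
        obtain ⟨f0, hf0CR, hf0meet, hf0a⟩ := haEx
        obtain ⟨hf0F, hf0M⟩ := hCRF f0 hf0CR
        obtain ⟨hg0F, hg0M⟩ := hCRF g0 hg0CR
        obtain ⟨x, hxa, hf0x⟩ := hother f0 hf0F a hf0a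
        have hEax : E a ≠ E x := hnotpartner f0 hf0F hf0M hf0x hxa
        have haxF : ({a, x} : Finset (Fin n)) ∈ F := hf0x ▸ hf0F
        have kl1 := keyL a x haxF hEax
        have hg0eq : g0 = ({P a, P x} : Finset (Fin n)) := by
          rcases kl1 g0 hg0F hg0Pa with h | h
          · exact absurd (h ▸ (hE a).1) hg0M
          · exact h
        have hPaPxF : ({P a, P x} : Finset (Fin n)) ∈ F := hg0eq ▸ hg0F
        have hEPaPx : E (P a) ≠ E (P x) := by
          rw [hEPv, hEPv]; exact hEax
        have kl2 := keyL (P a) (P x) hPaPxF hEPaPx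
        have hsub : CR.filter (fun f => (E a ∩ f).Nonempty) ⊆ {f0, g0} := by
          intro h hh
          rw [Finset.mem_filter] at hh
          obtain ⟨hhCR, z, hz⟩ := hh
          obtain ⟨hhF, hhM⟩ := hCRF h hhCR
          rw [Finset.mem_inter] at hz
          rcases hmemE hz.1 with hza | hzPa
          · -- z = a, use kl2
            have hah : P (P a) ∈ h := by rw [hPP]; rw [hza] at hz; exact hz.2
            rcases kl2 h hhF hah with hk | hk
            · exfalso; apply hhM; rw [hk, hEPv]; exact (hE a).1
            · rw [hPP, hPP] at hk
              rw [← hf0x] at hk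
              rw [hk]; exact Finset.mem_insert_self _ _
          · -- z = P a, use kl1
            have hah : P a ∈ h := by rw [hzPa] at hz; exact hz.2
            rcases kl1 h hhF hah with hk | hk
            · exact absurd (hk ▸ (hE a).1) hhM
            · rw [← hg0eq] at hk
              rw [hk]; exact Finset.mem_insert_of_mem (Finset.mem_singleton_self _)
        calc (CR.filter (fun f => (E a ∩ f).Nonempty)).card
            ≤ ({f0, g0} : Finset (Finset (Fin n))).card := Finset.card_le_card hsub
          _ ≤ 2 := le_trans (Finset.card_insert_le _ _) (by simp)
          _ ≤ q - 1 := by omega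
      · -- no cross edge through a : all go through P a
        push_neg at haEx
        have hres := helperH (P a) ?side
        case side =>
          intro f hf hmeet
          rw [hEPv] at hmeet
          obtain ⟨z, hz⟩ := hmeet
          rw [Finset.mem_inter] at hz
          rcases hmemE hz.1 with h | h
          · exfalso
            exact haEx f hf ⟨z, Finset.mem_inter.mpr hz⟩ (h ▸ hz.2)
          · exact h ▸ hz.2
        have : CR.filter (fun f => (E (P a) ∩ f).Nonempty)
            = CR.filter (fun f => (E a ∩ f).Nonempty) := by
          apply Finset.filter_congr
          intro f _
          rw [hEPv]
        rw [this] at hres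
        exact hres
    · -- no cross edge through P a : all go through a
      push_neg at hPa
      apply helperH a
      intro f hf hmeet
      obtain ⟨z, hz⟩ := hmeet
      rw [Finset.mem_inter] at hz
      rcases hmemE hz.1 with h | h
      · exact h ▸ hz.2
      · exfalso
        exact hPa f hf ⟨z, Finset.mem_inter.mpr hz⟩ (h ▸ hz.2)
  -- put it all together
  have hsum : 2 * CR.card ≤ q * (q - 1) := by
    rw [← hdc]
    calc ∑ A ∈ M, (CR.filter (fun f => (A ∩ f).Nonempty)).card
        ≤ ∑ A ∈ M, (q - 1) := Finset.sum_le_sum hbound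
      _ = q * (q - 1) := by rw [Finset.sum_const, smul_eq_mul, hMcard]
  have hsplit : CR.card + q = F.card := by
    have h := Finset.card_sdiff_add_card_eq_card hMF
    rw [hMcard] at h
    exact h
  obtain ⟨m, rfl⟩ : ∃ m, q = m + 1 := ⟨q - 1, by omega⟩
  have hsum' : 2 * CR.card ≤ (m + 1) * m := by simpa using hsum
  obtain ⟨k, hk⟩ := Nat.even_mul_succ_self (m + 1)
  have hch : (m + 1 + 1).choose 2 = k := by
    rw [Nat.choose_two_right]
    have h1 : (m + 1 + 1) * (m + 1 + 1 - 1) = (m + 1) * (m + 2) := by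
      have h2 : m + 1 + 1 - 1 = m + 1 := rfl
      rw [h2, Nat.mul_comm]
    rw [h1, hk]
    omega
  have hrel : (m + 1) * (m + 2) = (m + 1) * m + 2 * (m + 1) := by ring
  have hfinal : 2 * (CR.card + (m + 1)) ≤ k + k := by
    calc 2 * (CR.card + (m + 1)) = 2 * CR.card + 2 * (m + 1) := by ring
      _ ≤ (m + 1) * m + 2 * (m + 1) := by omega
      _ = (m + 1) * (m + 2) := hrel.symm
      _ = k + k := hk
  rw [← hsplit, hch]
  omega
end

section
/- Let n = qk with k ≥ 3. If F ⊆ C([n],k) is non-trivial and union-q-efficient, then for every j ∈ [n], |F(j)| ≤ C(|X(j)|−2, k−1) + 1, where F(j) is the subfamily of sets containing j and X(j) is the union of those sets. -/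
/-- Let `n = qk`, `k ≥ 3`, and `F ⊆ C([n],k)` non-trivial union-`q`-efficient.
Then for every `j`, `|F(j)| ≤ C(|X(j)|-2, k-1) + 1`, where `F(j)` is the
subfamily of sets containing `j` and `X(j)` their union. -/
theorem stmt7 (q k n : ℕ) (hk : 3 ≤ k) (hn : n = q * k)
    (F : Finset (Finset (Fin n))) (hF : ∀ A ∈ F, A.card = k)
    (hnontriv : F.sup id = Finset.univ)
    (heff : ∀ F' ⊆ F, F'.sup id = Finset.univ →
      ∃ G ⊆ F', G.card = q ∧ G.sup id = Finset.univ)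
    (j : Fin n) :
    (F.filter (fun A => j ∈ A)).card ≤
      (((F.filter (fun A => j ∈ A)).sup id).card - 2).choose (k - 1) + 1 := by
  classical
  set Fj := F.filter (fun A => j ∈ A) with hFjdef
  set X := Fj.sup id with hXdef
  -- Key fact: any q-element covering subfamily of F is a partition (multiplicity 1).
  have key : ∀ s : Finset (Finset (Fin n)), s ⊆ F → s.card = q → s.sup id = Finset.univ →
      ∀ (x : Fin n) (A : Finset (Fin n)), A ∈ s → ∀ B ∈ s, x ∈ A → x ∈ B → A = B := by
    intro s hsF hscard hscov x A hA B hB hxA hxB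
    have hk' : ∀ C ∈ s, C.card = k := fun C hC => hF C (hsF hC)
    have hsum1 : ∑ C ∈ s, C.card = n := by
      rw [Finset.sum_congr rfl hk', Finset.sum_const, smul_eq_mul, hscard, hn]
    have hswap : ∑ C ∈ s, C.card = ∑ x : Fin n, (s.filter (fun C => x ∈ C)).card := by
      have h1 : ∀ C ∈ s, C.card = ∑ x : Fin n, if x ∈ C then 1 else 0 := by
        intro C _
        simp [Finset.sum_boole]
      rw [Finset.sum_congr rfl h1, Finset.sum_comm]
      refine Finset.sum_congr rfl fun x _ => ?_
      simp [Finset.sum_boole]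
    have hone : ∀ x : Fin n, 1 ≤ (s.filter (fun C => x ∈ C)).card := by
      intro x
      have : x ∈ s.sup id := by rw [hscov]; exact Finset.mem_univ x
      obtain ⟨C, hC, hxC⟩ := Finset.mem_sup.mp this
      exact Finset.card_pos.mpr ⟨C, Finset.mem_filter.mpr ⟨hC, hxC⟩⟩
    have hall : ∀ x : Fin n, (s.filter (fun C => x ∈ C)).card = 1 := by
      by_contra hcon
      push_neg at hcon
      obtain ⟨x₀, hx₀⟩ := hcon
      have hlt : (1 : ℕ) < (s.filter (fun C => x₀ ∈ C)).card :=
        lt_of_le_of_ne (hone x₀) (Ne.symm hx₀)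
      have : ∑ _x : Fin n, 1 < ∑ x : Fin n, (s.filter (fun C => x ∈ C)).card :=
        Finset.sum_lt_sum (fun i _ => hone i) ⟨x₀, Finset.mem_univ x₀, hlt⟩
      rw [← hswap, hsum1] at this
      simp at this
    have := hall x
    exact Finset.card_le_one.mp this.le A (Finset.mem_filter.mpr ⟨hA, hxA⟩)
      B (Finset.mem_filter.mpr ⟨hB, hxB⟩)
  -- Get a partition G of the universe from F.
  obtain ⟨G, hGF, hGcard, hGcov⟩ := heff F (subset_refl F) hnontriv
  have hjuniv : (j : Fin n) ∈ G.sup id := by rw [hGcov]; exact Finset.mem_univ j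
  obtain ⟨A₀, hA₀G, hjA₀⟩ := Finset.mem_sup.mp hjuniv
  have hA₀F : A₀ ∈ F := hGF hA₀G
  have hA₀Fj : A₀ ∈ Fj := Finset.mem_filter.mpr ⟨hA₀F, hjA₀⟩
  by_cases hcase : ∀ y ∈ A₀, ∃ B ∈ Fj, B ≠ A₀ ∧ y ∈ B
  · -- leads to contradiction
    exfalso
    set F' : Finset (Finset (Fin n)) := (G.erase A₀) ∪ (Fj.erase A₀) with hF'def
    have hF'F : F' ⊆ F := by
      intro C hC
      rcases Finset.mem_union.mp hC with h | h
      · exact hGF (Finset.mem_of_mem_erase h)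
      · exact Finset.mem_of_mem_filter C (Finset.mem_of_mem_erase h)
    have hF'cov : F'.sup id = Finset.univ := by
      apply Finset.eq_univ_of_forall
      intro x
      apply Finset.mem_sup.mpr
      by_cases hxA₀ : x ∈ A₀
      · obtain ⟨B, hBFj, hBne, hxB⟩ := hcase x hxA₀
        exact ⟨B, Finset.mem_union_right _ (Finset.mem_erase.mpr ⟨hBne, hBFj⟩), hxB⟩
      · have : x ∈ G.sup id := by rw [hGcov]; exact Finset.mem_univ x
        obtain ⟨C, hCG, hxC⟩ := Finset.mem_sup.mp this
        have hCne : C ≠ A₀ := fun h => hxA₀ (h ▸ hxC)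
        exact ⟨C, Finset.mem_union_left _ (Finset.mem_erase.mpr ⟨hCne, hCG⟩), hxC⟩
    obtain ⟨G', hG'F', hG'card, hG'cov⟩ := heff F' hF'F hF'cov
    have hG'F : G' ⊆ F := hG'F'.trans hF'F
    have hjuniv' : (j : Fin n) ∈ G'.sup id := by rw [hG'cov]; exact Finset.mem_univ j
    obtain ⟨B, hBG', hjB⟩ := Finset.mem_sup.mp hjuniv'
    have hBFj : B ∈ Fj.erase A₀ := by
      rcases Finset.mem_union.mp (hG'F' hBG') with h | h
      · exfalso
        have : B = A₀ := key G hGF hGcard hGcov j B (Finset.mem_of_mem_erase h) A₀ hA₀G hjB hjA₀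
        exact (Finset.mem_erase.mp h).1 this
      · exact h
    have hBne : B ≠ A₀ := (Finset.mem_erase.mp hBFj).1
    -- G' \ {B} ⊆ G \ {A₀}
    have hsub : G'.erase B ⊆ G.erase A₀ := by
      intro C hC
      obtain ⟨hCne, hCG'⟩ := Finset.mem_erase.mp hC
      rcases Finset.mem_union.mp (hG'F' hCG') with h | h
      · exact h
      · exfalso
        have hjC : j ∈ C := (Finset.mem_filter.mp (Finset.mem_of_mem_erase h)).2
        exact hCne (key G' hG'F hG'card hG'cov j C hCG' B hBG' hjC hjB)
    have hcards : (G.erase A₀).card ≤ (G'.erase B).card := by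
      rw [Finset.card_erase_of_mem hA₀G, Finset.card_erase_of_mem hBG', hGcard, hG'card]
    have heq : G'.erase B = G.erase A₀ := Finset.eq_of_subset_of_card_le hsub hcards
    -- A₀ ⊆ B
    have hA₀B : A₀ ⊆ B := by
      intro y hyA₀
      have : y ∈ G'.sup id := by rw [hG'cov]; exact Finset.mem_univ y
      obtain ⟨C, hCG', hyC⟩ := Finset.mem_sup.mp this
      by_cases hCB : C = B
      · exact hCB ▸ hyC
      · exfalso
        have hCG : C ∈ G.erase A₀ := heq ▸ Finset.mem_erase.mpr ⟨hCB, hCG'⟩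
        have : C = A₀ := key G hGF hGcard hGcov y C (Finset.mem_of_mem_erase hCG) A₀ hA₀G hyC hyA₀
        exact (Finset.mem_erase.mp hCG).1 this
    have : A₀ = B := Finset.eq_of_subset_of_card_le hA₀B
      (by rw [hF A₀ hA₀F, hF B (hG'F hBG')])
    exact hBne this.symm
  · -- there is y ∈ A₀ in no other member of Fj
    push_neg at hcase
    obtain ⟨y, hyA₀, hy⟩ := hcase
    have hyuniq : ∀ B ∈ Fj, y ∈ B → B = A₀ := by
      intro B hB hyB
      by_contra hne
      exact (hy B hB hne) hyB
    by_cases hyj : y = j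
    · -- then Fj = {A₀}
      have : Fj ⊆ {A₀} := by
        intro B hB
        have hjB : j ∈ B := (Finset.mem_filter.mp hB).2
        exact Finset.mem_singleton.mpr (hyuniq B hB (hyj ▸ hjB))
      calc Fj.card ≤ 1 := (Finset.card_le_one_iff_subset_singleton).mpr ⟨A₀, this⟩
        _ ≤ _ := le_add_self
    · -- count: Fj \ {A₀} injects into (k-1)-subsets of X \ {j, y}
      have hjX : j ∈ X := Finset.mem_sup.mpr ⟨A₀, hA₀Fj, hjA₀⟩
      have hyX : y ∈ X := Finset.mem_sup.mpr ⟨A₀, hA₀Fj, hyA₀⟩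
      set S := (X.erase j).erase y with hSdef
      have hScard : S.card = X.card - 2 := by
        rw [hSdef, Finset.card_erase_of_mem (Finset.mem_erase.mpr ⟨hyj, hyX⟩),
          Finset.card_erase_of_mem hjX]
        omega
      have hinj : (Fj.erase A₀).card ≤ (S.powersetCard (k - 1)).card := by
        apply Finset.card_le_card_of_injOn (fun A => A.erase j)
        · intro A hA
          obtain ⟨hAne, hAFj⟩ := Finset.mem_erase.mp hA
          obtain ⟨hAF, hjA⟩ := Finset.mem_filter.mp hAFj
          have hyA : y ∉ A := fun hyA => hAne (hyuniq A hAFj hyA)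
          apply Finset.mem_powersetCard.mpr
          constructor
          · intro x hx
            obtain ⟨hxj, hxA⟩ := Finset.mem_erase.mp hx
            have hxX : x ∈ X := Finset.mem_sup.mpr ⟨A, hAFj, hxA⟩
            have hxy : x ≠ y := fun h => hyA (h ▸ hxA)
            exact Finset.mem_erase.mpr ⟨hxy, Finset.mem_erase.mpr ⟨hxj, hxX⟩⟩
          · rw [Finset.card_erase_of_mem hjA, hF A hAF]
        · intro A hA B hB hAB
          have hAB : A.erase j = B.erase j := hAB
          have hjA : j ∈ A := (Finset.mem_filter.mp (Finset.mem_of_mem_erase hA)).2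
          have hjB : j ∈ B := (Finset.mem_filter.mp (Finset.mem_of_mem_erase hB)).2
          rw [← Finset.insert_erase hjA, ← Finset.insert_erase hjB, hAB]
      rw [Finset.card_powersetCard, hScard] at hinj
      calc Fj.card = (Fj.erase A₀).card + 1 := (Finset.card_erase_add_one hA₀Fj).symm
        _ ≤ (X.card - 2).choose (k - 1) + 1 := by omega
end

section
/- Let q ≥ 4 and n ≥ 3q. If G is a graph on n vertices with radius 2 such that for every pair of vertices u, v the common neighborhood N(u) ∩ N(v) contains a clique on q−2 vertices, then G has at least (q−1)n − C(q,2) edges. -/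
open Finset

private lemma card_inter_split {V : Type*} [Fintype V] [DecidableEq V]
    (s T : Finset V) : s.card = (s ∩ T).card + (s ∩ Tᶜ).card := by
  classical
  have h1 : s ∩ T = s.filter (· ∈ T) := by ext u; simp
  have h2 : s ∩ Tᶜ = s.filter (fun u => ¬ (u ∈ T)) := by ext u; simp
  rw [h1, h2, Finset.card_filter_add_card_filter_not]

private lemma sum_inter_comm {V : Type*} [Fintype V] [DecidableEq V]
    (G : SimpleGraph V) [DecidableRel G.Adj] (P R : Finset V) :
    ∑ v ∈ P, (G.neighborFinset v ∩ R).card = ∑ r ∈ R, (G.neighborFinset r ∩ P).card := by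
  have h : ∀ (X : Finset V) (v : V), (G.neighborFinset v ∩ X) = X.filter (G.Adj v) := by
    intro X v; ext u; simp [SimpleGraph.mem_neighborFinset, and_comm]
  simp only [h, Finset.card_filter]
  rw [Finset.sum_comm]
  apply Finset.sum_congr rfl
  intro r _
  apply Finset.sum_congr rfl
  intro v _
  simp only [SimpleGraph.adj_comm]

set_option maxHeartbeats 2000000 in
/-- Let `q ≥ 4`, `n ≥ 3q`. If `G` is a graph on `n` vertices with radius 2 such
that the common neighborhood of every pair of vertices contains a clique on
`q-2` vertices, then `G` has at least `(q-1)n - C(q,2)` edges. -/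
theorem stmt9 (q n : ℕ) (hq : 4 ≤ q) (hn : 3 * q ≤ n)
    (G : SimpleGraph (Fin n)) [DecidableRel G.Adj]
    (hconn : G.Connected)
    (hradle : ∃ v : Fin n, ∀ u : Fin n, G.dist v u ≤ 2)
    (hradge : ∀ v : Fin n, ∃ u : Fin n, 2 ≤ G.dist v u)
    (hclique : ∀ u v : Fin n, u ≠ v →
      ∃ S : Finset (Fin n), S.card = q - 2 ∧
        (∀ w ∈ S, G.Adj u w ∧ G.Adj v w) ∧
        (∀ w ∈ S, ∀ w' ∈ S, w ≠ w' → G.Adj w w')) :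
    (q - 1) * n - q.choose 2 ≤ G.edgeFinset.card := by
  classical
  set m := G.edgeFinset.card with hm
  -- non-domination : every vertex has a non-neighbor
  have hND : ∀ v : Fin n, ∃ u, u ≠ v ∧ ¬ G.Adj v u := by
    intro v
    obtain ⟨u, hu⟩ := hradge v
    refine ⟨u, ?_, ?_⟩
    · rintro rfl; simp [SimpleGraph.dist_self] at hu
    · intro hadj
      have h1 : G.dist v u ≤ 1 := by
        have := SimpleGraph.dist_le (hadj.toWalk)
        simpa using this
      omega
  -- common clique, repackaged
  have hCL : ∀ u v : Fin n, u ≠ v → ∃ S : Finset (Fin n), S.card = q - 2 ∧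
      (∀ s ∈ S, G.Adj u s) ∧ (∀ s ∈ S, G.Adj v s) ∧
      (∀ s ∈ S, ∀ t ∈ S, s ≠ t → G.Adj s t) := by
    intro u v huv
    obtain ⟨S, h1, h2, h3⟩ := hclique u v huv
    exact ⟨S, h1, fun s hs => (h2 s hs).1, fun s hs => (h2 s hs).2, h3⟩
  -- minimum degree at least q-1
  have hmin : ∀ v : Fin n, q - 1 ≤ G.degree v := by
    intro v
    obtain ⟨u, hu, hnadj⟩ := hND v
    obtain ⟨S, hSc, hSv, hSu, hScl⟩ := hCL v u (Ne.symm hu)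
    have hsub : S ⊆ G.neighborFinset v := by
      intro s hs; exact (SimpleGraph.mem_neighborFinset _ _ _).2 (hSv s hs)
    by_contra hcon
    push_neg at hcon
    have hdeg : (G.neighborFinset v).card ≤ q - 2 := by
      have := G.card_neighborFinset_eq_degree v
      omega
    have hSeq : S = G.neighborFinset v :=
      Finset.eq_of_subset_of_card_le hsub (by omega)
    have hSne : S.Nonempty := by
      rw [← Finset.card_pos, hSc]; omega
    obtain ⟨s, hs⟩ := hSne
    have hvs : v ≠ s := fun h => (G.irrefl (h ▸ hSv s hs))
    obtain ⟨T, hTc, hTv, hTs, hTcl⟩ := hCL v s hvs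
    have hTsub : T ⊆ S.erase s := by
      intro t ht
      refine Finset.mem_erase.2 ⟨?_, ?_⟩
      · intro h; exact G.irrefl (h ▸ hTs t ht)
      · rw [hSeq]; exact (SimpleGraph.mem_neighborFinset _ _ _).2 (hTv t ht)
    have := Finset.card_le_card hTsub
    rw [hTc, Finset.card_erase_of_mem hs, hSc] at this
    omega
  -- minimum degree vertex
  have hn0 : 0 < n := by omega
  obtain ⟨w, -, hwmin'⟩ := Finset.exists_min_image (univ : Finset (Fin n)) (fun v => G.degree v)
    ⟨⟨0, hn0⟩, Finset.mem_univ _⟩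
  have hwmin : ∀ v : Fin n, G.degree w ≤ G.degree v := fun v => hwmin' v (Finset.mem_univ v)
  set δ := G.degree w with hδdef
  have hδq : q - 1 ≤ δ := hmin w
  -- reduce goal
  have hsum : ∑ v : Fin n, G.degree v = 2 * m := G.sum_degrees_eq_twice_card_edges
  suffices h2 : 2*((q-1)*n) ≤ 2*m + q*(q-1) by
    have hch : 2 * q.choose 2 = q * (q-1) := by
      have he : Even ((q-1) * q) := by
        have := Nat.even_mul_succ_self (q-1)
        have hqq : q - 1 + 1 = q := by omega
        rwa [hqq] at this
      rw [Nat.choose_two_right]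
      obtain ⟨k, hk⟩ := he
      have hk' : q * (q - 1) = 2 * k := by rw [Nat.mul_comm]; omega
      rw [hk', Nat.mul_div_cancel_left _ (by norm_num)]
    have hq1n : (q-1) * n ≤ m + q.choose 2 := by omega
    omega
  by_cases hbig : 2*q - 2 ≤ δ
  -- Case C1 : minimum degree ≥ 2q-2
  · have hsum_ge : n * (2*q-2) ≤ ∑ v : Fin n, G.degree v := by
      calc n * (2*q-2) = ∑ _v : Fin n, (2*q-2) := by
            rw [Finset.sum_const, Finset.card_univ, Fintype.card_fin, smul_eq_mul]
        _ ≤ ∑ v : Fin n, G.degree v :=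
            Finset.sum_le_sum (fun v _ => le_trans hbig (hwmin v))
    have h1 : 2*((q-1)*n) = n * (2*q-2) := by
      have : 2*(q-1) = 2*q-2 := by omega
      calc 2*((q-1)*n) = (2*(q-1))*n := by ring
        _ = n * (2*q-2) := by rw [this]; ring
    omega
  -- Now δ ≤ 2q-3
  push_neg at hbig
  have hδle : δ ≤ 2*q - 3 := by omega
  -- generic setup
  set A := G.neighborFinset w with hAdef
  have hAcard : A.card = δ := G.card_neighborFinset_eq_degree w
  have hwA : w ∉ A := by rw [hAdef, SimpleGraph.mem_neighborFinset]; exact G.irrefl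
  set Q : Finset (Fin n) := insert w A with hQdef
  have hQcard : Q.card = δ + 1 := by rw [hQdef, Finset.card_insert_of_notMem hwA, hAcard]
  set out : Finset (Fin n) := Qᶜ with houtdef
  have hQn : δ + 1 ≤ n := by
    have h := Finset.card_le_univ Q
    rw [hQcard] at h
    simpa using h
  have htn : out.card + (δ + 1) = n := by
    have h1 : out.card = Fintype.card (Fin n) - Q.card := by rw [houtdef, Finset.card_compl]
    rw [Fintype.card_fin, hQcard] at h1
    omega
  have hmemA : ∀ {u : Fin n}, u ∈ A ↔ G.Adj w u := by
    intro u; rw [hAdef, SimpleGraph.mem_neighborFinset]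
  have hmemout : ∀ {x : Fin n}, x ∈ out ↔ (x ≠ w ∧ ¬ G.Adj w x) := by
    intro x
    rw [houtdef, Finset.mem_compl, hQdef, Finset.mem_insert]
    push_neg
    constructor
    · rintro ⟨h1, h2⟩; exact ⟨h1, fun h => h2 (hmemA.2 h)⟩
    · rintro ⟨h1, h2⟩; exact ⟨h1, fun h => h2 (hmemA.1 h)⟩
  have hAout : ∀ {u : Fin n}, u ∈ A → u ∈ out → False := by
    intro u h1 h2
    exact (hmemout.1 h2).2 (hmemA.1 h1)
  have hwout : w ∉ out := fun h => (hmemout.1 h).1 rfl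
  set a : Fin n → ℕ := fun x => (G.neighborFinset x ∩ A).card with hadef
  have hax_ge : ∀ x : Fin n, x ≠ w → q - 2 ≤ a x := by
    intro x hxw
    obtain ⟨S, hSc, hSw, hSx, -⟩ := hCL w x (Ne.symm hxw)
    have hsub : S ⊆ G.neighborFinset x ∩ A := by
      intro s hs
      exact Finset.mem_inter.2 ⟨(SimpleGraph.mem_neighborFinset _ _ _).2 (hSx s hs),
        hmemA.2 (hSw s hs)⟩
    have := Finset.card_le_card hsub
    rw [hSc] at this
    exact this
  have hax_le : ∀ x : Fin n, a x ≤ δ := by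
    intro x
    have h := Finset.card_le_card (Finset.inter_subset_right
      (s₁ := G.neighborFinset x) (s₂ := A))
    rw [hAcard] at h
    exact h
  have hNQ : ∀ x ∈ out, G.neighborFinset x ∩ Q = G.neighborFinset x ∩ A := by
    intro x hx
    obtain ⟨hxw, hxnadj⟩ := hmemout.1 hx
    rw [hQdef]
    ext u
    simp only [Finset.mem_inter, Finset.mem_insert, SimpleGraph.mem_neighborFinset]
    constructor
    · rintro ⟨h1, (rfl | h2)⟩
      · exact absurd h1.symm hxnadj
      · exact ⟨h1, h2⟩
    · rintro ⟨h1, h2⟩; exact ⟨h1, Or.inr h2⟩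
  have hdegout : ∀ x ∈ out, G.degree x = a x + (G.neighborFinset x ∩ out).card := by
    intro x hx
    rw [← G.card_neighborFinset_eq_degree, card_inter_split (G.neighborFinset x) Q,
      hNQ x hx]
  set E : ℕ := ∑ v ∈ A, (G.neighborFinset v ∩ A).card with hEdef
  have hEa_ge : ∀ v ∈ A, q - 2 ≤ (G.neighborFinset v ∩ A).card := by
    intro v hv
    have hwv : w ≠ v := fun h => G.irrefl (hmemA.1 (h ▸ hv))
    obtain ⟨S, hSc, hSw, hSv, -⟩ := hCL w v hwv
    have hsub : S ⊆ G.neighborFinset v ∩ A := by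
      intro s hs
      exact Finset.mem_inter.2 ⟨(SimpleGraph.mem_neighborFinset _ _ _).2 (hSv s hs),
        hmemA.2 (hSw s hs)⟩
    have := Finset.card_le_card hsub
    rw [hSc] at this
    exact this
  have hEa_le : ∀ v ∈ A, (G.neighborFinset v ∩ A).card ≤ δ - 1 := by
    intro v hv
    have hsub : G.neighborFinset v ∩ A ⊆ A.erase v := by
      intro u hu
      obtain ⟨h1, h2⟩ := Finset.mem_inter.1 hu
      refine Finset.mem_erase.2 ⟨?_, h2⟩
      intro h
      exact G.irrefl (h ▸ (SimpleGraph.mem_neighborFinset _ _ _).1 h1)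
    have := Finset.card_le_card hsub
    rw [Finset.card_erase_of_mem hv, hAcard] at this
    exact this
  -- master identity
  have hstar : 2*m = 2*δ + E + ∑ x ∈ out, (a x + G.degree x) := by
    have h0 : ∑ v : Fin n, G.degree v = ∑ v ∈ Q, G.degree v + ∑ x ∈ out, G.degree x :=
      (Finset.sum_add_sum_compl Q _).symm
    have h1 : ∑ v ∈ Q, G.degree v
        = ∑ v ∈ Q, (G.neighborFinset v ∩ Q).card + ∑ v ∈ Q, (G.neighborFinset v ∩ out).card := by
      rw [← Finset.sum_add_distrib]
      exact Finset.sum_congr rfl (fun v _ => by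
        rw [← G.card_neighborFinset_eq_degree]
        exact card_inter_split _ Q)
    have h2 : ∑ v ∈ Q, (G.neighborFinset v ∩ out).card = ∑ x ∈ out, a x := by
      rw [sum_inter_comm]
      exact Finset.sum_congr rfl (fun x hx => by
        show (G.neighborFinset x ∩ Q).card = (G.neighborFinset x ∩ A).card
        rw [hNQ x hx])
    have h3 : ∑ v ∈ Q, (G.neighborFinset v ∩ Q).card = 2*δ + E := by
      rw [hQdef, Finset.sum_insert hwA]
      have hw1 : (G.neighborFinset w ∩ (insert w A)).card = δ := by
        rw [← hAdef]
        rw [Finset.inter_eq_left.2 (Finset.subset_insert w A), hAcard]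
      have hA1 : ∀ v ∈ A, (G.neighborFinset v ∩ (insert w A)).card
          = (G.neighborFinset v ∩ A).card + 1 := by
        intro v hv
        have hvw : w ∈ G.neighborFinset v := by
          rw [SimpleGraph.mem_neighborFinset]
          exact (hmemA.1 hv).symm
        have heq : G.neighborFinset v ∩ (insert w A) = insert w (G.neighborFinset v ∩ A) := by
          ext u
          simp only [Finset.mem_inter, Finset.mem_insert]
          constructor
          · rintro ⟨h1, (rfl | h2)⟩
            · exact Or.inl rfl
            · exact Or.inr ⟨h1, h2⟩
          · rintro (rfl | ⟨h1, h2⟩)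
            · exact ⟨hvw, Or.inl rfl⟩
            · exact ⟨h1, Or.inr h2⟩
        rw [heq, Finset.card_insert_of_notMem (fun h => hwA (Finset.mem_inter.1 h).2)]
      rw [hw1, Finset.sum_congr rfl hA1, Finset.sum_add_distrib, Finset.sum_const, hAcard,
        smul_eq_mul, mul_one, ← hEdef]
      omega
    have h4 : ∑ x ∈ out, (a x + G.degree x) = ∑ x ∈ out, a x + ∑ x ∈ out, G.degree x :=
      Finset.sum_add_distrib
    omega
  clear hsum
  -- case analysis on δ
  rcases lt_trichotomy δ q with hlt | heqq | hgt
  · -- δ = q - 1 : main case C4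
    have hδ : δ = q - 1 := by omega
    choose f hf1 hf2 using hND
    have hL2 : ∀ v : Fin n, G.degree v = q - 1 →
        ∀ s ∈ G.neighborFinset v, ∀ t ∈ G.neighborFinset v, s ≠ t → G.Adj s t := by
      intro v hv s hs t ht hst
      have hcard : (G.neighborFinset v).card = q - 1 := by
        rw [G.card_neighborFinset_eq_degree]; exact hv
      have ht' : t ∈ (G.neighborFinset v).erase s := Finset.mem_erase.2 ⟨Ne.symm hst, ht⟩
      have e1 := Finset.card_erase_of_mem hs
      have e2 := Finset.card_erase_of_mem ht'
      have hpos : 0 < (((G.neighborFinset v).erase s).erase t).card := by omega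
      obtain ⟨r, hr⟩ := Finset.card_pos.1 hpos
      obtain ⟨hrt, hr2⟩ := Finset.mem_erase.1 hr
      obtain ⟨hrs, hrN⟩ := Finset.mem_erase.1 hr2
      have hvr : v ≠ r := fun h => G.irrefl (h ▸ (SimpleGraph.mem_neighborFinset _ _ _).1 hrN)
      obtain ⟨T, hTc, hTv, hTr, hTcl⟩ := hCL v r hvr
      have hTsub : T ⊆ (G.neighborFinset v).erase r := by
        intro u hu
        exact Finset.mem_erase.2 ⟨fun h => G.irrefl (h ▸ hTr u hu),
          (SimpleGraph.mem_neighborFinset _ _ _).2 (hTv u hu)⟩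
      have hTeq : T = (G.neighborFinset v).erase r := by
        apply Finset.eq_of_subset_of_card_le hTsub
        rw [Finset.card_erase_of_mem hrN, hTc, hcard]
        omega
      have hsT : s ∈ T := by
        rw [hTeq]; exact Finset.mem_erase.2 ⟨fun h => hrs h.symm, hs⟩
      have htT : t ∈ T := by
        rw [hTeq]; exact Finset.mem_erase.2 ⟨fun h => hrt h.symm, ht⟩
      exact hTcl s hsT t htT hst
    have hdegw : G.degree w = q - 1 := by rw [← hδdef]; exact hδ
    have hAcl : ∀ s ∈ A, ∀ t ∈ A, s ≠ t → G.Adj s t := by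
      intro s hs t ht hst
      exact hL2 w hdegw s (hAdef ▸ hs) t (hAdef ▸ ht) hst
    have hEA : ∀ v ∈ A, (G.neighborFinset v ∩ A).card = q - 2 := by
      intro v hv
      have hsub : G.neighborFinset v ∩ A ⊆ A.erase v := by
        intro u hu
        obtain ⟨h1, h2⟩ := Finset.mem_inter.1 hu
        refine Finset.mem_erase.2 ⟨?_, h2⟩
        intro h
        exact G.irrefl (h ▸ (SimpleGraph.mem_neighborFinset _ _ _).1 h1)
      have hsup : A.erase v ⊆ G.neighborFinset v ∩ A := by
        intro u hu
        obtain ⟨huv, huA⟩ := Finset.mem_erase.1 hu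
        exact Finset.mem_inter.2
          ⟨(SimpleGraph.mem_neighborFinset _ _ _).2 (hAcl v hv u huA (Ne.symm huv)), huA⟩
      rw [Finset.Subset.antisymm hsub hsup, Finset.card_erase_of_mem hv, hAcard]
      omega
    have hEeq : E = δ * (q - 2) := by
      rw [hEdef, Finset.sum_congr rfl hEA, Finset.sum_const, hAcard, smul_eq_mul]
    set Bad : Finset (Fin n) := out.filter (fun x => G.degree x = q - 1 ∧ a x = q - 2)
      with hBaddef
    set c : Fin n → ℕ := fun x => (G.neighborFinset x ∩ Bad).card with hcdef
    have hBadout : Bad ⊆ out := Finset.filter_subset _ _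
    have hBadspec : ∀ x ∈ Bad, x ∈ out ∧ G.degree x = q-1 ∧ a x = q-2 :=
      fun x hx => ⟨Finset.filter_subset _ _ hx, (Finset.mem_filter.1 hx).2⟩
    have hbout1 : ∀ x ∈ Bad, (G.neighborFinset x ∩ out).card = 1 := by
      intro x hx
      obtain ⟨hxo, hdx, hax⟩ := hBadspec x hx
      have hd := hdegout x hxo
      omega
    have hcsum : ∑ x ∈ out, c x = Bad.card := by
      have h1 : ∑ x ∈ out, c x = ∑ y ∈ Bad, (G.neighborFinset y ∩ out).card :=
        sum_inter_comm G out Bad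
      rw [h1, Finset.sum_congr rfl hbout1, Finset.sum_const, smul_eq_mul, mul_one]
    have hBadsingle : ∀ x' ∈ Bad, ∀ u, G.Adj x' u → u ∈ out →
        ∀ u', G.Adj x' u' → u' ∈ out → u = u' := by
      intro x' hx' u hu huo u' hu' huo'
      have h1 : (G.neighborFinset x' ∩ out).card ≤ 1 := le_of_eq (hbout1 x' hx')
      exact Finset.card_le_one.1 h1 u
        (Finset.mem_inter.2 ⟨(SimpleGraph.mem_neighborFinset _ _ _).2 hu, huo⟩) u'
        (Finset.mem_inter.2 ⟨(SimpleGraph.mem_neighborFinset _ _ _).2 hu', huo'⟩)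
    have hKey : ∀ x ∈ out, a x = q - 2 → ∀ x' ∈ Bad, G.Adj x x' →
        (q - 2) + c x ≤ (G.neighborFinset x ∩ out).card := by
      intro x hxo hax x' hx'B hadj
      obtain ⟨hx'o, hdx', hax'⟩ := hBadspec x' hx'B
      set S : Finset (Fin n) := G.neighborFinset x' ∩ A with hSdef
      have hScard : S.card = q - 2 := hax'
      have hmemNx' : ∀ u, G.Adj x' u → (u ∈ S ∨ u = x) := by
        intro u hu
        by_cases huQ : u ∈ Q
        · rw [hQdef, Finset.mem_insert] at huQ
          rcases huQ with rfl | huA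
          · exact absurd hu.symm (hmemout.1 hx'o).2
          · exact Or.inl (Finset.mem_inter.2
              ⟨(SimpleGraph.mem_neighborFinset _ _ _).2 hu, huA⟩)
        · have huo : u ∈ out := Finset.mem_compl.2 huQ
          exact Or.inr (hBadsingle x' hx'B u hu huo x hadj.symm hxo)
      have hclNx' := hL2 x' hdx'
      have hSsubNx : ∀ s ∈ S, G.Adj x s := by
        intro s hs
        obtain ⟨hs1, hs2⟩ := Finset.mem_inter.1 hs
        have hsx : s ≠ x := fun h => hAout (h ▸ hs2) hxo
        exact (hclNx' s hs1 x ((SimpleGraph.mem_neighborFinset _ _ _).2 hadj.symm) hsx).symm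
      have hNxA : G.neighborFinset x ∩ A = S := by
        refine (Finset.eq_of_subset_of_card_le ?_ ?_).symm
        · intro s hs
          exact Finset.mem_inter.2
            ⟨(SimpleGraph.mem_neighborFinset _ _ _).2 (hSsubNx s hs), (Finset.mem_inter.1 hs).2⟩
        · rw [hScard]; exact le_of_eq hax
      set U : Finset (Fin n) := (G.neighborFinset x ∩ out).filter (fun u => u ∉ Bad) with hUdef
      have hfU : ∀ s ∈ S, f s ∈ U := by
        intro s hs
        obtain ⟨hs1, hs2⟩ := Finset.mem_inter.1 hs
        have hsNx' : G.Adj x' s := (SimpleGraph.mem_neighborFinset _ _ _).1 hs1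
        have hfs_ne_w : f s ≠ w := by
          intro h
          exact hf2 s (h ▸ (hmemA.1 hs2).symm)
        have hfs_nA : f s ∉ A := by
          intro h
          exact hf2 s (hAcl s hs2 (f s) h (Ne.symm (hf1 s)))
        have hfs_out : f s ∈ out := hmemout.2 ⟨hfs_ne_w, fun h => hfs_nA (hmemA.2 h)⟩
        have hfs_ne_x' : f s ≠ x' := by
          intro h
          exact hf2 s (h ▸ hsNx'.symm)
        have hadjxf : G.Adj x (f s) := by
          by_contra hno
          have hx'fs : x' ≠ f s := fun h => hfs_ne_x' h.symm
          obtain ⟨T, hTc, hT1, hT2, -⟩ := hCL x' (f s) hx'fs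
          have hTsub : T ⊆ S.erase s := by
            intro u hu
            have hu1 := hT1 u hu
            have hu2 := hT2 u hu
            rcases hmemNx' u hu1 with huS | rfl
            · refine Finset.mem_erase.2 ⟨?_, huS⟩
              rintro rfl
              exact hf2 u hu2.symm
            · exact absurd hu2.symm hno
          have hcc := Finset.card_le_card hTsub
          rw [hTc, Finset.card_erase_of_mem hs, hScard] at hcc
          omega
        have hfs_nBad : f s ∉ Bad := by
          intro hfB
          obtain ⟨hfo, hdf, haf⟩ := hBadspec _ hfB
          have hclf := hL2 (f s) hdf
          have hS'sub : G.neighborFinset (f s) ∩ A ⊆ S := by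
            rw [← hNxA]
            intro u hu
            obtain ⟨hu1, hu2⟩ := Finset.mem_inter.1 hu
            have hux : u ≠ x := fun h => hAout (h ▸ hu2) hxo
            have hadj2 : G.Adj u x :=
              hclf u hu1 x ((SimpleGraph.mem_neighborFinset _ _ _).2 hadjxf.symm) hux
            exact Finset.mem_inter.2
              ⟨(SimpleGraph.mem_neighborFinset _ _ _).2 hadj2.symm, hu2⟩
          have hS'eq : G.neighborFinset (f s) ∩ A = S := by
            apply Finset.eq_of_subset_of_card_le hS'sub
            rw [hScard]
            exact le_of_eq haf.symm
          have hsin : s ∈ G.neighborFinset (f s) ∩ A := by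
            rw [hS'eq]; exact hs
          exact hf2 s
            ((SimpleGraph.mem_neighborFinset _ _ _).1 (Finset.mem_inter.1 hsin).1).symm
        exact Finset.mem_filter.2
          ⟨Finset.mem_inter.2 ⟨(SimpleGraph.mem_neighborFinset _ _ _).2 hadjxf, hfs_out⟩,
           hfs_nBad⟩
      have hinj : Set.InjOn f S := by
        intro s hs' t ht' hst
        by_contra hne
        have hsS : s ∈ S := hs'
        have htS : t ∈ S := ht'
        have hsNx' : G.Adj x' s :=
          (SimpleGraph.mem_neighborFinset _ _ _).1 (Finset.mem_inter.1 hsS).1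
        have hx'fs : x' ≠ f s := fun h => hf2 s (h ▸ hsNx'.symm)
        obtain ⟨T, hTc, hT1, hT2, -⟩ := hCL x' (f s) hx'fs
        have hTsub : T ⊆ insert x ((S.erase t).erase s) := by
          intro v hv
          rcases hmemNx' v (hT1 v hv) with hvS | rfl
          · refine Finset.mem_insert_of_mem
              (Finset.mem_erase.2 ⟨?_, Finset.mem_erase.2 ⟨?_, hvS⟩⟩)
            · rintro rfl
              exact hf2 v (hT2 v hv).symm
            · rintro rfl
              exact hf2 v (hst ▸ (hT2 v hv)).symm
          · exact Finset.mem_insert_self _ _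
        have hc1 := Finset.card_le_card hTsub
        have hc2 := Finset.card_insert_le x ((S.erase t).erase s)
        have hsS' : s ∈ S.erase t := Finset.mem_erase.2 ⟨hne, hsS⟩
        have e3 := Finset.card_erase_of_mem hsS'
        have e4 := Finset.card_erase_of_mem htS
        rw [hTc] at hc1
        omega
      have hUcard : q - 2 ≤ U.card := by
        have h := Finset.card_le_card_of_injOn f hfU hinj
        rw [hScard] at h
        exact h
      have h1 := Finset.card_filter_add_card_filter_not
        (s := G.neighborFinset x ∩ out) (p := fun u => u ∉ Bad)
      have h2 : (G.neighborFinset x ∩ out).filter (fun u => ¬ u ∉ Bad)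
          = G.neighborFinset x ∩ Bad := by
        ext u
        simp only [Finset.mem_filter, Finset.mem_inter, not_not]
        constructor
        · rintro ⟨⟨hu1, hu2⟩, hu3⟩; exact ⟨hu1, hu3⟩
        · rintro ⟨hu1, hu2⟩; exact ⟨⟨hu1, hBadout hu2⟩, hu2⟩
      rw [h2] at h1
      have hcx : c x = (G.neighborFinset x ∩ Bad).card := rfl
      have hU1 : (G.neighborFinset x ∩ out).filter (fun u => u ∉ Bad) = U := rfl
      rw [hU1] at h1
      omega
    have hpt : ∀ x ∈ out, 2*(q-1) + c x
        ≤ (a x + G.degree x) + (if x ∈ Bad then 1 else 0) := by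
      intro x hxo
      have hd := hdegout x hxo
      have haxge := hax_ge x (hmemout.1 hxo).1
      have haxle : a x ≤ q - 1 := by
        have := hax_le x; omega
      have hdge : q - 1 ≤ G.degree x := hmin x
      have hcb : c x ≤ (G.neighborFinset x ∩ out).card := by
        apply Finset.card_le_card
        intro u hu
        obtain ⟨h1, h2⟩ := Finset.mem_inter.1 hu
        exact Finset.mem_inter.2 ⟨h1, hBadout h2⟩
      by_cases hc0 : c x = 0
      · by_cases hB : x ∈ Bad
        · obtain ⟨-, h1, h2⟩ := hBadspec x hB
          rw [if_pos hB]
          omega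
        · rw [if_neg hB]
          have hnb : ¬ (G.degree x = q-1 ∧ a x = q-2) :=
            fun h => hB (Finset.mem_filter.2 ⟨hxo, h⟩)
          rcases Nat.lt_or_ge (a x) (q-1) with h | h
          · have hax2 : a x = q - 2 := by omega
            have hdg : q ≤ G.degree x := by
              rcases Nat.lt_or_ge (G.degree x) q with h' | h'
              · exact absurd ⟨by omega, hax2⟩ hnb
              · exact h'
            omega
          · omega
      · have hcpos : 0 < c x := Nat.pos_of_ne_zero hc0
        obtain ⟨x', hx'⟩ := Finset.card_pos.1 hcpos
        obtain ⟨hx'N, hx'B⟩ := Finset.mem_inter.1 hx'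
        by_cases hax2 : a x = q - 2
        · have hkey := hKey x hxo hax2 x' hx'B
            ((SimpleGraph.mem_neighborFinset _ _ _).1 hx'N)
          by_cases hB : x ∈ Bad
          · rw [if_pos hB]; omega
          · rw [if_neg hB]; omega
        · have hax1 : a x = q - 1 := by omega
          by_cases hB : x ∈ Bad
          · rw [if_pos hB]; omega
          · rw [if_neg hB]; omega
    have hsum2 := Finset.sum_le_sum hpt
    have hsl : ∑ x ∈ out, (2*(q-1) + c x) = out.card * (2*(q-1)) + Bad.card := by
      rw [Finset.sum_add_distrib, Finset.sum_const, smul_eq_mul, hcsum]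
    have hsr : ∑ x ∈ out, ((a x + G.degree x) + (if x ∈ Bad then 1 else 0))
        = (∑ x ∈ out, (a x + G.degree x)) + Bad.card := by
      have hfb : out.filter (fun x => x ∈ Bad) = Bad := by
        ext u
        simp only [Finset.mem_filter]
        exact ⟨fun h => h.2, fun h => ⟨hBadout h, h⟩⟩
      have hite : ∑ x ∈ out, (if x ∈ Bad then 1 else 0) = Bad.card := by
        have h := Finset.card_filter (fun x => x ∈ Bad) out
        rw [hfb] at h
        exact h.symm
      rw [Finset.sum_add_distrib, hite]
    have hψ : out.card * (2*(q-1)) ≤ ∑ x ∈ out, (a x + G.degree x) := by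
      rw [hsl, hsr] at hsum2
      omega
    obtain ⟨p, rfl⟩ : ∃ p, q = p + 4 := ⟨q - 4, by omega⟩
    have e1 : p + 4 - 1 = p + 3 := by omega
    have e2 : p + 4 - 2 = p + 2 := by omega
    rw [e1]
    rw [e1] at hψ hδ
    rw [e2] at hEeq
    nlinarith [hstar, htn, hψ, hEeq, hδ]
  · -- δ = q : case C3
    have hδ : δ = q := heqq
    set P : ℕ := ∑ v ∈ A, (q - 1 - (G.neighborFinset v ∩ A).card) with hPdef
    have hEP : E + P = q * (q-1) := by
      rw [hEdef, hPdef, ← Finset.sum_add_distrib]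
      have hpt : ∀ v ∈ A, (G.neighborFinset v ∩ A).card
          + (q - 1 - (G.neighborFinset v ∩ A).card) = q - 1 := by
        intro v hv
        have h1 := hEa_le v hv
        omega
      rw [Finset.sum_congr rfl hpt, Finset.sum_const, hAcard, smul_eq_mul, hδ]
    have hψpt : ∀ x ∈ out, 2*(q-1) ≤ a x + G.degree x := by
      intro x hxo
      have h1 := hax_ge x (hmemout.1 hxo).1
      have h2 := hwmin x
      omega
    have hψsum : out.card * (2*(q-1)) ≤ ∑ x ∈ out, (a x + G.degree x) := by
      calc out.card * (2*(q-1)) = ∑ _x ∈ out, (2*(q-1)) := by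
            rw [Finset.sum_const, smul_eq_mul]
        _ ≤ _ := Finset.sum_le_sum hψpt
    suffices hfin : out.card * (2*(q-1)) + P ≤ (∑ x ∈ out, (a x + G.degree x)) + 2 by
      obtain ⟨p, rfl⟩ : ∃ p, q = p + 4 := ⟨q - 4, by omega⟩
      have e1 : p + 4 - 1 = p + 3 := by omega
      rw [e1]
      rw [e1] at hfin hEP
      nlinarith [hstar, htn, hEP, hfin, hδ]
    by_cases hP2 : P ≤ 2
    · linarith [hψsum]
    push_neg at hP2
    -- misser set
    set M : Finset (Fin n) := A.filter (fun v => (G.neighborFinset v ∩ A).card = q - 2)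
      with hMdef
    have hMP : M.card = P := by
      have hpt2 : ∀ v ∈ A, (if (G.neighborFinset v ∩ A).card = q - 2 then 1 else 0)
          = q - 1 - (G.neighborFinset v ∩ A).card := by
        intro v hv
        have h1 := hEa_le v hv
        have h2 := hEa_ge v hv
        by_cases h : (G.neighborFinset v ∩ A).card = q - 2
        · rw [if_pos h]; omega
        · rw [if_neg h]; omega
      rw [hMdef, Finset.card_filter, hPdef]
      exact Finset.sum_congr rfl hpt2
    have hpart : ∀ v ∈ M, ∃ b, b ∈ M ∧ b ≠ v ∧ ¬ G.Adj v b ∧ b ∈ A ∧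
        (∀ u ∈ A, u ≠ v → u ≠ b → G.Adj v u) := by
      intro v hvM
      obtain ⟨hvA, hve⟩ := Finset.mem_filter.1 hvM
      have hsub : G.neighborFinset v ∩ A ⊆ A.erase v := by
        intro u hu
        obtain ⟨h1, h2⟩ := Finset.mem_inter.1 hu
        refine Finset.mem_erase.2 ⟨?_, h2⟩
        intro h
        exact G.irrefl (h ▸ (SimpleGraph.mem_neighborFinset _ _ _).1 h1)
      have hKcard : ((A.erase v) \ (G.neighborFinset v ∩ A)).card = 1 := by
        rw [Finset.card_sdiff_of_subset hsub, Finset.card_erase_of_mem hvA, hAcard, hδ, hve]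
        omega
      obtain ⟨b, hb⟩ := Finset.card_eq_one.1 hKcard
      have hbK : b ∈ (A.erase v) \ (G.neighborFinset v ∩ A) := by
        rw [hb]; exact Finset.mem_singleton_self b
      obtain ⟨hb1, hb2⟩ := Finset.mem_sdiff.1 hbK
      obtain ⟨hbv, hbA⟩ := Finset.mem_erase.1 hb1
      have hnadj : ¬ G.Adj v b := fun h =>
        hb2 (Finset.mem_inter.2 ⟨(SimpleGraph.mem_neighborFinset _ _ _).2 h, hbA⟩)
      have hall : ∀ u ∈ A, u ≠ v → u ≠ b → G.Adj v u := by
        intro u huA huv hub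
        by_contra hno
        have huK : u ∈ (A.erase v) \ (G.neighborFinset v ∩ A) := by
          refine Finset.mem_sdiff.2 ⟨Finset.mem_erase.2 ⟨huv, huA⟩, ?_⟩
          intro hmem
          exact hno ((SimpleGraph.mem_neighborFinset _ _ _).1 (Finset.mem_inter.1 hmem).1)
        rw [hb] at huK
        exact hub (Finset.mem_singleton.1 huK)
      have hbM : b ∈ M := by
        refine Finset.mem_filter.2 ⟨hbA, ?_⟩
        have hge := hEa_ge b hbA
        have hsubb : G.neighborFinset b ∩ A ⊆ (A.erase b).erase v := by
          intro u hu
          obtain ⟨hu1, hu2⟩ := Finset.mem_inter.1 hu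
          refine Finset.mem_erase.2 ⟨?_, Finset.mem_erase.2 ⟨?_, hu2⟩⟩
          · rintro rfl
            exact hnadj ((SimpleGraph.mem_neighborFinset _ _ _).1 hu1).symm
          · rintro rfl
            exact G.irrefl ((SimpleGraph.mem_neighborFinset _ _ _).1 hu1)
        have hle := Finset.card_le_card hsubb
        have hvAb : v ∈ A.erase b := Finset.mem_erase.2 ⟨Ne.symm hbv, hvA⟩
        rw [Finset.card_erase_of_mem hvAb, Finset.card_erase_of_mem hbA, hAcard, hδ] at hle
        omega
      exact ⟨b, hbM, hbv, hnadj, hbA, hall⟩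
    -- pick two disjoint misser pairs
    have hM3 : 3 ≤ M.card := by omega
    obtain ⟨a₀, ha₀M⟩ := Finset.card_pos.1 (by omega : 0 < M.card)
    have ha₀A : a₀ ∈ A := (Finset.mem_filter.1 ha₀M).1
    obtain ⟨b₀, hb₀M, hb₀ne, hb₀nadj, hb₀A, ha₀all⟩ := hpart a₀ ha₀M
    have hMc : 0 < (M \ {a₀, b₀}).card := by
      have h1 := Finset.le_card_sdiff ({a₀, b₀} : Finset (Fin n)) M
      have h2 : ({a₀, b₀} : Finset (Fin n)).card ≤ 2 := Finset.card_insert_le _ _ |>.trans (by simp)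
      omega
    obtain ⟨c₀, hc₀⟩ := Finset.card_pos.1 hMc
    obtain ⟨hc₀M, hc₀n⟩ := Finset.mem_sdiff.1 hc₀
    have hc₀A : c₀ ∈ A := (Finset.mem_filter.1 hc₀M).1
    have hc₀a : c₀ ≠ a₀ := fun h => hc₀n (by rw [h]; simp)
    have hc₀b : c₀ ≠ b₀ := fun h => hc₀n (by rw [h]; simp)
    obtain ⟨d₀, hd₀M, hd₀ne, hd₀nadj, hd₀A, hc₀all⟩ := hpart c₀ hc₀M
    have hd₀a : d₀ ≠ a₀ := by
      intro heq
      rw [heq] at hd₀nadj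
      exact hd₀nadj ((ha₀all c₀ hc₀A hc₀a hc₀b).symm)
    have hd₀b : d₀ ≠ b₀ := by
      intro heq
      rw [heq] at hd₀nadj
      obtain ⟨b₁, hb₁M, hb₁ne, hb₁nadj, hb₁A, hb₀all⟩ := hpart b₀ hb₀M
      have h1 : a₀ = b₁ := by
        by_contra hne1
        exact hb₀nadj ((hb₀all a₀ ha₀A (Ne.symm hb₀ne) hne1).symm)
      have h2 : c₀ = b₁ := by
        by_contra hne2
        exact hd₀nadj (hb₀all c₀ hc₀A hc₀b hne2).symm
      exact hc₀a (h2.trans h1.symm)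
    -- S_x structure for out vertices
    have hSx4 : ∀ x ∈ out, ∃ S : Finset (Fin n), S ⊆ A ∧ S.card = q - 2 ∧
        (∀ s ∈ S, G.Adj x s) ∧ (∀ s ∈ S, ∀ t ∈ S, s ≠ t → G.Adj s t) ∧
        (a₀ ∉ S ∨ b₀ ∉ S) ∧ (c₀ ∉ S ∨ d₀ ∉ S) ∧
        (A \ S ⊆ {a₀, b₀, c₀, d₀}) := by
      intro x hxo
      obtain ⟨hxw, -⟩ := hmemout.1 hxo
      obtain ⟨S, hSc, hSw, hSx, hScl⟩ := hCL w x (Ne.symm hxw)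
      have hSA : S ⊆ A := fun s hs => hmemA.2 (hSw s hs)
      have hnp1 : a₀ ∉ S ∨ b₀ ∉ S := by
        by_contra hcon; push_neg at hcon
        exact hb₀nadj (hScl a₀ hcon.1 b₀ hcon.2 (Ne.symm hb₀ne))
      have hnp2 : c₀ ∉ S ∨ d₀ ∉ S := by
        by_contra hcon; push_neg at hcon
        exact hd₀nadj (hScl c₀ hcon.1 d₀ hcon.2 (Ne.symm hd₀ne))
      have hAS : (A \ S).card = 2 := by
        rw [Finset.card_sdiff_of_subset hSA, hAcard, hδ, hSc]; omega
      obtain ⟨e₁, he₁p, he₁S⟩ : ∃ e, (e = a₀ ∨ e = b₀) ∧ e ∉ S := by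
        rcases hnp1 with h | h
        · exact ⟨a₀, Or.inl rfl, h⟩
        · exact ⟨b₀, Or.inr rfl, h⟩
      obtain ⟨e₂, he₂p, he₂S⟩ : ∃ e, (e = c₀ ∨ e = d₀) ∧ e ∉ S := by
        rcases hnp2 with h | h
        · exact ⟨c₀, Or.inl rfl, h⟩
        · exact ⟨d₀, Or.inr rfl, h⟩
      have he₁A : e₁ ∈ A := by rcases he₁p with rfl | rfl <;> assumption
      have he₂A : e₂ ∈ A := by rcases he₂p with rfl | rfl <;> assumption
      have he12 : e₁ ≠ e₂ := by
        rcases he₁p with rfl | rfl <;> rcases he₂p with rfl | rfl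
        · exact Ne.symm hc₀a
        · exact Ne.symm hd₀a
        · exact Ne.symm hc₀b
        · exact Ne.symm hd₀b
      have hpairsub : ({e₁, e₂} : Finset (Fin n)) ⊆ A \ S := by
        intro u hu
        rcases Finset.mem_insert.1 hu with rfl | hu'
        · exact Finset.mem_sdiff.2 ⟨he₁A, he₁S⟩
        · rw [Finset.mem_singleton.1 hu']
          exact Finset.mem_sdiff.2 ⟨he₂A, he₂S⟩
      have hpaircard : ({e₁, e₂} : Finset (Fin n)).card = 2 := by
        rw [Finset.card_insert_of_notMem (by simp [he12]), Finset.card_singleton]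
      have hASeq : A \ S = {e₁, e₂} :=
        (Finset.eq_of_subset_of_card_le hpairsub (by omega)).symm
      refine ⟨S, hSA, hSc, hSx, hScl, hnp1, hnp2, ?_⟩
      rw [hASeq]
      intro u hu
      rcases Finset.mem_insert.1 hu with rfl | hu'
      · rcases he₁p with rfl | rfl <;> simp
      · rw [Finset.mem_singleton.1 hu']
        rcases he₂p with rfl | rfl <;> simp
    have houtne : out.Nonempty := by
      rw [← Finset.card_pos]; omega
    -- M is contained in the two pairs
    have hMquad : ∀ v ∈ M, v = a₀ ∨ v = b₀ ∨ v = c₀ ∨ v = d₀ := by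
      intro v hvM
      have hvA : v ∈ A := (Finset.mem_filter.1 hvM).1
      obtain ⟨pv, hpvM, hpvne, hpvnadj, hpvA, hvall⟩ := hpart v hvM
      obtain ⟨x, hxo⟩ := houtne
      obtain ⟨S, hSA, hSc, hSadj, hScl, hp1, hp2, hsub4⟩ := hSx4 x hxo
      have hnboth : v ∉ S ∨ pv ∉ S := by
        by_contra hcon; push_neg at hcon
        exact hpvnadj (hScl v hcon.1 pv hcon.2 (Ne.symm hpvne))
      have hq4mem : ∀ u ∈ A, u ∉ S → (u = a₀ ∨ u = b₀ ∨ u = c₀ ∨ u = d₀) := by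
        intro u huA huS
        have := hsub4 (Finset.mem_sdiff.2 ⟨huA, huS⟩)
        simpa using this
      rcases hnboth with h | h
      · exact hq4mem v hvA h
      · have hpvquad := hq4mem pv hpvA h
        rcases hpvquad with heq | heq | heq | heq
        · right; left
          by_contra hvb
          rw [heq] at hpvnadj hpvne
          exact hpvnadj ((ha₀all v hvA (Ne.symm hpvne) hvb).symm)
        · left
          rw [heq] at hpvnadj hpvne
          obtain ⟨b₁, hb₁M, hb₁ne, hb₁nadj, hb₁A, hb₀all⟩ := hpart b₀ hb₀M
          have h1 : a₀ = b₁ := by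
            by_contra hne1
            exact hb₀nadj ((hb₀all a₀ ha₀A (Ne.symm hb₀ne) hne1).symm)
          have h2 : v = b₁ := by
            by_contra hne2
            exact hpvnadj (hb₀all v hvA (Ne.symm hpvne) hne2).symm
          exact h2.trans h1.symm
        · right; right; right
          by_contra hvd
          rw [heq] at hpvnadj hpvne
          exact hpvnadj ((hc₀all v hvA (Ne.symm hpvne) hvd).symm)
        · right; right; left
          rw [heq] at hpvnadj hpvne
          obtain ⟨d₁, hd₁M, hd₁ne, hd₁nadj, hd₁A, hd₀all⟩ := hpart d₀ hd₀M
          have h1 : c₀ = d₁ := by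
            by_contra hne1
            exact hd₀nadj ((hd₀all c₀ hc₀A (Ne.symm hd₀ne) hne1).symm)
          have h2 : v = d₁ := by
            by_contra hne2
            exact hpvnadj (hd₀all v hvA (Ne.symm hpvne) hne2).symm
          exact h2.trans h1.symm
    have hcases : ∀ u : Fin n, u = w ∨ u ∈ A ∨ u ∈ out := by
      intro u
      by_cases h : u ∈ out
      · right; right; exact h
      · have h2 : u ∈ Q := by
          rw [houtdef, Finset.mem_compl, not_not] at h
          exact h
        rw [hQdef, Finset.mem_insert] at h2
        tauto
    rcases Nat.lt_or_ge q 5 with hq5 | hq5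
    · -- q = 4
      have hq4 : q = 4 := by omega
      subst hq4
      have hne_ab : a₀ ≠ b₀ := Ne.symm hb₀ne
      have hne_ac : a₀ ≠ c₀ := Ne.symm hc₀a
      have hne_ad : a₀ ≠ d₀ := Ne.symm hd₀a
      have hne_bc : b₀ ≠ c₀ := Ne.symm hc₀b
      have hne_bd : b₀ ≠ d₀ := Ne.symm hd₀b
      have hne_cd : c₀ ≠ d₀ := Ne.symm hd₀ne
      have hquadcard : ({a₀, b₀, c₀, d₀} : Finset (Fin n)).card = 4 := by
        rw [Finset.card_insert_of_notMem (by simp [hne_ab, hne_ac, hne_ad]),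
            Finset.card_insert_of_notMem (by simp [hne_bc, hne_bd]),
            Finset.card_insert_of_notMem (by simp [hne_cd]),
            Finset.card_singleton]
      have hquadsub : ({a₀, b₀, c₀, d₀} : Finset (Fin n)) ⊆ A := by
        intro u hu
        simp only [Finset.mem_insert, Finset.mem_singleton] at hu
        rcases hu with rfl | rfl | rfl | rfl <;> assumption
      have hAquad : A = {a₀, b₀, c₀, d₀} := by
        symm
        apply Finset.eq_of_subset_of_card_le hquadsub
        rw [hAcard, hδ, hquadcard]
      have hMquadset : M ⊆ ({a₀, b₀, c₀, d₀} : Finset (Fin n)) := by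
        intro v hv
        simp only [Finset.mem_insert, Finset.mem_singleton]
        exact hMquad v hv
      have hMeq : M = {a₀, b₀, c₀, d₀} := by
        apply Finset.Subset.antisymm hMquadset
        intro u hu
        simp only [Finset.mem_insert, Finset.mem_singleton] at hu
        rcases hu with rfl | rfl | rfl | rfl <;> assumption
      have hP4 : P = 4 := by rw [← hMP, hMeq, hquadcard]
      by_contra hcon
      push_neg at hcon
      have hallsum : ∑ x ∈ out, (a x + G.degree x) = out.card * (2*(4-1)) := by omega
      have htight : ∀ x ∈ out, a x + G.degree x = 2*(4-1) := by
        intro x hxo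
        by_contra hne
        have h1 : ∑ _x ∈ out, (2*(4-1)) < ∑ x ∈ out, (a x + G.degree x) :=
          Finset.sum_lt_sum hψpt ⟨x, hxo, lt_of_le_of_ne (hψpt x hxo) (fun h => hne h.symm)⟩
        rw [Finset.sum_const, smul_eq_mul] at h1
        omega
      have hax2 : ∀ x ∈ out, a x = 2 ∧ G.degree x = 4 := by
        intro x hxo
        have h1 := htight x hxo
        have h2 := hax_ge x (hmemout.1 hxo).1
        have h3 := hwmin x
        constructor <;> omega
      have hb2 : ∀ x ∈ out, (G.neighborFinset x ∩ out).card = 2 := by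
        intro x hxo
        have h1 := hdegout x hxo
        have h2 := hax2 x hxo
        omega
      have hadjfacts : ∀ x ∈ out,
          (¬G.Adj x a₀ ∨ ¬G.Adj x b₀) ∧ (¬G.Adj x c₀ ∨ ¬G.Adj x d₀) := by
        intro x hxo
        obtain ⟨S, hSA, hSc, hSadj, hScl, hp1, hp2, hsub4⟩ := hSx4 x hxo
        have haxeq : (G.neighborFinset x ∩ A).card = 2 := (hax2 x hxo).1
        have hNA : G.neighborFinset x ∩ A = S := by
          refine (Finset.eq_of_subset_of_card_le ?_ ?_).symm
          · intro s hs
            exact Finset.mem_inter.2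
              ⟨(SimpleGraph.mem_neighborFinset _ _ _).2 (hSadj s hs), hSA hs⟩
          · rw [hSc, haxeq]
        have hmem : ∀ u, u ∈ A → G.Adj x u → u ∈ S := by
          intro u huA h
          rw [← hNA]
          exact Finset.mem_inter.2 ⟨(SimpleGraph.mem_neighborFinset _ _ _).2 h, huA⟩
        constructor
        · rcases hp1 with h | h
          · exact Or.inl (fun hadj => h (hmem a₀ ha₀A hadj))
          · exact Or.inr (fun hadj => h (hmem b₀ hb₀A hadj))
        · rcases hp2 with h | h
          · exact Or.inl (fun hadj => h (hmem c₀ hc₀A hadj))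
          · exact Or.inr (fun hadj => h (hmem d₀ hd₀A hadj))
      have hcross : ∀ x ∈ out, G.Adj x a₀ → ∀ y ∈ out, ¬G.Adj y a₀ →
          (G.Adj x y ∨ ∃ o ∈ out, G.Adj x o ∧ G.Adj y o) := by
        intro x hxo hxa y hyo hya
        have hxy : x ≠ y := fun h => hya (h ▸ hxa)
        by_cases hadj : G.Adj x y
        · exact Or.inl hadj
        right
        obtain ⟨T, hTc, hTx, hTy, hTcl⟩ := hCL x y hxy
        have hTA : ∀ u ∈ T, u ∈ A → (u = c₀ ∨ u = d₀) := by
          intro u huT huA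
          have hux : G.Adj x u := hTx u huT
          have huy : G.Adj y u := hTy u huT
          have hxb : ¬ G.Adj x b₀ := by
            rcases (hadjfacts x hxo).1 with h | h
            · exact absurd hxa h
            · exact h
          have hua : u ≠ a₀ := fun h => hya (h ▸ huy)
          have hub : u ≠ b₀ := fun h => hxb (h ▸ hux)
          have huA2 := huA
          rw [hAquad] at huA2
          simp only [Finset.mem_insert, Finset.mem_singleton] at huA2
          rcases huA2 with h | h | h | h
          · exact absurd h hua
          · exact absurd h hub
          · exact Or.inl h
          · exact Or.inr h
        have hnotboth : ¬ (c₀ ∈ T ∧ d₀ ∈ T) := by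
          rintro ⟨h1, h2⟩
          rcases (hadjfacts x hxo).2 with h | h
          · exact h (hTx c₀ h1)
          · exact h (hTx d₀ h2)
        have hTc2 : T.card = 2 := by rw [hTc]
        obtain ⟨t₁, t₂, ht12, hTeq⟩ := Finset.card_eq_two.1 hTc2
        have ht₁T : t₁ ∈ T := by rw [hTeq]; simp
        have ht₂T : t₂ ∈ T := by rw [hTeq]; simp
        have hone : t₁ ∉ A ∨ t₂ ∉ A := by
          by_contra hcon2; push_neg at hcon2
          have h1 := hTA t₁ ht₁T hcon2.1
          have h2 := hTA t₂ ht₂T hcon2.2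
          rcases h1 with rfl | rfl <;> rcases h2 with rfl | rfl
          · exact ht12 rfl
          · exact hnotboth ⟨ht₁T, ht₂T⟩
          · exact hnotboth ⟨ht₂T, ht₁T⟩
          · exact ht12 rfl
        obtain ⟨o, hoT, hoA⟩ : ∃ o ∈ T, o ∉ A := by
          rcases hone with h | h
          · exact ⟨t₁, ht₁T, h⟩
          · exact ⟨t₂, ht₂T, h⟩
        have hxo' : G.Adj x o := hTx o hoT
        have hyo' : G.Adj y o := hTy o hoT
        have how : o ≠ w := by
          rintro rfl
          exact (hmemout.1 hxo).2 hxo'.symm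
        have hoo : o ∈ out := hmemout.2 ⟨how, fun h => hoA (hmemA.2 h)⟩
        exact ⟨o, hoo, hxo', hyo'⟩
      set O₁ : Finset (Fin n) := out.filter (fun x => G.Adj x a₀) with hO₁def
      set O₂ : Finset (Fin n) := out.filter (fun x => ¬ G.Adj x a₀) with hO₂def
      have hOsplit : O₁.card + O₂.card = out.card :=
        Finset.card_filter_add_card_filter_not (s := out) (p := fun x => G.Adj x a₀)
      have haout : ∀ v, v ∈ A → (G.neighborFinset v ∩ A).card = 2 →
          (G.neighborFinset v ∩ out).Nonempty := by
        intro v hvA hv2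
        have hdv : G.degree v = (G.neighborFinset v ∩ Q).card
            + (G.neighborFinset v ∩ out).card := by
          rw [← G.card_neighborFinset_eq_degree]
          exact card_inter_split _ Q
        have hvw : w ∈ G.neighborFinset v := by
          rw [SimpleGraph.mem_neighborFinset]
          exact (hmemA.1 hvA).symm
        have heq2 : G.neighborFinset v ∩ Q = insert w (G.neighborFinset v ∩ A) := by
          rw [hQdef]; ext u
          simp only [Finset.mem_inter, Finset.mem_insert]
          constructor
          · rintro ⟨h1, (rfl | h2)⟩
            · exact Or.inl rfl
            · exact Or.inr ⟨h1, h2⟩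
          · rintro (rfl | ⟨h1, h2⟩)
            · exact ⟨hvw, Or.inl rfl⟩
            · exact ⟨h1, Or.inr h2⟩
        have hNvQ : (G.neighborFinset v ∩ Q).card = 3 := by
          rw [heq2, Finset.card_insert_of_notMem (fun h => hwA (Finset.mem_inter.1 h).2), hv2]
        have hdge := hwmin v
        rw [← Finset.card_pos]
        omega
      have hO₁ne : O₁.Nonempty := by
        have ha₀2 : (G.neighborFinset a₀ ∩ A).card = 4 - 2 := (Finset.mem_filter.1 ha₀M).2
        obtain ⟨x, hx⟩ := haout a₀ ha₀A ha₀2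
        obtain ⟨h1, h2⟩ := Finset.mem_inter.1 hx
        exact ⟨x, Finset.mem_filter.2
          ⟨h2, ((SimpleGraph.mem_neighborFinset _ _ _).1 h1).symm⟩⟩
      have hO₂ne : O₂.Nonempty := by
        have hb₀2 : (G.neighborFinset b₀ ∩ A).card = 4 - 2 := (Finset.mem_filter.1 hb₀M).2
        obtain ⟨x, hx⟩ := haout b₀ hb₀A hb₀2
        obtain ⟨h1, h2⟩ := Finset.mem_inter.1 hx
        have hxb : G.Adj x b₀ := ((SimpleGraph.mem_neighborFinset _ _ _).1 h1).symm
        refine ⟨x, Finset.mem_filter.2 ⟨h2, ?_⟩⟩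
        rcases (hadjfacts x h2).1 with h | h
        · exact h
        · exact absurd hxb h
      have hpair2 : ∀ z ∈ out, ∀ y, y ∈ G.neighborFinset z ∩ out →
          ∃ mm, G.neighborFinset z ∩ out = {y, mm} := by
        intro z hz y hy
        obtain ⟨u, v, huv, he⟩ := Finset.card_eq_two.1 (hb2 z hz)
        rw [he] at hy
        rcases Finset.mem_insert.1 hy with rfl | hy'
        · exact ⟨v, he⟩
        · rw [Finset.mem_singleton.1 hy']
          exact ⟨u, by rw [he, Finset.pair_comm]⟩
      have hcov4 : ∀ y ∈ out, ∃ nn₁ nn₂ mm₁ mm₂ : Fin n,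
          nn₁ ∈ G.neighborFinset y ∩ out ∧ nn₂ ∈ G.neighborFinset y ∩ out ∧
          (∀ x ∈ out, x ≠ y → (G.Adj x y ∨ ∃ o ∈ out, G.Adj x o ∧ G.Adj y o) →
            (x = nn₁ ∨ x = nn₂ ∨ x = mm₁ ∨ x = mm₂)) := by
        intro y hyo
        obtain ⟨nn₁, nn₂, hnn, hNy⟩ := Finset.card_eq_two.1 (hb2 y hyo)
        have hnn₁ : nn₁ ∈ G.neighborFinset y ∩ out := by rw [hNy]; simp
        have hnn₂ : nn₂ ∈ G.neighborFinset y ∩ out := by rw [hNy]; simp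
        have hyn₁ : y ∈ G.neighborFinset nn₁ ∩ out := by
          refine Finset.mem_inter.2 ⟨?_, hyo⟩
          rw [SimpleGraph.mem_neighborFinset]
          exact ((SimpleGraph.mem_neighborFinset _ _ _).1 (Finset.mem_inter.1 hnn₁).1).symm
        have hyn₂ : y ∈ G.neighborFinset nn₂ ∩ out := by
          refine Finset.mem_inter.2 ⟨?_, hyo⟩
          rw [SimpleGraph.mem_neighborFinset]
          exact ((SimpleGraph.mem_neighborFinset _ _ _).1 (Finset.mem_inter.1 hnn₂).1).symm
        obtain ⟨mm₁, hmm₁⟩ := hpair2 nn₁ (Finset.mem_inter.1 hnn₁).2 y hyn₁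
        obtain ⟨mm₂, hmm₂⟩ := hpair2 nn₂ (Finset.mem_inter.1 hnn₂).2 y hyn₂
        refine ⟨nn₁, nn₂, mm₁, mm₂, hnn₁, hnn₂, ?_⟩
        intro x hxo hxy hc
        rcases hc with hadj | ⟨o, hoo, ho1, ho2⟩
        · have hxN : x ∈ G.neighborFinset y ∩ out :=
            Finset.mem_inter.2 ⟨(SimpleGraph.mem_neighborFinset _ _ _).2 hadj.symm, hxo⟩
          rw [hNy] at hxN
          rcases Finset.mem_insert.1 hxN with rfl | h
          · exact Or.inl rfl
          · exact Or.inr (Or.inl (Finset.mem_singleton.1 h))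
        · have hoNy : o ∈ G.neighborFinset y ∩ out :=
            Finset.mem_inter.2 ⟨(SimpleGraph.mem_neighborFinset _ _ _).2 ho2, hoo⟩
          rw [hNy] at hoNy
          rcases Finset.mem_insert.1 hoNy with ho' | ho'
          · have hxN : x ∈ G.neighborFinset nn₁ ∩ out :=
              Finset.mem_inter.2
                ⟨(SimpleGraph.mem_neighborFinset _ _ _).2 (ho' ▸ ho1.symm), hxo⟩
            rw [hmm₁] at hxN
            rcases Finset.mem_insert.1 hxN with h2 | h2
            · exact absurd h2 hxy
            · exact Or.inr (Or.inr (Or.inl (Finset.mem_singleton.1 h2)))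
          · have ho'' : o = nn₂ := Finset.mem_singleton.1 ho'
            have hxN : x ∈ G.neighborFinset nn₂ ∩ out :=
              Finset.mem_inter.2
                ⟨(SimpleGraph.mem_neighborFinset _ _ _).2 (ho'' ▸ ho1.symm), hxo⟩
            rw [hmm₂] at hxN
            rcases Finset.mem_insert.1 hxN with h2 | h2
            · exact absurd h2 hxy
            · exact Or.inr (Or.inr (Or.inr (Finset.mem_singleton.1 h2)))
      obtain ⟨y₀, hy₀O⟩ := hO₂ne
      have hy₀o : y₀ ∈ out := (Finset.mem_filter.1 hy₀O).1
      have hy₀na : ¬ G.Adj y₀ a₀ := (Finset.mem_filter.1 hy₀O).2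
      obtain ⟨nn₁, nn₂, mm₁, mm₂, hnn₁, hnn₂, hcovy₀⟩ := hcov4 y₀ hy₀o
      have hO₁sub : O₁ ⊆ {nn₁, nn₂, mm₁, mm₂} := by
        intro x hxO
        have hxo := (Finset.mem_filter.1 hxO).1
        have hxa := (Finset.mem_filter.1 hxO).2
        have hxy : x ≠ y₀ := fun h => hy₀na (h ▸ hxa)
        have hc := hcross x hxo hxa y₀ hy₀o hy₀na
        have h4 := hcovy₀ x hxo hxy hc
        simp only [Finset.mem_insert, Finset.mem_singleton]
        exact h4
      obtain ⟨x₁, hx₁O⟩ := hO₁ne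
      have hx₁o : x₁ ∈ out := (Finset.mem_filter.1 hx₁O).1
      have hx₁a : G.Adj x₁ a₀ := (Finset.mem_filter.1 hx₁O).2
      obtain ⟨k₁, k₂, l₁, l₂, hk₁, hk₂, hcovx₁⟩ := hcov4 x₁ hx₁o
      have hO₂sub : O₂ ⊆ {k₁, k₂, l₁, l₂} := by
        intro y hyO
        have hyo := (Finset.mem_filter.1 hyO).1
        have hya := (Finset.mem_filter.1 hyO).2
        have hxy : x₁ ≠ y := fun h => hya (h ▸ hx₁a)
        have hc := hcross x₁ hx₁o hx₁a y hyo hya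
        have hc' : G.Adj y x₁ ∨ ∃ o ∈ out, G.Adj y o ∧ G.Adj x₁ o := by
          rcases hc with h | ⟨o, h1, h2, h3⟩
          · exact Or.inl h.symm
          · exact Or.inr ⟨o, h1, h3, h2⟩
        have h4 := hcovx₁ y hyo (Ne.symm hxy) hc'
        simp only [Finset.mem_insert, Finset.mem_singleton]
        exact h4
      have hO₂4 : O₂.card ≤ 4 := by
        have h := Finset.card_le_card hO₂sub
        have h1 := Finset.card_insert_le k₁ ({k₂, l₁, l₂} : Finset (Fin n))
        have h2 := Finset.card_insert_le k₂ ({l₁, l₂} : Finset (Fin n))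
        have h3 := Finset.card_insert_le l₁ ({l₂} : Finset (Fin n))
        have h4 := Finset.card_singleton l₂
        omega
      have ht7 : 7 ≤ out.card := by omega
      have hO₁3 : 3 ≤ O₁.card := by omega
      have hzex : ∃ z, z ∈ O₁ ∧ z ∈ G.neighborFinset y₀ ∩ out := by
        by_contra hcon2
        push_neg at hcon2
        have hsub2 : O₁ ⊆ {mm₁, mm₂} := by
          intro x hxO
          have h4 := hO₁sub hxO
          simp only [Finset.mem_insert, Finset.mem_singleton] at h4 ⊢
          rcases h4 with rfl | rfl | rfl | rfl
          · exact absurd hnn₁ (hcon2 x hxO)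
          · exact absurd hnn₂ (hcon2 x hxO)
          · exact Or.inl rfl
          · exact Or.inr rfl
        have h := Finset.card_le_card hsub2
        have h1 := Finset.card_insert_le mm₁ ({mm₂} : Finset (Fin n))
        have h2 := Finset.card_singleton mm₂
        omega
      obtain ⟨z, hzO₁, hzNy⟩ := hzex
      have hzo : z ∈ out := (Finset.mem_inter.1 hzNy).2
      have hza : G.Adj z a₀ := (Finset.mem_filter.1 hzO₁).2
      have hy₀z : G.Adj y₀ z :=
        (SimpleGraph.mem_neighborFinset _ _ _).1 (Finset.mem_inter.1 hzNy).1
      obtain ⟨n', hn'⟩ := hpair2 y₀ hy₀o z hzNy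
      have hy₀Nz : y₀ ∈ G.neighborFinset z ∩ out :=
        Finset.mem_inter.2 ⟨(SimpleGraph.mem_neighborFinset _ _ _).2 hy₀z.symm, hy₀o⟩
      obtain ⟨mz, hmz⟩ := hpair2 z hzo y₀ hy₀Nz
      have hn'N : n' ∈ G.neighborFinset y₀ ∩ out := by rw [hn']; simp
      have hn'o : n' ∈ out := (Finset.mem_inter.1 hn'N).2
      have hy₀n' : G.Adj y₀ n' :=
        (SimpleGraph.mem_neighborFinset _ _ _).1 (Finset.mem_inter.1 hn'N).1
      have hy₀Nn' : y₀ ∈ G.neighborFinset n' ∩ out :=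
        Finset.mem_inter.2 ⟨(SimpleGraph.mem_neighborFinset _ _ _).2 hy₀n'.symm, hy₀o⟩
      obtain ⟨m', hm'⟩ := hpair2 n' hn'o y₀ hy₀Nn'
      have hmzN : mz ∈ G.neighborFinset z ∩ out := by rw [hmz]; simp
      have hmzo : mz ∈ out := (Finset.mem_inter.1 hmzN).2
      have hzmz : G.Adj z mz :=
        (SimpleGraph.mem_neighborFinset _ _ _).1 (Finset.mem_inter.1 hmzN).1
      have hzNmz : z ∈ G.neighborFinset mz ∩ out :=
        Finset.mem_inter.2 ⟨(SimpleGraph.mem_neighborFinset _ _ _).2 hzmz.symm, hzo⟩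
      obtain ⟨pp, hpp⟩ := hpair2 mz hmzo z hzNmz
      have hcov6 : out ⊆ {y₀, z, n', mz, m', pp} := by
        intro x hxo
        simp only [Finset.mem_insert, Finset.mem_singleton]
        by_cases hxy₀ : x = y₀
        · exact Or.inl hxy₀
        by_cases hxa : G.Adj x a₀
        · rcases hcross x hxo hxa y₀ hy₀o hy₀na with hadj | ⟨o, hoo, ho1, ho2⟩
          · have hxN : x ∈ G.neighborFinset y₀ ∩ out :=
              Finset.mem_inter.2 ⟨(SimpleGraph.mem_neighborFinset _ _ _).2 hadj.symm, hxo⟩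
            rw [hn'] at hxN
            rcases Finset.mem_insert.1 hxN with h | h
            · exact Or.inr (Or.inl h)
            · exact Or.inr (Or.inr (Or.inl (Finset.mem_singleton.1 h)))
          · have hoN : o ∈ G.neighborFinset y₀ ∩ out :=
              Finset.mem_inter.2 ⟨(SimpleGraph.mem_neighborFinset _ _ _).2 ho2, hoo⟩
            rw [hn'] at hoN
            rcases Finset.mem_insert.1 hoN with ho' | ho'
            · have hxN : x ∈ G.neighborFinset z ∩ out :=
                Finset.mem_inter.2
                  ⟨(SimpleGraph.mem_neighborFinset _ _ _).2 (ho' ▸ ho1.symm), hxo⟩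
              rw [hmz] at hxN
              rcases Finset.mem_insert.1 hxN with h2 | h2
              · exact absurd h2 hxy₀
              · exact Or.inr (Or.inr (Or.inr (Or.inl (Finset.mem_singleton.1 h2))))
            · have ho'' : o = n' := Finset.mem_singleton.1 ho'
              have hxN : x ∈ G.neighborFinset n' ∩ out :=
                Finset.mem_inter.2
                  ⟨(SimpleGraph.mem_neighborFinset _ _ _).2 (ho'' ▸ ho1.symm), hxo⟩
              rw [hm'] at hxN
              rcases Finset.mem_insert.1 hxN with h2 | h2
              · exact absurd h2 hxy₀
              · exact Or.inr (Or.inr (Or.inr (Or.inr (Or.inl (Finset.mem_singleton.1 h2)))))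
        · rcases hcross z hzo hza x hxo hxa with hadj | ⟨o, hoo, ho1, ho2⟩
          · have hxN : x ∈ G.neighborFinset z ∩ out :=
              Finset.mem_inter.2 ⟨(SimpleGraph.mem_neighborFinset _ _ _).2 hadj, hxo⟩
            rw [hmz] at hxN
            rcases Finset.mem_insert.1 hxN with h | h
            · exact absurd h hxy₀
            · exact Or.inr (Or.inr (Or.inr (Or.inl (Finset.mem_singleton.1 h))))
          · have hoN : o ∈ G.neighborFinset z ∩ out :=
              Finset.mem_inter.2 ⟨(SimpleGraph.mem_neighborFinset _ _ _).2 ho1, hoo⟩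
            rw [hmz] at hoN
            rcases Finset.mem_insert.1 hoN with ho' | ho'
            · have hxN : x ∈ G.neighborFinset y₀ ∩ out :=
                Finset.mem_inter.2
                  ⟨(SimpleGraph.mem_neighborFinset _ _ _).2 (ho' ▸ ho2.symm), hxo⟩
              rw [hn'] at hxN
              rcases Finset.mem_insert.1 hxN with h2 | h2
              · exact Or.inr (Or.inl h2)
              · exact Or.inr (Or.inr (Or.inl (Finset.mem_singleton.1 h2)))
            · have ho'' : o = mz := Finset.mem_singleton.1 ho'
              have hxN : x ∈ G.neighborFinset mz ∩ out :=
                Finset.mem_inter.2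
                  ⟨(SimpleGraph.mem_neighborFinset _ _ _).2 (ho'' ▸ ho2.symm), hxo⟩
              rw [hpp] at hxN
              rcases Finset.mem_insert.1 hxN with h2 | h2
              · exact Or.inr (Or.inl h2)
              · exact Or.inr (Or.inr (Or.inr (Or.inr (Or.inr (Finset.mem_singleton.1 h2)))))
      have hc6 := Finset.card_le_card hcov6
      have hc1 := Finset.card_insert_le y₀ ({z, n', mz, m', pp} : Finset (Fin n))
      have hc2 := Finset.card_insert_le z ({n', mz, m', pp} : Finset (Fin n))
      have hc3 := Finset.card_insert_le n' ({mz, m', pp} : Finset (Fin n))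
      have hc4 := Finset.card_insert_le mz ({m', pp} : Finset (Fin n))
      have hc5 := Finset.card_insert_le m' ({pp} : Finset (Fin n))
      have hc0 := Finset.card_singleton pp
      omega
    · -- q ≥ 5 : contradiction via dominating vertex
      exfalso
      have hquadsub : ({a₀, b₀, c₀, d₀} : Finset (Fin n)) ⊆ A := by
        intro u hu
        simp only [Finset.mem_insert, Finset.mem_singleton] at hu
        rcases hu with rfl | rfl | rfl | rfl <;> assumption
      have hquadcard : ({a₀, b₀, c₀, d₀} : Finset (Fin n)).card ≤ 4 := by
        have h1 := Finset.card_insert_le a₀ ({b₀, c₀, d₀} : Finset (Fin n))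
        have h2 := Finset.card_insert_le b₀ ({c₀, d₀} : Finset (Fin n))
        have h3 := Finset.card_insert_le c₀ ({d₀} : Finset (Fin n))
        have h4 := Finset.card_singleton d₀
        omega
      have hs₀ex : 0 < (A \ ({a₀, b₀, c₀, d₀} : Finset (Fin n))).card := by
        have h1 := Finset.le_card_sdiff ({a₀, b₀, c₀, d₀} : Finset (Fin n)) A
        omega
      obtain ⟨s₀, hs₀⟩ := Finset.card_pos.1 hs₀ex
      obtain ⟨hs₀A, hs₀q⟩ := Finset.mem_sdiff.1 hs₀
      have hs₀quad : ¬(s₀ = a₀ ∨ s₀ = b₀ ∨ s₀ = c₀ ∨ s₀ = d₀) := by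
        intro h
        apply hs₀q
        simp only [Finset.mem_insert, Finset.mem_singleton]
        exact h
      have hs₀M : s₀ ∉ M := fun h => hs₀quad (hMquad s₀ h)
      have hs₀e : (G.neighborFinset s₀ ∩ A).card = q - 1 := by
        have h1 := hEa_le s₀ hs₀A
        have h2 := hEa_ge s₀ hs₀A
        have h3 : (G.neighborFinset s₀ ∩ A).card ≠ q - 2 :=
          fun h => hs₀M (Finset.mem_filter.2 ⟨hs₀A, h⟩)
        omega
      have hsub : G.neighborFinset s₀ ∩ A ⊆ A.erase s₀ := by
        intro u hu
        obtain ⟨h1, h2⟩ := Finset.mem_inter.1 hu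
        refine Finset.mem_erase.2 ⟨?_, h2⟩
        intro h
        exact G.irrefl (h ▸ (SimpleGraph.mem_neighborFinset _ _ _).1 h1)
      have hNs₀ : G.neighborFinset s₀ ∩ A = A.erase s₀ := by
        apply Finset.eq_of_subset_of_card_le hsub
        rw [Finset.card_erase_of_mem hs₀A, hAcard, hδ, hs₀e]
      have hdom : ∀ u : Fin n, u ≠ s₀ → G.Adj s₀ u := by
        intro u hu
        rcases hcases u with rfl | huA | huo
        · exact ((hmemA.1 hs₀A)).symm
        · have h1 : u ∈ G.neighborFinset s₀ ∩ A := by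
            rw [hNs₀]; exact Finset.mem_erase.2 ⟨hu, huA⟩
          exact (SimpleGraph.mem_neighborFinset _ _ _).1 (Finset.mem_inter.1 h1).1
        · obtain ⟨S, hSA, hSc, hSadj, -, -, -, hsub4⟩ := hSx4 u huo
          have hs₀S : s₀ ∈ S := by
            by_contra hno
            have := hsub4 (Finset.mem_sdiff.2 ⟨hs₀A, hno⟩)
            simp only [Finset.mem_insert, Finset.mem_singleton] at this
            exact hs₀quad this
          exact (hSadj s₀ hs₀S).symm
      obtain ⟨u, hu1, hu2⟩ := hND s₀
      exact hu2 (hdom u hu1)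
  · -- q+1 ≤ δ ≤ 2q-3 : case C2
    have hE : δ * (q-2) ≤ E := by
      calc δ * (q-2) = ∑ _v ∈ A, (q-2) := by
            rw [Finset.sum_const, hAcard, smul_eq_mul]
        _ ≤ E := Finset.sum_le_sum hEa_ge
    have hout2 : out.card * ((q-2) + δ) ≤ ∑ x ∈ out, (a x + G.degree x) := by
      calc out.card * ((q-2) + δ) = ∑ _x ∈ out, ((q-2) + δ) := by
            rw [Finset.sum_const, smul_eq_mul]
        _ ≤ _ := Finset.sum_le_sum (fun x hx =>
            add_le_add (hax_ge x (hmemout.1 hx).1) (hwmin x))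
    obtain ⟨p, rfl⟩ : ∃ p, q = p + 4 := ⟨q - 4, by omega⟩
    have e1 : p + 4 - 1 = p + 3 := by omega
    have e2 : p + 4 - 2 = p + 2 := by omega
    rw [e1]
    rw [e2] at hE hout2
    set t := out.card with htdef
    have hgt' : p + 5 ≤ δ := hgt
    have hle' : δ ≤ 2*p + 5 := by omega
    zify at hstar hE hout2 htn hgt' hle' hn ⊢
    nlinarith [hstar, hE, hout2, htn, hn,
      mul_nonneg (by linarith : (0:ℤ) ≤ (δ:ℤ) - ((p:ℤ)+4))
        (by linarith : (0:ℤ) ≤ (n:ℤ) - 3*((p:ℤ)+4)),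
      mul_nonneg (by linarith : (0:ℤ) ≤ (δ:ℤ) - ((p:ℤ)+5))
        (by linarith : (0:ℤ) ≤ 2*(p:ℤ)+5 - (δ:ℤ))]
end

section
/- Let q ≥ 4 and n ≥ 2q. If G is a graph on n vertices with rad(G) = 2, minimum degree δ(G) = q−1, and |N(u) ∩ N(v)| ≥ q−2 for all pairs of vertices u, v, then G has at least (q−1)n − C(q,2) edges. -/
open Finset

set_option maxHeartbeats 2000000

/-- Let `q ≥ 4`, `n ≥ 2q`. If `G` is a graph on `n` vertices with radius 2,
minimum degree `q-1`, and every two vertices have at least `q-2` common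
neighbors, then `G` has at least `(q-1)n - C(q,2)` edges. -/
theorem stmt10 (q n : ℕ) (hq : 4 ≤ q) (hn : 2 * q ≤ n)
    (G : SimpleGraph (Fin n)) [DecidableRel G.Adj]
    (hconn : G.Connected)
    (hradle : ∃ v : Fin n, ∀ u : Fin n, G.dist v u ≤ 2)
    (hradge : ∀ v : Fin n, ∃ u : Fin n, 2 ≤ G.dist v u)
    (hmindeg : G.minDegree = q - 1)
    (hcommon : ∀ u v : Fin n, u ≠ v →
      q - 2 ≤ (G.neighborFinset u ∩ G.neighborFinset v).card) :
    (q - 1) * n - q.choose 2 ≤ G.edgeFinset.card := by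
  classical
  have hnpos : 0 < n := by omega
  haveI : Nonempty (Fin n) := ⟨⟨0, hnpos⟩⟩
  obtain ⟨v₀, hv₀⟩ := G.exists_minimal_degree_vertex
  set N : Fin n → Finset (Fin n) := fun x => G.neighborFinset x with hN
  have hdeg0 : ∀ x, q - 1 ≤ G.degree x := fun x => hmindeg ▸ G.minDegree_le_degree x
  have hdegN : ∀ x, (N x).card = G.degree x := fun x => G.card_neighborFinset_eq_degree x
  have hmemN : ∀ x y, y ∈ N x ↔ G.Adj x y := fun x y => SimpleGraph.mem_neighborFinset G x y
  have hcommon' : ∀ u v : Fin n, u ≠ v → q - 2 ≤ ((N u) ∩ (N v)).card := hcommon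
  set A : Finset (Fin n) := N v₀ with hA
  have hAcard : A.card = q - 1 := by
    rw [hA, hdegN, ← hv₀, hmindeg]
  have hv₀A : v₀ ∉ A := by
    rw [hA, hmemN]; exact G.irrefl
  set K : Finset (Fin n) := insert v₀ A with hK
  have hKcard : K.card = q := by
    rw [hK, card_insert_of_notMem hv₀A, hAcard]; omega
  set B : Finset (Fin n) := Kᶜ with hB
  have hBcard : B.card = n - q := by
    rw [hB, card_compl, hKcard]; simp
  have hmemB : ∀ x, x ∈ B ↔ (x ≠ v₀ ∧ x ∉ A) := by
    intro x; rw [hB, mem_compl, hK, mem_insert]; tauto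
  have hv₀B : ∀ x ∈ B, v₀ ∉ N x := by
    intro x hx h
    exact ((hmemB x).mp hx).2 ((hmemN v₀ x).mpr ((hmemN x v₀).mp h).symm)
  -- splitting lemma
  have hsplit : ∀ s : Finset (Fin n), v₀ ∉ s → s.card ≤ (A ∩ s).card + (B ∩ s).card := by
    intro s hs
    have hsub : s ⊆ (A ∩ s) ∪ (B ∩ s) := by
      intro z hz
      rcases eq_or_ne z v₀ with rfl | hzv
      · exact absurd hz hs
      · by_cases hzA : z ∈ A
        · exact mem_union_left _ (mem_inter.mpr ⟨hzA, hz⟩)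
        · exact mem_union_right _ (mem_inter.mpr ⟨(hmemB z).mpr ⟨hzv, hzA⟩, hz⟩)
    exact le_trans (card_le_card hsub) (card_union_le _ _)
  -- A is a clique
  have hclqA : ∀ a ∈ A, A.erase a ⊆ N a := by
    intro a ha
    have hne : v₀ ≠ a := by
      rintro rfl
      exact G.irrefl ((hmemN v₀ v₀).mp ha)
    have hc := hcommon' v₀ a hne
    have hsub : N v₀ ∩ N a ⊆ A.erase a := by
      intro z hz
      rw [mem_inter] at hz
      rw [mem_erase]
      refine ⟨?_, hz.1⟩
      intro h; exact G.irrefl (h ▸ (hmemN a z).mp hz.2)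
    have hcard : (A.erase a).card = q - 2 := by
      rw [card_erase_of_mem ha, hAcard]; omega
    have := eq_of_subset_of_card_le hsub (by rw [hcard]; exact hc)
    rw [← this]
    exact inter_subset_right
  have hadjA : ∀ a ∈ A, ∀ b ∈ A, a ≠ b → G.Adj a b := by
    intro a ha b hb hab
    exact (hmemN a b).mp (hclqA a ha (mem_erase.mpr ⟨hab.symm, hb⟩))
  -- every B vertex has ≥ q-2 neighbors in A
  have hBA : ∀ x ∈ B, q - 2 ≤ (A ∩ N x).card := by
    intro x hx
    have hne : v₀ ≠ x := fun h => ((hmemB x).mp hx).1 h.symm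
    exact hcommon' v₀ x hne
  set D : Finset (Fin n) := B.filter (fun x => ¬ A ⊆ N x) with hD
  have hDB : D ⊆ B := filter_subset _ _
  have hDcard : ∀ x ∈ D, (A ∩ N x).card = q - 2 := by
    intro x hx
    rw [hD, mem_filter] at hx
    have h1 : q - 2 ≤ (A ∩ N x).card := hBA x hx.1
    have h2 : (A ∩ N x).card ≤ q - 1 := le_trans (card_le_card inter_subset_left) hAcard.le
    rcases Nat.lt_or_ge (A ∩ N x).card (q - 1) with h | h
    · omega
    · exfalso
      have := eq_of_subset_of_card_le (inter_subset_left : A ∩ N x ⊆ A) (by rw [hAcard]; exact h)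
      exact hx.2 (by rw [← this]; exact inter_subset_right)
  have hNDcard : ∀ x ∈ B, x ∉ D → (A ∩ N x).card = q - 1 := by
    intro x hx hxD
    rw [hD, mem_filter] at hxD
    have : A ⊆ N x := by tauto
    rw [inter_eq_left.mpr this, hAcard]
  -- a B-vertex cannot miss two vertices of A
  have hmiss2 : ∀ x ∈ B, ∀ a ∈ A, ∀ b ∈ A, a ≠ b → a ∉ N x → b ∉ N x → False := by
    intro x hx a ha b hb hab hax hbx
    have hsub : A ∩ N x ⊆ (A.erase a).erase b := by
      intro z hz
      rw [mem_inter] at hz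
      rw [mem_erase, mem_erase]
      exact ⟨fun h => hbx (h ▸ hz.2), fun h => hax (h ▸ hz.2), hz.1⟩
    have h1 := card_le_card hsub
    have h2 : ((A.erase a).erase b).card = q - 3 := by
      rw [card_erase_of_mem (mem_erase.mpr ⟨hab.symm, hb⟩), card_erase_of_mem ha, hAcard]
      omega
    have := hBA x hx
    omega
  -- deficient vertices have a B-neighbor
  have hdegB1 : ∀ x ∈ D, 1 ≤ (B ∩ N x).card := by
    intro x hx
    have hx' := hDB hx
    have h1 := hsplit (N x) (hv₀B x hx')
    have h2 := hdeg0 x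
    rw [← hdegN] at h2
    have h3 := hDcard x hx
    omega

  -- every a ∈ A has a non-neighbor in B
  have hy : ∀ a ∈ A, ∃ y, y ∈ B ∧ a ∉ N y := by
    intro a ha
    obtain ⟨y, hy2⟩ := hradge a
    have hya : y ≠ a := by
      rintro rfl; rw [SimpleGraph.dist_self] at hy2; omega
    have hnadj : ¬ G.Adj a y := by
      intro h
      have h2 := SimpleGraph.dist_le (SimpleGraph.Walk.cons h SimpleGraph.Walk.nil)
      simp at h2; omega
    have hyB : y ∈ B := by
      rw [hmemB]
      constructor
      · intro h
        exact hnadj (by rw [h]; exact ((hmemN v₀ a).mp ha).symm)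
      · intro hyA
        exact hnadj (hadjA a ha y hyA hya.symm)
    exact ⟨y, hyB, fun h => hnadj ((hmemN y a).mp h).symm⟩
  -- Claim A
  have claimA : ∀ u ∈ D, (B ∩ N u).card = 1 → ∀ w ∈ B ∩ N u, ∀ x ∈ B, x ≠ u →
      ∀ a ∈ A, a ∈ N u → a ∉ N x → w ∈ N x := by
    intro u hu hu1 w hw x hx hxu a ha hau hax
    by_contra hwx
    have huB := hDB hu
    have hc := hcommon' u x (fun h => hxu h.symm)
    have h1 := hsplit (N u ∩ N x) (fun h => hv₀B u huB (mem_inter.mp h).1)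
    have h2 : A ∩ (N u ∩ N x) ⊆ (A ∩ N u).erase a := by
      intro z hz
      simp only [mem_inter] at hz
      rw [mem_erase]
      exact ⟨fun h => hax (h ▸ hz.2.2), mem_inter.mpr ⟨hz.1, hz.2.1⟩⟩
    have h2c : ((A ∩ N u).erase a).card = q - 3 := by
      rw [card_erase_of_mem (mem_inter.mpr ⟨ha, hau⟩), hDcard u hu]
      omega
    have h3 : B ∩ (N u ∩ N x) = ∅ := by
      obtain ⟨b, hb⟩ := card_eq_one.mp hu1
      rw [eq_empty_iff_forall_notMem]
      intro z hz
      simp only [mem_inter] at hz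
      have hzb : z = b := by
        have h4 : z ∈ B ∩ N u := mem_inter.mpr ⟨hz.1, hz.2.1⟩
        rw [hb, mem_singleton] at h4; exact h4
      have hwb : w = b := by rw [hb, mem_singleton] at hw; exact hw
      rw [hzb, ← hwb] at hz
      exact hwx hz.2.2
    have h4 := card_le_card h2
    rw [h3] at h1
    simp at h1
    omega
  set D1 : Finset (Fin n) := D.filter (fun x => (B ∩ N x).card = 1) with hD1
  have hD1D : D1 ⊆ D := filter_subset _ _
  have hD1card : ∀ x ∈ D1, (B ∩ N x).card = 1 := fun x hx => (mem_filter.mp hx).2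
  -- partner of D1-vertex which is deficient has same A-neighborhood
  have hAuw : ∀ u ∈ D1, ∀ w ∈ B ∩ N u, w ∈ D → A ∩ N u ⊆ N w := by
    intro u hu w hw hwD
    have huD := hD1D hu
    have huB := hDB huD
    have huw : G.Adj u w := (hmemN u w).mp (mem_inter.mp hw).2
    have hc := hcommon' u w huw.ne
    have h1 := hsplit (N u ∩ N w) (fun h => hv₀B u huB (mem_inter.mp h).1)
    have h3 : B ∩ (N u ∩ N w) = ∅ := by
      obtain ⟨b, hb⟩ := card_eq_one.mp (hD1card u hu)
      rw [eq_empty_iff_forall_notMem]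
      intro z hz
      simp only [mem_inter] at hz
      have hzb : z = b := by
        have h4 : z ∈ B ∩ N u := mem_inter.mpr ⟨hz.1, hz.2.1⟩
        rw [hb, mem_singleton] at h4; exact h4
      have hwb : w = b := by rw [hb, mem_singleton] at hw; exact hw
      rw [hzb, ← hwb] at hz
      exact G.irrefl ((hmemN w w).mp hz.2.2)
    rw [h3] at h1
    simp at h1
    have h2 : A ∩ (N u ∩ N w) ⊆ A ∩ N u := by
      intro z hz; simp only [mem_inter] at hz ⊢; exact ⟨hz.1, hz.2.1⟩
    have heq := eq_of_subset_of_card_le h2 (by rw [hDcard u huD]; omega)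
    intro z hz
    rw [← heq] at hz
    exact (mem_inter.mp (mem_inter.mp hz).2).2
  -- L2 : partner of a D1-vertex has ≥ 2 B-neighbors
  have hL2 : ∀ u ∈ D1, ∀ w ∈ B ∩ N u, 2 ≤ (B ∩ N w).card := by
    intro u hu w hw
    have huD := hD1D hu
    have huB := hDB huD
    have huw : G.Adj u w := (hmemN u w).mp (mem_inter.mp hw).2
    have huNw : u ∈ B ∩ N w := mem_inter.mpr ⟨huB, (hmemN w u).mpr huw.symm⟩
    by_contra hcon
    push_neg at hcon
    have h1 : (B ∩ N w).card = 1 := by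
      have := card_pos.mpr ⟨u, huNw⟩
      omega
    obtain ⟨b, hb⟩ := card_eq_one.mp h1
    have hub : u = b := by rw [hb, mem_singleton] at huNw; exact huNw
    have hAu : 0 < (A ∩ N u).card := by rw [hDcard u huD]; omega
    obtain ⟨a, hau⟩ := card_pos.mp hAu
    have ha : a ∈ A := (mem_inter.mp hau).1
    obtain ⟨y, hyB, hyna⟩ := hy a ha
    have hyu : y ≠ u := by rintro rfl; exact hyna (mem_inter.mp hau).2
    have hyw := claimA u huD (hD1card u hu) w hw y hyB hyu a ha (mem_inter.mp hau).2 hyna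
    have hy2 : y ∈ B ∩ N w := mem_inter.mpr ⟨hyB, (hmemN w y).mpr ((hmemN y w).mp hyw).symm⟩
    rw [hb, mem_singleton] at hy2
    exact hyu (hy2.trans hub.symm)
  -- L3 : a deficient partner has ≥ q-2 B-neighbors outside D1
  have hL3 : ∀ w ∈ D, ∀ u ∈ D1, w ∈ B ∩ N u → q - 2 ≤ ((B ∩ N w) \ D1).card := by
    intro w hwD u hu hw
    have huD := hD1D hu
    have hwB := (mem_inter.mp hw).1
    have hAsub := hAuw u hu w hw hwD
    have hmap : ∀ a ∈ A ∩ N u, (fun a => if h : a ∈ A then (hy a h).choose else a) a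
        ∈ (B ∩ N w) \ D1 := by
      intro a haNu
      have ha : a ∈ A := (mem_inter.mp haNu).1
      simp only [dif_pos ha]
      obtain ⟨hyB, hyna⟩ := (hy a ha).choose_spec
      set y := (hy a ha).choose with hydef
      have hyu : y ≠ u := by
        intro h; rw [h] at hyna; exact hyna (mem_inter.mp haNu).2
      have hyw := claimA u huD (hD1card u hu) w hw y hyB hyu a ha (mem_inter.mp haNu).2 hyna
      have hyw' : G.Adj y w := (hmemN y w).mp hyw
      have hyNw : y ∈ B ∩ N w := mem_inter.mpr ⟨hyB, (hmemN w y).mpr hyw'.symm⟩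
      rw [mem_sdiff]
      refine ⟨hyNw, ?_⟩
      -- show y ∉ D1 via 2 ≤ (B ∩ N y).card
      have hcy := hcommon' y w hyw'.ne
      have h1 := hsplit (N y ∩ N w) (fun h => hv₀B y hyB (mem_inter.mp h).1)
      have haw : a ∈ A ∩ N w := mem_inter.mpr ⟨ha, hAsub haNu⟩
      have h2 : A ∩ (N y ∩ N w) ⊆ (A ∩ N w).erase a := by
        intro z hz
        simp only [mem_inter] at hz
        rw [mem_erase]
        exact ⟨fun h => hyna (h ▸ hz.2.1), mem_inter.mpr ⟨hz.1, hz.2.2⟩⟩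
      have h2c : ((A ∩ N w).erase a).card = q - 3 := by
        rw [card_erase_of_mem haw, hDcard w hwD]
        omega
      have h4 := card_le_card h2
      have h5 : 1 ≤ (B ∩ (N y ∩ N w)).card := by omega
      obtain ⟨z, hz⟩ := card_pos.mp h5
      simp only [mem_inter] at hz
      have hzw : z ≠ w := fun h => G.irrefl ((hmemN w w).mp (h ▸ hz.2.2))
      have hsub2 : ({z, w} : Finset (Fin n)) ⊆ B ∩ N y := by
        intro t ht
        rcases mem_insert.mp ht with rfl | ht
        · exact mem_inter.mpr ⟨hz.1, (hmemN y t).mpr ((hmemN y t).mp hz.2.1)⟩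
        · rw [mem_singleton] at ht
          rw [ht]
          exact mem_inter.mpr ⟨hwB, hyw⟩
      have h6 : 2 ≤ (B ∩ N y).card := by
        have := card_le_card hsub2
        rw [card_insert_of_notMem (by rw [mem_singleton]; exact hzw), card_singleton] at this
        exact this
      intro hyD1
      have := hD1card y hyD1
      omega
    have hinj : Set.InjOn (fun a => if h : a ∈ A then (hy a h).choose else a)
        ↑(A ∩ N u) := by
      intro a ha' a' ha'' heq
      simp only [Finset.coe_inter, Set.mem_inter_iff, Finset.mem_coe] at ha' ha''
      have ha : a ∈ A := ha'.1
      have ha2 : a' ∈ A := ha''.1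
      simp only [dif_pos ha, dif_pos ha2] at heq
      by_contra hne
      obtain ⟨hyB, hyna⟩ := (hy a ha).choose_spec
      obtain ⟨hyB2, hyna2⟩ := (hy a' ha2).choose_spec
      rw [← heq] at hyna2
      exact hmiss2 _ hyB a ha a' ha2 hne hyna hyna2
    have := card_le_card_of_injOn _ hmap hinj
    rw [hDcard u huD] at this
    exact this
  set W : Finset (Fin n) := B.filter (fun w => ∃ u ∈ D1, w ∈ B ∩ N u) with hW
  have hWD1 : ∀ w ∈ W, w ∉ D1 := by
    intro w hw hwD1
    obtain ⟨-, u, hu, hwu⟩ := mem_filter.mp hw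
    have := hL2 u hu w hwu
    have := hD1card w hwD1
    omega
  -- pointwise discharging inequality
  have hgle : ∀ x ∈ B,
      ((if x ∈ D1 then 1 else 0) + ((if x ∈ D \ D1 then 2 else 0)
        + (if x ∈ W then ((B ∩ N x) ∩ D1).card else 0))) ≤ (B ∩ N x).card := by
    intro x hxB
    by_cases h1 : x ∈ D1
    · have hx1 := hD1card x h1
      have hnW : x ∉ W := fun hxW => hWD1 x hxW h1
      have hnDD : x ∉ D \ D1 := fun h => (mem_sdiff.mp h).2 h1
      rw [if_pos h1, if_neg hnDD, if_neg hnW, hx1]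
    · by_cases h2 : x ∈ D
      · have hge1 := hdegB1 x h2
        have hne1 : (B ∩ N x).card ≠ 1 := fun h => h1 (mem_filter.mpr ⟨h2, h⟩)
        have hDD : x ∈ D \ D1 := mem_sdiff.mpr ⟨h2, h1⟩
        by_cases h3 : x ∈ W
        · obtain ⟨-, u, hu, hwu⟩ := mem_filter.mp h3
          have hL := hL3 x h2 u hu hwu
          have hsplit2 := card_inter_add_card_sdiff (B ∩ N x) D1
          rw [if_neg h1, if_pos hDD, if_pos h3]
          omega
        · rw [if_neg h1, if_pos hDD, if_neg h3]
          omega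
      · have hnDD : x ∉ D \ D1 := fun h => h2 (mem_sdiff.mp h).1
        rw [if_neg h1, if_neg hnDD]
        by_cases h3 : x ∈ W
        · rw [if_pos h3]
          simpa using card_le_card (inter_subset_left : (B ∩ N x) ∩ D1 ⊆ B ∩ N x)
        · rw [if_neg h3]
          simp
  -- sum computations
  have hfilter_eq : ∀ (s : Finset (Fin n)), s ⊆ B → B.filter (fun x => x ∈ s) = s := by
    intro s hs
    ext z
    simp only [mem_filter]
    exact ⟨fun h => h.2, fun h => ⟨hs h, h⟩⟩
  have hsum1 : (∑ x ∈ B, if x ∈ D1 then (1:ℕ) else 0) = D1.card := by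
    rw [← sum_filter, hfilter_eq D1 (fun z hz => hDB (hD1D hz))]
    simp
  have hsum2 : (∑ x ∈ B, if x ∈ D \ D1 then (2:ℕ) else 0) = 2 * (D \ D1).card := by
    rw [← sum_filter, hfilter_eq (D \ D1) (fun z hz => hDB (mem_sdiff.mp hz).1)]
    rw [sum_const, smul_eq_mul, mul_comm]
  have hsum3 : (∑ x ∈ B, if x ∈ W then ((B ∩ N x) ∩ D1).card else 0)
      = ∑ w ∈ W, ((B ∩ N w) ∩ D1).card := by
    rw [← sum_filter, hfilter_eq W (filter_subset _ _)]
  have hsumD : (∑ x ∈ B, if x ∈ D then (1:ℕ) else 0) = D.card := by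
    rw [← sum_filter, hfilter_eq D hDB]
    simp
  have hWk : D1.card ≤ ∑ w ∈ W, ((B ∩ N w) ∩ D1).card := by
    have hrew : ∀ w : Fin n, ((B ∩ N w) ∩ D1).card = ∑ u ∈ D1, if G.Adj w u then 1 else 0 := by
      intro w
      rw [← card_filter]
      congr 1
      ext z
      simp only [mem_inter, mem_filter, hmemN]
      constructor
      · rintro ⟨⟨hzB, hzN⟩, hzD⟩; exact ⟨hzD, hzN⟩
      · rintro ⟨hzD, hzN⟩; exact ⟨⟨hDB (hD1D hzD), hzN⟩, hzD⟩
    calc D1.card = ∑ _u ∈ D1, 1 := by simp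
    _ ≤ ∑ u ∈ D1, ∑ w ∈ W, (if G.Adj w u then 1 else 0) := by
        apply sum_le_sum
        intro u hu
        have h1 : 0 < (B ∩ N u).card := by rw [hD1card u hu]; omega
        obtain ⟨w, hw⟩ := card_pos.mp h1
        have hwW : w ∈ W := mem_filter.mpr ⟨(mem_inter.mp hw).1, u, hu, hw⟩
        have hadj : G.Adj w u := ((hmemN u w).mp (mem_inter.mp hw).2).symm
        calc 1 = (if G.Adj w u then 1 else 0) := by rw [if_pos hadj]
        _ ≤ ∑ w' ∈ W, (if G.Adj w' u then 1 else 0) :=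
            single_le_sum (f := fun w' => if G.Adj w' u then (1:ℕ) else 0)
              (fun _ _ => Nat.zero_le _) hwW
    _ = ∑ w ∈ W, ∑ u ∈ D1, (if G.Adj w u then 1 else 0) := sum_comm
    _ = ∑ w ∈ W, ((B ∩ N w) ∩ D1).card := by
        apply sum_congr rfl; intro w _; rw [hrew]
  have hSB : 2 * D.card ≤ ∑ x ∈ B, (B ∩ N x).card := by
    have h1 := sum_le_sum hgle
    rw [sum_add_distrib, sum_add_distrib, hsum1, hsum2, hsum3] at h1
    have hDsplit : (D \ D1).card = D.card - D1.card := card_sdiff_of_subset hD1D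
    have hD1le : D1.card ≤ D.card := card_le_card hD1D
    omega
  -- K is a clique
  have hadjK : ∀ x ∈ K, ∀ z ∈ K, z ≠ x → G.Adj x z := by
    intro x hx z hz hzx
    rw [hK, mem_insert] at hx hz
    rcases hx with rfl | hx
    · rcases hz with rfl | hz
      · exact absurd rfl hzx
      · exact (hmemN x z).mp hz
    · rcases hz with rfl | hz
      · exact ((hmemN z x).mp hx).symm
      · exact hadjA x hx z hz (fun h => hzx h.symm)
  have hKdeg : ∀ x ∈ K, (q - 1) + (B ∩ N x).card ≤ G.degree x := by
    intro x hx
    have hsub : (K.erase x) ∪ (B ∩ N x) ⊆ N x := by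
      intro z hz
      rcases mem_union.mp hz with h | h
      · rw [mem_erase] at h
        exact (hmemN x z).mpr (hadjK x hx z h.2 h.1)
      · exact (mem_inter.mp h).2
    have hdisj : Disjoint (K.erase x) (B ∩ N x) := by
      rw [disjoint_left]
      intro z hz hz2
      have hzK : z ∈ K := mem_of_mem_erase hz
      have hzB : z ∈ B := (mem_inter.mp hz2).1
      rw [hB, mem_compl] at hzB
      exact hzB hzK
    have h1 := card_le_card hsub
    rw [card_union_of_disjoint hdisj, card_erase_of_mem hx, hKcard] at h1
    rw [← hdegN]
    omega
  have hBdeg : ∀ x ∈ B, (A ∩ N x).card + (B ∩ N x).card ≤ G.degree x := by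
    intro x _
    have hsub : (A ∩ N x) ∪ (B ∩ N x) ⊆ N x :=
      union_subset inter_subset_right inter_subset_right
    have hdisj : Disjoint (A ∩ N x) (B ∩ N x) := by
      rw [disjoint_left]
      intro z hz hz2
      have hzA := (mem_inter.mp hz).1
      have hzB := (mem_inter.mp hz2).1
      exact ((hmemB z).mp hzB).2 hzA
    have h1 := card_le_card hsub
    rw [card_union_of_disjoint hdisj] at h1
    rw [← hdegN]; exact h1
  have hdouble : ∑ x ∈ K, (B ∩ N x).card = ∑ x ∈ B, (K ∩ N x).card := by
    have h1 : ∀ x : Fin n, (B ∩ N x).card = ∑ z ∈ B, if G.Adj x z then 1 else 0 := by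
      intro x
      rw [← card_filter]
      congr 1; ext z
      simp only [mem_inter, mem_filter, hmemN]
      try tauto
    have h2 : ∀ x : Fin n, (K ∩ N x).card = ∑ z ∈ K, if G.Adj x z then 1 else 0 := by
      intro x
      rw [← card_filter]
      congr 1; ext z
      simp only [mem_inter, mem_filter, hmemN]
      try tauto
    simp only [h1, h2]
    rw [sum_comm]
    apply sum_congr rfl; intro x _; apply sum_congr rfl; intro z _
    congr 1
    simp only [eq_iff_iff]
    exact G.adj_comm z x
  have hAK : ∀ x : Fin n, (A ∩ N x).card ≤ (K ∩ N x).card := by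
    intro x
    apply card_le_card
    apply inter_subset_inter_right
    rw [hK]; exact subset_insert _ _
  have hSA : (q - 1) * B.card ≤ (∑ x ∈ B, (A ∩ N x).card) + D.card := by
    have hpt : ∀ x ∈ B, q - 1 ≤ (A ∩ N x).card + (if x ∈ D then 1 else 0) := by
      intro x hx
      by_cases h : x ∈ D
      · rw [if_pos h, hDcard x h]; omega
      · rw [if_neg h, hNDcard x hx h]
        omega
    calc (q-1) * B.card = ∑ _x ∈ B, (q-1) := by rw [sum_const, smul_eq_mul, Nat.mul_comm]
    _ ≤ ∑ x ∈ B, ((A ∩ N x).card + if x ∈ D then 1 else 0) := sum_le_sum hpt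
    _ = (∑ x ∈ B, (A ∩ N x).card) + ∑ x ∈ B, (if x ∈ D then 1 else 0) := sum_add_distrib
    _ = (∑ x ∈ B, (A ∩ N x).card) + D.card := by rw [hsumD]
  have hEdge := G.sum_degrees_eq_twice_card_edges
  have hsplitU : (∑ x ∈ K, G.degree x) + ∑ x ∈ B, G.degree x = ∑ x, G.degree x := by
    rw [hB]; exact sum_add_sum_compl K _
  have hKsum : q * (q-1) + ∑ x ∈ B, (A ∩ N x).card ≤ ∑ x ∈ K, G.degree x := by
    have s1 : (∑ x ∈ B, (A ∩ N x).card) ≤ ∑ x ∈ B, (K ∩ N x).card :=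
      sum_le_sum (fun x _ => hAK x)
    have s2 : (∑ x ∈ K, ((q-1) + (B ∩ N x).card)) ≤ ∑ x ∈ K, G.degree x :=
      sum_le_sum hKdeg
    rw [sum_add_distrib, sum_const, smul_eq_mul, hKcard, hdouble] at s2
    omega
  have hBsum : (∑ x ∈ B, (A ∩ N x).card) + 2 * D.card ≤ ∑ x ∈ B, G.degree x := by
    have s1 : (∑ x ∈ B, ((A ∩ N x).card + (B ∩ N x).card)) ≤ ∑ x ∈ B, G.degree x :=
      sum_le_sum hBdeg
    rw [sum_add_distrib] at s1
    omega
  -- final arithmetic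
  have heven : Even (q * (q - 1)) := by
    rcases Nat.even_or_odd q with h | h
    · exact h.mul_right _
    · exact (Nat.Odd.sub_odd h odd_one).mul_left _
  have h2c : 2 * q.choose 2 = q * (q - 1) := by
    rw [Nat.choose_two_right]
    obtain ⟨k, hk⟩ := heven
    rw [hk]
    omega
  have h2E : q * (q-1) + 2 * (∑ x ∈ B, (A ∩ N x).card) + 2 * D.card
      ≤ 2 * G.edgeFinset.card := by
    omega
  have hmul : (q-1) * (n-q) + (q-1) * q = (q-1) * n := by
    rw [← Nat.mul_add]
    congr 1
    omega
  have hSA' : (q-1) * (n-q) ≤ (∑ x ∈ B, (A ∩ N x).card) + D.card := by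
    rw [← hBcard]; exact hSA
  have hkey : 2 * ((q-1) * n) ≤ 2 * G.edgeFinset.card + 2 * q.choose 2 := by
    have hqq : (q-1) * q = q * (q-1) := Nat.mul_comm _ _
    omega
  rw [tsub_le_iff_right]
  omega
end

section
/- Let q ≥ 3 and n ≥ 3q−4. If G is a graph on n vertices with minimum degree δ(G) ≥ q such that for every pair of vertices u, v the induced subgraph on N(u) ∩ N(v) contains a clique on q−2 vertices, then G has at least (q−1)n − C(q,2) edges. -/
open Finset

private lemma dbl_count {n : ℕ} (G : SimpleGraph (Fin n)) [DecidableRel G.Adj]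
    (X Y : Finset (Fin n)) :
    ∑ x ∈ X, (G.neighborFinset x ∩ Y).card = ∑ y ∈ Y, (G.neighborFinset y ∩ X).card := by
  have key : ∀ (Z : Finset (Fin n)) (x : Fin n),
      (G.neighborFinset x ∩ Z).card = ∑ y ∈ Z, if G.Adj x y then 1 else 0 := by
    intro Z x
    rw [← Finset.card_filter]
    congr 1
    ext y
    simp [SimpleGraph.mem_neighborFinset, and_comm]
  calc ∑ x ∈ X, (G.neighborFinset x ∩ Y).card
      = ∑ x ∈ X, ∑ y ∈ Y, if G.Adj x y then 1 else 0 :=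
        Finset.sum_congr rfl fun x _ => key Y x
    _ = ∑ y ∈ Y, ∑ x ∈ X, if G.Adj x y then 1 else 0 := Finset.sum_comm
    _ = ∑ y ∈ Y, (G.neighborFinset y ∩ X).card := by
        refine Finset.sum_congr rfl fun y _ => ?_
        rw [key X y]
        refine Finset.sum_congr rfl fun x _ => ?_
        exact if_congr (G.adj_comm x y) rfl rfl

private lemma arith_final (k j b card n : ℕ) (hb1 : k + 1 ≤ b) (hn2 : n = b + 2*k + j + 4)
    (htotal : k + j + 3 + k + (k + j + 2) * (k + j + 2) + (k + 1) * (k + 2 * j + 3)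
      + b * (k + j + 1) + b * (k + j + 3 + k) ≤ 2 * card) :
    2 * ((k + j + 2) * n) ≤ 2 * card + (k + j + 3) * (k + j + 2) := by
  subst hn2
  nlinarith [Nat.mul_le_mul_left k hb1]

/-- Let `q ≥ 3`, `n ≥ 3q - 4`. If `G` is a graph on `n` vertices with minimum
degree at least `q` such that the common neighborhood of every pair of vertices
contains a clique on `q-2` vertices, then `G` has at least `(q-1)n - C(q,2)`
edges. -/
theorem stmt11 (q n : ℕ) (hq : 3 ≤ q) (hn : 3 * q - 4 ≤ n)
    (G : SimpleGraph (Fin n)) [DecidableRel G.Adj]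
    (hmindeg : q ≤ G.minDegree)
    (hclique : ∀ u v : Fin n, u ≠ v →
      ∃ S : Finset (Fin n), S.card = q - 2 ∧
        (∀ w ∈ S, G.Adj u w ∧ G.Adj v w) ∧
        (∀ w ∈ S, ∀ w' ∈ S, w ≠ w' → G.Adj w w')) :
    (q - 1) * n - q.choose 2 ≤ G.edgeFinset.card := by
  have hn0 : 0 < n := by omega
  have hne : Nonempty (Fin n) := ⟨⟨0, hn0⟩⟩
  obtain ⟨u, hu⟩ := G.exists_minimal_degree_vertex
  set d := G.degree u with hddef
  have hmind : ∀ v : Fin n, d ≤ G.degree v := fun v => hu ▸ G.minDegree_le_degree v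
  have hdq : q ≤ d := hu ▸ hmindeg
  have hsum : ∑ v, G.degree v = 2 * G.edgeFinset.card :=
    G.sum_degrees_eq_twice_card_edges
  -- useful: 2 * choose = q*(q-1)
  have hdvd : 2 ∣ q * (q - 1) := by
    have he := Nat.even_mul_succ_self (q - 1)
    rw [show q - 1 + 1 = q by omega] at he
    exact (mul_comm (q-1) q ▸ he).two_dvd
  have hc2 : q.choose 2 * 2 = q * (q - 1) := by
    rw [Nat.choose_two_right]
    exact Nat.div_mul_cancel hdvd
  by_cases hcase : 2 * q - 2 ≤ d
  · -- large minimum degree case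
    have h1 : n * (2 * q - 2) ≤ ∑ v, G.degree v := by
      calc n * (2 * q - 2) = ∑ _v : Fin n, (2 * q - 2) := by
            rw [Finset.sum_const, Finset.card_univ, Fintype.card_fin, smul_eq_mul]
        _ ≤ ∑ v, G.degree v :=
            Finset.sum_le_sum fun v _ => le_trans hcase (hmind v)
    have h2 : 2 * ((q - 1) * n) ≤ 2 * G.edgeFinset.card := by
      calc 2 * ((q - 1) * n) = n * (2 * q - 2) := by
            rw [show 2 * q - 2 = 2 * (q - 1) by omega]; ring
        _ ≤ ∑ v, G.degree v := h1
        _ = 2 * G.edgeFinset.card := hsum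
    have h3 : (q - 1) * n ≤ G.edgeFinset.card := by omega
    exact le_trans (Nat.sub_le _ _) h3
  -- main case : q ≤ d ≤ 2q-3
  push_neg at hcase
  set k := d - q with hkdef
  have hk : d = q + k := by omega
  have hkq : k + 3 ≤ q := by omega
  set N := G.neighborFinset u with hNdef
  have hNcard : N.card = d := rfl
  have huN : u ∉ N := G.notMem_neighborFinset_self u
  set A : Finset (Fin n) := insert u N with hAdef
  have hAcard : A.card = d + 1 := by
    rw [hAdef, Finset.card_insert_of_notMem huN, hNcard]
  set B : Finset (Fin n) := Finset.univ \ A with hBdef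
  have hAn : A.card ≤ n := by
    have := A.card_le_univ
    rwa [Fintype.card_fin] at this
  set b := B.card with hbdef
  have hbn : b + (d + 1) = n := by
    have : b = n - A.card := by
      rw [hbdef, hBdef, Finset.card_sdiff_of_subset (Finset.subset_univ A),
        Finset.card_univ, Fintype.card_fin]
    omega
  -- the clique Q inside N
  have hNne : N.Nonempty := by
    rw [← Finset.card_pos, hNcard]; omega
  obtain ⟨w0, hw0⟩ := hNne
  have hadj0 : G.Adj u w0 := (SimpleGraph.mem_neighborFinset _ _ _).1 hw0
  obtain ⟨S0, hS0card, hS0adj, hS0cl⟩ := hclique u w0 hadj0.ne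
  set Q : Finset (Fin n) := insert w0 S0 with hQdef
  have hS0N : S0 ⊆ N := fun w hw =>
    (SimpleGraph.mem_neighborFinset _ _ _).2 (hS0adj w hw).1
  have hw0S0 : w0 ∉ S0 := fun h => G.irrefl (hS0adj w0 h).2
  have hQcard : Q.card = q - 1 := by
    rw [hQdef, Finset.card_insert_of_notMem hw0S0, hS0card]; omega
  have hQN : Q ⊆ N := by
    rw [hQdef]; exact Finset.insert_subset hw0 hS0N
  have hQcl : ∀ x ∈ Q, ∀ y ∈ Q, x ≠ y → G.Adj x y := by
    intro x hx y hy hxy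
    rw [hQdef, Finset.mem_insert] at hx hy
    rcases hx with hx | hx <;> rcases hy with hy | hy
    · exact absurd (hx.trans hy.symm) hxy
    · exact hx ▸ (hS0adj y hy).2
    · exact hy ▸ (G.adj_symm (hS0adj x hx).2)
    · exact hS0cl x hx y hy hxy
  set T : Finset (Fin n) := N \ Q with hTdef
  have hTQ : Disjoint Q T := Finset.disjoint_sdiff
  have hTcard : T.card = k + 1 := by
    rw [hTdef, Finset.card_sdiff_of_subset hQN, hNcard, hQcard]; omega
  have hTN : T ⊆ N := Finset.sdiff_subset
  -- degree split
  have hdegsplit : ∀ v : Fin n,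
      G.degree v = (G.neighborFinset v ∩ A).card + (G.neighborFinset v ∩ B).card := by
    intro v
    have h1 : G.neighborFinset v ∩ B = G.neighborFinset v \ A := by
      ext y
      simp [hBdef]
    rw [h1, ← SimpleGraph.card_neighborFinset_eq_degree,
      Finset.card_inter_add_card_sdiff]
  -- main identity : 2m = ΣA dA + ΣB dA + ΣB deg
  have hid : 2 * G.edgeFinset.card =
      (∑ x ∈ A, (G.neighborFinset x ∩ A).card) +
      (∑ v ∈ B, (G.neighborFinset v ∩ A).card) + ∑ v ∈ B, G.degree v := by
    have h2 : ∑ v ∈ B, G.degree v + ∑ v ∈ A, G.degree v = ∑ v, G.degree v := by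
      rw [hBdef]; exact Finset.sum_sdiff (Finset.subset_univ A)
    have h3 : ∑ v ∈ A, G.degree v =
        ∑ x ∈ A, (G.neighborFinset x ∩ A).card +
        ∑ x ∈ A, (G.neighborFinset x ∩ B).card := by
      rw [← Finset.sum_add_distrib]
      exact Finset.sum_congr rfl fun v _ => hdegsplit v
    have h4 := dbl_count G A B
    omega
  -- bound : each v in B has ≥ q-2 neighbors in A
  have hBlow : ∀ v ∈ B, q - 2 ≤ (G.neighborFinset v ∩ A).card := by
    intro v hv
    have hvA : v ∉ A := (Finset.mem_sdiff.1 hv).2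
    have hvu : u ≠ v := fun h => hvA (h ▸ Finset.mem_insert_self u N)
    obtain ⟨S, hScard, hSadj, _⟩ := hclique u v hvu
    have hsub : S ⊆ G.neighborFinset v ∩ A := by
      intro w hw
      refine Finset.mem_inter.2 ⟨(SimpleGraph.mem_neighborFinset _ _ _).2
        (hSadj w hw).2, ?_⟩
      exact Finset.mem_insert_of_mem
        ((SimpleGraph.mem_neighborFinset _ _ _).2 (hSadj w hw).1)
    calc q - 2 = S.card := hScard.symm
      _ ≤ _ := Finset.card_le_card hsub
  have hBsum : b * (q - 2) ≤ ∑ v ∈ B, (G.neighborFinset v ∩ A).card := by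
    calc b * (q - 2) = ∑ _v ∈ B, (q - 2) := by rw [Finset.sum_const, smul_eq_mul]
      _ ≤ _ := Finset.sum_le_sum hBlow
  have hBdeg : b * d ≤ ∑ v ∈ B, G.degree v := by
    calc b * d = ∑ _v ∈ B, d := by rw [Finset.sum_const, smul_eq_mul]
      _ ≤ _ := Finset.sum_le_sum fun v _ => hmind v
  -- bound on ΣA dA
  have hNA : N ⊆ A := Finset.subset_insert u N
  have huA : u ∈ A := Finset.mem_insert_self u N
  have hQlow : ∀ x ∈ Q, (q - 1) + (G.neighborFinset x ∩ T).card ≤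
      (G.neighborFinset x ∩ A).card := by
    intro x hx
    have hxN : x ∈ N := hQN hx
    have hxu : G.Adj x u := G.adj_symm ((SimpleGraph.mem_neighborFinset _ _ _).1 hxN)
    have hsub : insert u (Q.erase x ∪ (G.neighborFinset x ∩ T)) ⊆
        G.neighborFinset x ∩ A := by
      intro y hy
      rcases Finset.mem_insert.1 hy with hy | hy
      · subst hy
        exact Finset.mem_inter.2 ⟨(SimpleGraph.mem_neighborFinset _ _ _).2 hxu, huA⟩
      rcases Finset.mem_union.1 hy with hy | hy
      · have hyQ := Finset.mem_of_mem_erase hy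
        have hxy : x ≠ y := (Finset.ne_of_mem_erase hy).symm
        exact Finset.mem_inter.2 ⟨(SimpleGraph.mem_neighborFinset _ _ _).2
          (hQcl x hx y hyQ hxy), hNA (hQN hyQ)⟩
      · exact Finset.mem_inter.2 ⟨(Finset.mem_inter.1 hy).1,
          hNA (hTN (Finset.mem_inter.1 hy).2)⟩
    have hdisj1 : Disjoint (Q.erase x) (G.neighborFinset x ∩ T) :=
      Finset.disjoint_left.2 fun y hy hy' =>
        (Finset.disjoint_left.1 hTQ (Finset.mem_of_mem_erase hy))
          (Finset.mem_inter.1 hy').2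
    have huNnot : u ∉ Q.erase x ∪ (G.neighborFinset x ∩ T) := by
      intro h
      rcases Finset.mem_union.1 h with h | h
      · exact huN (hQN (Finset.mem_of_mem_erase h))
      · exact huN (hTN (Finset.mem_inter.1 h).2)
    have hcard : (insert u (Q.erase x ∪ (G.neighborFinset x ∩ T))).card =
        (q - 2) + (G.neighborFinset x ∩ T).card + 1 := by
      rw [Finset.card_insert_of_notMem huNnot,
        Finset.card_union_of_disjoint hdisj1, Finset.card_erase_of_mem hx, hQcard]
      omega
    calc (q - 1) + (G.neighborFinset x ∩ T).card
        = (q - 2) + (G.neighborFinset x ∩ T).card + 1 := by omega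
      _ = _ := hcard.symm
      _ ≤ _ := Finset.card_le_card hsub
  have hTlow : ∀ t ∈ T, 1 + ((G.neighborFinset t ∩ Q).card +
      (G.neighborFinset t ∩ T).card) ≤ (G.neighborFinset t ∩ A).card := by
    intro t ht
    have htN : t ∈ N := hTN ht
    have htu : G.Adj t u := G.adj_symm ((SimpleGraph.mem_neighborFinset _ _ _).1 htN)
    have hsub : insert u ((G.neighborFinset t ∩ Q) ∪ (G.neighborFinset t ∩ T)) ⊆
        G.neighborFinset t ∩ A := by
      intro y hy
      rcases Finset.mem_insert.1 hy with hy | hy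
      · subst hy
        exact Finset.mem_inter.2 ⟨(SimpleGraph.mem_neighborFinset _ _ _).2 htu, huA⟩
      rcases Finset.mem_union.1 hy with hy | hy
      · exact Finset.mem_inter.2 ⟨(Finset.mem_inter.1 hy).1,
          hNA (hQN (Finset.mem_inter.1 hy).2)⟩
      · exact Finset.mem_inter.2 ⟨(Finset.mem_inter.1 hy).1,
          hNA (hTN (Finset.mem_inter.1 hy).2)⟩
    have hdisj1 : Disjoint (G.neighborFinset t ∩ Q) (G.neighborFinset t ∩ T) :=
      Finset.disjoint_left.2 fun y hy hy' =>
        (Finset.disjoint_left.1 hTQ (Finset.mem_inter.1 hy).2)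
          (Finset.mem_inter.1 hy').2
    have huNnot : u ∉ (G.neighborFinset t ∩ Q) ∪ (G.neighborFinset t ∩ T) := by
      intro h
      rcases Finset.mem_union.1 h with h | h
      · exact huN (hQN (Finset.mem_inter.1 h).2)
      · exact huN (hTN (Finset.mem_inter.1 h).2)
    have hcard : (insert u ((G.neighborFinset t ∩ Q) ∪ (G.neighborFinset t ∩ T))).card
        = ((G.neighborFinset t ∩ Q).card + (G.neighborFinset t ∩ T).card) + 1 := by
      rw [Finset.card_insert_of_notMem huNnot, Finset.card_union_of_disjoint hdisj1]
    calc 1 + ((G.neighborFinset t ∩ Q).card + (G.neighborFinset t ∩ T).card)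
        = ((G.neighborFinset t ∩ Q).card + (G.neighborFinset t ∩ T).card) + 1 := by
          omega
      _ = _ := hcard.symm
      _ ≤ _ := Finset.card_le_card hsub
  -- per-t : common neighborhood bound and T-internal bound
  have hTper : ∀ t ∈ T, 2 * q - 3 - k ≤
      1 + 2 * (G.neighborFinset t ∩ Q).card + (G.neighborFinset t ∩ T).card := by
    intro t ht
    have htN : t ∈ N := hTN ht
    have htu : u ≠ t := fun h => huN (h ▸ htN)
    obtain ⟨S, hScard, hSadj, _⟩ := hclique u t htu
    have hsub : S ⊆ G.neighborFinset t ∩ N := by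
      intro w hw
      exact Finset.mem_inter.2 ⟨(SimpleGraph.mem_neighborFinset _ _ _).2
        (hSadj w hw).2, (SimpleGraph.mem_neighborFinset _ _ _).2 (hSadj w hw).1⟩
    have h1 : q - 2 ≤ (G.neighborFinset t ∩ N).card :=
      hScard ▸ Finset.card_le_card hsub
    have hNsplit : G.neighborFinset t ∩ N =
        (G.neighborFinset t ∩ Q) ∪ (G.neighborFinset t ∩ T) := by
      rw [← Finset.inter_union_distrib_left]
      congr 1
      rw [hTdef, Finset.union_sdiff_of_subset hQN]
    have h2 : (G.neighborFinset t ∩ N).card ≤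
        (G.neighborFinset t ∩ Q).card + (G.neighborFinset t ∩ T).card := by
      rw [hNsplit]; exact Finset.card_union_le _ _
    have h3 : (G.neighborFinset t ∩ T).card ≤ k := by
      have hsub2 : G.neighborFinset t ∩ T ⊆ T.erase t := by
        intro y hy
        refine Finset.mem_erase.2 ⟨?_, (Finset.mem_inter.1 hy).2⟩
        intro h
        exact G.irrefl (h ▸ (SimpleGraph.mem_neighborFinset _ _ _).1
          (Finset.mem_inter.1 hy).1)
      calc (G.neighborFinset t ∩ T).card ≤ (T.erase t).card :=
            Finset.card_le_card hsub2
        _ = k := by rw [Finset.card_erase_of_mem ht, hTcard]; omega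
    omega
  -- assemble ΣA dA
  have hSA : d + (q - 1) * (q - 1) + (k + 1) * (2 * q - 3 - k) ≤
      ∑ x ∈ A, (G.neighborFinset x ∩ A).card := by
    have hsplitA : ∑ x ∈ A, (G.neighborFinset x ∩ A).card =
        (G.neighborFinset u ∩ A).card + ∑ x ∈ N, (G.neighborFinset x ∩ A).card := by
      rw [hAdef, Finset.sum_insert huN]
    have hdAu : (G.neighborFinset u ∩ A).card = d := by
      have : G.neighborFinset u ∩ A = N := by
        rw [hAdef]
        exact Finset.inter_eq_left.2 (Finset.subset_insert u _)
      rw [this, hNcard]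
    have hsplitN : ∑ x ∈ N, (G.neighborFinset x ∩ A).card =
        ∑ t ∈ T, (G.neighborFinset t ∩ A).card +
        ∑ x ∈ Q, (G.neighborFinset x ∩ A).card := by
      rw [hTdef]
      exact (Finset.sum_sdiff hQN).symm
    have hQsum : (q - 1) * (q - 1) + ∑ x ∈ Q, (G.neighborFinset x ∩ T).card ≤
        ∑ x ∈ Q, (G.neighborFinset x ∩ A).card := by
      calc (q - 1) * (q - 1) + ∑ x ∈ Q, (G.neighborFinset x ∩ T).card
          = ∑ x ∈ Q, ((q - 1) + (G.neighborFinset x ∩ T).card) := by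
            rw [Finset.sum_add_distrib, Finset.sum_const, hQcard, smul_eq_mul]
        _ ≤ _ := Finset.sum_le_sum hQlow
    have hTsum : (k + 1) + (∑ t ∈ T, (G.neighborFinset t ∩ Q).card +
        ∑ t ∈ T, (G.neighborFinset t ∩ T).card) ≤
        ∑ t ∈ T, (G.neighborFinset t ∩ A).card := by
      calc (k + 1) + (∑ t ∈ T, (G.neighborFinset t ∩ Q).card +
            ∑ t ∈ T, (G.neighborFinset t ∩ T).card)
          = ∑ t ∈ T, (1 + ((G.neighborFinset t ∩ Q).card +
              (G.neighborFinset t ∩ T).card)) := by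
            rw [Finset.sum_add_distrib, Finset.sum_add_distrib, Finset.sum_const,
              hTcard, smul_eq_mul, mul_one]
        _ ≤ _ := Finset.sum_le_sum hTlow
    have hQT : ∑ x ∈ Q, (G.neighborFinset x ∩ T).card =
        ∑ t ∈ T, (G.neighborFinset t ∩ Q).card := dbl_count G Q T
    have hTtot : (k + 1) * (2 * q - 3 - k) ≤
        (k + 1) + (2 * ∑ t ∈ T, (G.neighborFinset t ∩ Q).card +
          ∑ t ∈ T, (G.neighborFinset t ∩ T).card) := by
      calc (k + 1) * (2 * q - 3 - k) = ∑ _t ∈ T, (2 * q - 3 - k) := by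
            rw [Finset.sum_const, hTcard, smul_eq_mul]
        _ ≤ ∑ t ∈ T, (1 + 2 * (G.neighborFinset t ∩ Q).card +
              (G.neighborFinset t ∩ T).card) := Finset.sum_le_sum hTper
        _ = (k + 1) + (2 * ∑ t ∈ T, (G.neighborFinset t ∩ Q).card +
              ∑ t ∈ T, (G.neighborFinset t ∩ T).card) := by
            rw [Finset.sum_add_distrib, Finset.sum_add_distrib, Finset.sum_const,
              hTcard, smul_eq_mul, mul_one, ← Finset.mul_sum]
            omega
    omega
  -- total lower bound on 2m
  have htotal : d + (q - 1) * (q - 1) + (k + 1) * (2 * q - 3 - k) +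
      b * (q - 2) + b * d ≤ 2 * G.edgeFinset.card := by omega
  -- final arithmetic
  have hb1 : k + 1 ≤ b := by omega
  have e1 : q - 1 = k + (q - k - 3) + 2 := by omega
  have e2 : q - 2 = k + (q - k - 3) + 1 := by omega
  have e3 : 2 * q - 3 - k = k + 2 * (q - k - 3) + 3 := by omega
  set j := q - k - 3 with hjdef
  have hq' : q = k + j + 3 := by omega
  have hn' : n = b + q + k + 1 := by omega
  have hn2 : n = b + 2 * k + j + 4 := by omega
  have hkey : 2 * ((q - 1) * n) ≤ 2 * G.edgeFinset.card + q * (q - 1) := by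
    rw [e1, e2, e3, hk, hq'] at htotal
    rw [e1, hq']
    exact arith_final k j b _ n hb1 hn2 htotal
  rw [Nat.sub_le_iff_le_add]
  omega
end

section
/- If G is an n-vertex graph with diameter 2 and radius 2 satisfying the triangle-property (every edge lies in a triangle), then G has at least 2n − 3 edges. -/
open Finset

set_option linter.unusedSectionVars false
set_option linter.unusedVariables false
set_option maxHeartbeats 1000000

namespace St12

variable {V : Type*} [DecidableEq V] [Fintype V]

def NS (G : SimpleGraph V) [DecidableRel G.Adj] (S : Finset V) (x : V) : Finset V :=
  S.filter (fun y => G.Adj x y)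

lemma mem_NS {G : SimpleGraph V} [DecidableRel G.Adj] {S : Finset V} {x y : V} :
    y ∈ NS G S x ↔ y ∈ S ∧ G.Adj x y := Finset.mem_filter


lemma coreIII (G : SimpleGraph V) [DecidableRel G.Adj] (S A B C : Finset V)
    (hAS : A ⊆ S) (hBS : B ⊆ S) (hCS : C ⊆ S)
    (hABd : Disjoint A B) (hACd : Disjoint A C) (hBCd : Disjoint B C)
    (hAne : A.Nonempty) (hBne : B.Nonempty)
    (hA1 : ∀ u ∈ A, ∃ x ∈ NS G S u, x ∈ A ∪ C)
    (hB1 : ∀ t ∈ B, ∃ x ∈ NS G S t, x ∈ B ∪ C)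
    (hA2 : ∀ u ∈ A, (NS G S u).card = 1 → ∀ w ∈ NS G S u, ∀ t ∈ B, G.Adj w t)
    (hB2 : ∀ t ∈ B, (NS G S t).card = 1 → ∀ w ∈ NS G S t, ∀ s ∈ A, G.Adj w s)
    (hIIIA : ∀ u ∈ A, (NS G S u).card = 1 → ∀ w ∈ NS G S u, w ∈ A → 2 ≤ B.card)
    (hIIIB : ∀ t ∈ B, (NS G S t).card = 1 → ∀ w ∈ NS G S t, w ∈ B → 2 ≤ A.card) :
    2 * (A.card + B.card) ≤ ∑ x ∈ S, (NS G S x).card := by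
  classical
  set P : Finset V := (A ∪ B).filter (fun x => (NS G S x).card = 1) with hPdef
  have hPmem : ∀ x, x ∈ P ↔ (x ∈ A ∪ B ∧ (NS G S x).card = 1) := fun x => Finset.mem_filter
  have hABS : ∀ x ∈ A ∪ B, x ∈ S := by
    intro x hx; rcases Finset.mem_union.mp hx with h | h
    exacts [hAS h, hBS h]
  have hsymmNS : ∀ {x y : V}, x ∈ S → y ∈ NS G S x → x ∈ NS G S y := by
    intro x y hxS hy
    exact mem_NS.mpr ⟨hxS, ((mem_NS.mp hy).2).symm⟩
  have hge1 : ∀ x ∈ A ∪ B, 1 ≤ (NS G S x).card := by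
    intro x hx
    rcases Finset.mem_union.mp hx with h | h
    · obtain ⟨y, hy, -⟩ := hA1 x h; exact Finset.card_pos.mpr ⟨y, hy⟩
    · obtain ⟨y, hy, -⟩ := hB1 x h; exact Finset.card_pos.mpr ⟨y, hy⟩
  have hge2 : ∀ x ∈ A ∪ B, x ∉ P → 2 ≤ (NS G S x).card := by
    intro x hx hxP
    have h1 := hge1 x hx
    have : (NS G S x).card ≠ 1 := fun hc => hxP ((hPmem x).mpr ⟨hx, hc⟩)
    omega
  have hubex : ∀ x : V, ∃ w : V, x ∈ P →
      w ∈ NS G S x ∧ (∀ y ∈ NS G S x, y = w) ∧ w ∉ P ∧ w ∈ S := by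
    intro x
    by_cases hx : x ∈ P
    · obtain ⟨hxAB, hc⟩ := (hPmem x).mp hx
      obtain ⟨w, hw⟩ := Finset.card_eq_one.mp hc
      have hwNS : w ∈ NS G S x := by rw [hw]; exact Finset.mem_singleton_self w
      have huniq : ∀ y ∈ NS G S x, y = w := by
        intro y hy; rwa [hw, Finset.mem_singleton] at hy
      have hwS : w ∈ S := (mem_NS.mp hwNS).1
      have hxS : x ∈ S := hABS x hxAB
      have hxNSw : x ∈ NS G S w := hsymmNS hxS hwNS
      have hwP : w ∉ P := by
        rcases Finset.mem_union.mp hxAB with hxA | hxB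
        · obtain ⟨t, htB⟩ := hBne
          have htNS : t ∈ NS G S w := mem_NS.mpr ⟨hBS htB, hA2 x hxA hc w hwNS t htB⟩
          have hxt : x ≠ t := fun he => Finset.disjoint_left.mp hABd hxA (he ▸ htB)
          intro hwP'
          have h1 := (hPmem w).mp hwP'
          have h2 : 2 ≤ (NS G S w).card := Finset.one_lt_card.mpr ⟨x, hxNSw, t, htNS, hxt⟩
          omega
        · obtain ⟨s, hsA⟩ := hAne
          have hsNS : s ∈ NS G S w := mem_NS.mpr ⟨hAS hsA, hB2 x hxB hc w hwNS s hsA⟩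
          have hxs : x ≠ s := fun he => Finset.disjoint_left.mp hABd (he ▸ hsA) hxB
          intro hwP'
          have h1 := (hPmem w).mp hwP'
          have h2 : 2 ≤ (NS G S w).card := Finset.one_lt_card.mpr ⟨x, hxNSw, s, hsNS, hxs⟩
          omega
      exact ⟨w, fun _ => ⟨hwNS, huniq, hwP, hwS⟩⟩
    · exact ⟨x, fun h => absurd h hx⟩
  choose hub hhub using hubex
  have pickex : ∀ x : V, ∃ p : V × V, x ∈ A ∪ B → x ∉ P →
      p.1 ∈ NS G S x ∧ p.1 ∉ P ∧ p.2 ∈ NS G S x ∧ p.2 ∉ P ∧ p.1 ≠ p.2 := by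
    intro x
    by_cases hx : x ∈ A ∪ B ∧ x ∉ P
    · obtain ⟨hxAB, hxP⟩ := hx
      have hxS : x ∈ S := hABS x hxAB
      by_cases hcl : ∃ y ∈ NS G S x, y ∈ P
      · obtain ⟨y, hyNS, hyP⟩ := hcl
        obtain ⟨hyAB, hyc⟩ := (hPmem y).mp hyP
        have hxNSy : x ∈ NS G S y := hsymmNS hxS hyNS
        rcases Finset.mem_union.mp hyAB with hyA | hyB
        · obtain ⟨w', hw'NS, hw'AC⟩ := hA1 y hyA
          have hw'x : w' = x := by
            obtain ⟨w0, hw0⟩ := Finset.card_eq_one.mp hyc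
            have h1 : w' = w0 := Finset.mem_singleton.mp (hw0 ▸ hw'NS)
            have h2 : x = w0 := Finset.mem_singleton.mp (hw0 ▸ hxNSy)
            rw [h1, ← h2]
          have hxAC : x ∈ A ∪ C := hw'x ▸ hw'AC
          have hxA : x ∈ A := by
            rcases Finset.mem_union.mp hxAC with h | h
            · exact h
            · rcases Finset.mem_union.mp hxAB with h' | h'
              · exact h'
              · exact absurd h (fun hc => Finset.disjoint_left.mp hBCd h' hc)
          have hBcard : 2 ≤ B.card := hIIIA y hyA hyc x hxNSy hxA
          have hBP : ∀ t ∈ B, t ∉ P := by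
            intro t htB htP
            obtain ⟨-, htc⟩ := (hPmem t).mp htP
            have hxt : x ∈ NS G S t :=
              mem_NS.mpr ⟨hxS, (hA2 y hyA hyc x hxNSy t htB).symm⟩
            obtain ⟨y', hy'NS, hy'BC⟩ := hB1 t htB
            have hy'x : y' ≠ x := by
              intro he
              rcases Finset.mem_union.mp hy'BC with h | h
              · exact Finset.disjoint_left.mp hABd hxA (he ▸ h)
              · exact Finset.disjoint_left.mp hACd hxA (he ▸ h)
            have h2 : 2 ≤ (NS G S t).card := Finset.one_lt_card.mpr ⟨y', hy'NS, x, hxt, hy'x⟩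
            omega
          obtain ⟨t1, ht1, t2, ht2, hne⟩ := Finset.one_lt_card.mp hBcard
          refine ⟨(t1, t2), fun _ _ => ?_⟩
          have h1 : t1 ∈ NS G S x := mem_NS.mpr ⟨hBS ht1, hA2 y hyA hyc x hxNSy t1 ht1⟩
          have h2 : t2 ∈ NS G S x := mem_NS.mpr ⟨hBS ht2, hA2 y hyA hyc x hxNSy t2 ht2⟩
          exact ⟨h1, hBP t1 ht1, h2, hBP t2 ht2, hne⟩
        · obtain ⟨w', hw'NS, hw'BC⟩ := hB1 y hyB
          have hw'x : w' = x := by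
            obtain ⟨w0, hw0⟩ := Finset.card_eq_one.mp hyc
            have h1 : w' = w0 := Finset.mem_singleton.mp (hw0 ▸ hw'NS)
            have h2 : x = w0 := Finset.mem_singleton.mp (hw0 ▸ hxNSy)
            rw [h1, ← h2]
          have hxBC : x ∈ B ∪ C := hw'x ▸ hw'BC
          have hxB : x ∈ B := by
            rcases Finset.mem_union.mp hxBC with h | h
            · exact h
            · rcases Finset.mem_union.mp hxAB with h' | h'
              · exact absurd h (fun hc => Finset.disjoint_left.mp hACd h' hc)
              · exact h'
          have hAcard : 2 ≤ A.card := hIIIB y hyB hyc x hxNSy hxB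
          have hAP : ∀ s ∈ A, s ∉ P := by
            intro s hsA hsP
            obtain ⟨-, hsc⟩ := (hPmem s).mp hsP
            have hxs : x ∈ NS G S s :=
              mem_NS.mpr ⟨hxS, (hB2 y hyB hyc x hxNSy s hsA).symm⟩
            obtain ⟨y', hy'NS, hy'AC⟩ := hA1 s hsA
            have hy'x : y' ≠ x := by
              intro he
              rcases Finset.mem_union.mp hy'AC with h | h
              · exact Finset.disjoint_left.mp hABd (he ▸ h) hxB
              · exact Finset.disjoint_left.mp hBCd hxB (he ▸ h)
            have h2 : 2 ≤ (NS G S s).card := Finset.one_lt_card.mpr ⟨y', hy'NS, x, hxs, hy'x⟩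
            omega
          obtain ⟨s1, hs1, s2, hs2, hne⟩ := Finset.one_lt_card.mp hAcard
          refine ⟨(s1, s2), fun _ _ => ?_⟩
          have h1 : s1 ∈ NS G S x := mem_NS.mpr ⟨hAS hs1, hB2 y hyB hyc x hxNSy s1 hs1⟩
          have h2 : s2 ∈ NS G S x := mem_NS.mpr ⟨hAS hs2, hB2 y hyB hyc x hxNSy s2 hs2⟩
          exact ⟨h1, hAP s1 hs1, h2, hAP s2 hs2, hne⟩
      · push_neg at hcl
        obtain ⟨y1, hy1, y2, hy2, hne⟩ := Finset.one_lt_card.mp (hge2 x hxAB hxP)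
        exact ⟨(y1, y2), fun _ _ => ⟨hy1, hcl y1 hy1, hy2, hcl y2 hy2, hne⟩⟩
    · exact ⟨(x, x), fun h1 h2 => absurd ⟨h1, h2⟩ hx⟩
  choose pk hpk using pickex
  set f : V × Bool → Σ _ : V, V := fun p =>
    if p.1 ∈ P then (if p.2 then ⟨p.1, hub p.1⟩ else ⟨hub p.1, p.1⟩)
    else ⟨p.1, if p.2 then (pk p.1).1 else (pk p.1).2⟩ with hfdef
  have hcard : ((A ∪ B) ×ˢ (Finset.univ : Finset Bool)).card = 2 * (A.card + B.card) := by
    rw [Finset.card_product, Finset.card_union_of_disjoint hABd, Finset.card_univ,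
      Fintype.card_bool]
    ring
  have hmaps : ∀ p ∈ (A ∪ B) ×ˢ (Finset.univ : Finset Bool),
      f p ∈ S.sigma (fun x => NS G S x) := by
    rintro ⟨x, i⟩ hp
    have hxAB : x ∈ A ∪ B := (Finset.mem_product.mp hp).1
    have hxS : x ∈ S := hABS x hxAB
    by_cases hxP : x ∈ P
    · obtain ⟨hw1, -, -, hw4⟩ := hhub x hxP
      cases i <;> simp only [hfdef, hxP, if_true, if_false, Bool.false_eq_true, ite_true,
        ite_false] <;> rw [Finset.mem_sigma]
      · exact ⟨hw4, hsymmNS hxS hw1⟩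
      · exact ⟨hxS, hw1⟩
    · obtain ⟨h1, -, h3, -, -⟩ := hpk x hxAB hxP
      cases i <;> simp only [hfdef, hxP, if_true, if_false, Bool.false_eq_true, ite_true,
        ite_false] <;> rw [Finset.mem_sigma]
      · exact ⟨hxS, h3⟩
      · exact ⟨hxS, h1⟩
  have hdec : ∀ p ∈ (A ∪ B) ×ˢ (Finset.univ : Finset Bool),
      (fun d : Σ _ : V, V =>
        if d.1 ∈ P then (d.1, true)
        else if d.2 ∈ P then (d.2, false)
        else (d.1, decide ((pk d.1).1 = d.2))) (f p) = p := by
    rintro ⟨x, i⟩ hp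
    have hxAB : x ∈ A ∪ B := (Finset.mem_product.mp hp).1
    by_cases hxP : x ∈ P
    · obtain ⟨hw1, -, hw3, -⟩ := hhub x hxP
      cases i
      · simp [hfdef, hxP, hw3]
      · simp [hfdef, hxP]
    · obtain ⟨h1, h2, h3, h4, h5⟩ := hpk x hxAB hxP
      cases i
      · simp [hfdef, hxP, h4, h5]
      · simp [hfdef, hxP, h2]
  have hinj : Set.InjOn f ↑((A ∪ B) ×ˢ (Finset.univ : Finset Bool)) := by
    intro p hp q hq he
    have d1 := hdec p (by exact_mod_cast hp)
    have d2 := hdec q (by exact_mod_cast hq)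
    rw [← d1, ← d2, he]
  have hfin := Finset.card_le_card_of_injOn f hmaps hinj
  rw [hcard, Finset.card_sigma] at hfin
  exact hfin

lemma coreSpecial (G : SimpleGraph V) [DecidableRel G.Adj] (S A B C : Finset V)
    (hAS : A ⊆ S) (hBS : B ⊆ S) (hCS : C ⊆ S)
    (hABd : Disjoint A B) (hACd : Disjoint A C) (hBCd : Disjoint B C)
    (hA1 : ∀ u ∈ A, ∃ x ∈ NS G S u, x ∈ A ∪ C)
    (hB1 : ∀ t ∈ B, ∃ x ∈ NS G S t, x ∈ B ∪ C)
    (hA2 : ∀ u ∈ A, (NS G S u).card = 1 → ∀ w ∈ NS G S u, ∀ t ∈ B, G.Adj w t)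
    (hsp : ∃ u ∈ A, (NS G S u).card = 1 ∧ ∃ w ∈ NS G S u, w ∈ A)
    (hBcard : B.card = 1) :
    2 * (A.card + B.card) ≤ ∑ x ∈ S, (NS G S x).card := by
  classical
  set P : Finset V := (A ∪ B).filter (fun x => (NS G S x).card = 1) with hPdef
  have hPmem : ∀ x, x ∈ P ↔ (x ∈ A ∪ B ∧ (NS G S x).card = 1) := fun x => Finset.mem_filter
  have hABS : ∀ x ∈ A ∪ B, x ∈ S := by
    intro x hx; rcases Finset.mem_union.mp hx with h | h
    exacts [hAS h, hBS h]
  have hsymmNS : ∀ {x y : V}, x ∈ S → y ∈ NS G S x → x ∈ NS G S y := by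
    intro x y hxS hy
    exact mem_NS.mpr ⟨hxS, ((mem_NS.mp hy).2).symm⟩
  -- the unique element of B
  obtain ⟨z, hBz⟩ := Finset.card_eq_one.mp hBcard
  have hzB : z ∈ B := by rw [hBz]; exact Finset.mem_singleton_self z
  have hzS : z ∈ S := hBS hzB
  have hzmem : ∀ t ∈ B, t = z := by
    intro t ht; rwa [hBz, Finset.mem_singleton] at ht
  obtain ⟨u₀, hu₀A, hu₀c, w₀, hw₀NS, hw₀A⟩ := hsp
  have hw₀S : w₀ ∈ S := (mem_NS.mp hw₀NS).1
  have hw₀z : G.Adj w₀ z := hA2 u₀ hu₀A hu₀c w₀ hw₀NS z hzB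
  obtain ⟨x₀, hx₀NS, hx₀BC⟩ := hB1 z hzB
  have hx₀S : x₀ ∈ S := (mem_NS.mp hx₀NS).1
  have hzx₀ : G.Adj z x₀ := (mem_NS.mp hx₀NS).2
  have hx₀C : x₀ ∈ C := by
    rcases Finset.mem_union.mp hx₀BC with h | h
    · exact absurd (hzmem _ h) (fun he => G.irrefl (he ▸ hzx₀))
    · exact h
  have hx₀A : x₀ ∉ A := fun h => Finset.disjoint_left.mp hACd h hx₀C
  have hx₀B : x₀ ∉ B := fun h => Finset.disjoint_left.mp hBCd h hx₀C
  have hx₀P : x₀ ∉ P := by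
    intro h
    rcases Finset.mem_union.mp ((hPmem x₀).mp h).1 with h' | h'
    exacts [hx₀A h', hx₀B h']
  have hw₀x₀ : w₀ ≠ x₀ := fun he => hx₀A (he ▸ hw₀A)
  have hzP : z ∉ P := by
    intro h
    have hc := ((hPmem z).mp h).2
    have h1 : w₀ ∈ NS G S z := mem_NS.mpr ⟨hw₀S, hw₀z.symm⟩
    have h2 : 2 ≤ (NS G S z).card := Finset.one_lt_card.mpr ⟨w₀, h1, x₀, hx₀NS, hw₀x₀⟩
    omega
  have hBPnone : ∀ t ∈ B, t ∉ P := by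
    intro t ht; rw [hzmem t ht]; exact hzP
  have hPA : ∀ x ∈ P, x ∈ A := by
    intro x hx
    rcases Finset.mem_union.mp ((hPmem x).mp hx).1 with h | h
    · exact h
    · exact absurd hx (hBPnone x h)
  have hge1 : ∀ x ∈ A ∪ B, 1 ≤ (NS G S x).card := by
    intro x hx
    rcases Finset.mem_union.mp hx with h | h
    · obtain ⟨y, hy, -⟩ := hA1 x h; exact Finset.card_pos.mpr ⟨y, hy⟩
    · obtain ⟨y, hy, -⟩ := hB1 x h; exact Finset.card_pos.mpr ⟨y, hy⟩
  have hge2 : ∀ x ∈ A ∪ B, x ∉ P → 2 ≤ (NS G S x).card := by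
    intro x hx hxP
    have h1 := hge1 x hx
    have : (NS G S x).card ≠ 1 := fun hc => hxP ((hPmem x).mpr ⟨hx, hc⟩)
    omega
  -- hub of a P vertex
  have hubex : ∀ x : V, ∃ w : V, x ∈ P →
      w ∈ NS G S x ∧ (∀ y ∈ NS G S x, y = w) ∧ w ∉ P ∧ w ∈ S ∧ G.Adj w z ∧ w ∉ B := by
    intro x
    by_cases hx : x ∈ P
    · have hxA : x ∈ A := hPA x hx
      have hc := ((hPmem x).mp hx).2
      obtain ⟨w, hw⟩ := Finset.card_eq_one.mp hc
      have hwNS : w ∈ NS G S x := by rw [hw]; exact Finset.mem_singleton_self w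
      have huniq : ∀ y ∈ NS G S x, y = w := by
        intro y hy; rwa [hw, Finset.mem_singleton] at hy
      have hwS : w ∈ S := (mem_NS.mp hwNS).1
      have hxS : x ∈ S := hAS hxA
      have hxNSw : x ∈ NS G S w := hsymmNS hxS hwNS
      have hwz : G.Adj w z := hA2 x hxA hc w hwNS z hzB
      obtain ⟨w', hw'NS, hw'AC⟩ := hA1 x hxA
      have hw'w : w' = w := huniq w' hw'NS
      have hwAC : w ∈ A ∪ C := hw'w ▸ hw'AC
      have hwB : w ∉ B := by
        intro hb
        rcases Finset.mem_union.mp hwAC with h | h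
        · exact Finset.disjoint_left.mp hABd h hb
        · exact Finset.disjoint_left.mp hBCd hb h
      have hwP : w ∉ P := by
        intro hwP'
        have hc' := ((hPmem w).mp hwP').2
        have hzNSw : z ∈ NS G S w := mem_NS.mpr ⟨hzS, hwz⟩
        have hxz : x ≠ z := fun he => Finset.disjoint_left.mp hABd hxA (he ▸ hzB)
        have h2 : 2 ≤ (NS G S w).card := Finset.one_lt_card.mpr ⟨x, hxNSw, z, hzNSw, hxz⟩
        omega
      exact ⟨w, fun _ => ⟨hwNS, huniq, hwP, hwS, hwz, hwB⟩⟩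
    · exact ⟨x, fun h => absurd h hx⟩
  choose hub hhub using hubex
  -- hub predicate
  set isHub : V → Prop := fun x => ∃ u ∈ P, x ∈ NS G S u with hisHubdef
  have hisHub : ∀ x, isHub x → G.Adj x z ∧ x ∉ P ∧ x ∉ B ∧ x ∈ S := by
    intro x hx
    obtain ⟨u, huP, hxNS⟩ := hx
    obtain ⟨hw1, hw2, hw3, hw4, hw5, hw6⟩ := hhub u huP
    have hxw : x = hub u := hw2 x hxNS
    exact ⟨hxw ▸ hw5, hxw ▸ hw3, hxw ▸ hw6, hxw ▸ hw4⟩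
  -- pick two distinct non-P neighbours for plain vertices
  have pickex : ∀ x : V, ∃ p : V × V, x ∈ A → x ∉ P → ¬ isHub x →
      p.1 ∈ NS G S x ∧ p.1 ∉ P ∧ p.2 ∈ NS G S x ∧ p.2 ∉ P ∧ p.1 ≠ p.2 := by
    intro x
    by_cases hx : x ∈ A ∧ x ∉ P ∧ ¬ isHub x
    · obtain ⟨hxA, hxP, hxH⟩ := hx
      have hxS : x ∈ S := hAS hxA
      have hnoP : ∀ y ∈ NS G S x, y ∉ P := by
        intro y hy hyP
        exact hxH ⟨y, hyP, hsymmNS hxS hy⟩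
      obtain ⟨y1, hy1, y2, hy2, hne⟩ :=
        Finset.one_lt_card.mp (hge2 x (Finset.mem_union_left _ hxA) hxP)
      exact ⟨(y1, y2), fun _ _ _ => ⟨hy1, hnoP y1 hy1, hy2, hnoP y2 hy2, hne⟩⟩
    · refine ⟨(x, x), fun h1 h2 h3 => absurd ⟨h1, h2, h3⟩ hx⟩
  choose pk hpk using pickex
  set f : V × Bool → Σ _ : V, V := fun p =>
    if p.1 ∈ P then (if p.2 then ⟨p.1, hub p.1⟩ else ⟨hub p.1, p.1⟩)
    else if p.1 ∈ B then (if p.2 then ⟨p.1, x₀⟩ else ⟨x₀, p.1⟩)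
    else if isHub p.1 then (if p.2 then ⟨p.1, z⟩ else ⟨z, p.1⟩)
    else ⟨p.1, if p.2 then (pk p.1).1 else (pk p.1).2⟩ with hfdef
  have hcard : ((A ∪ B) ×ˢ (Finset.univ : Finset Bool)).card = 2 * (A.card + B.card) := by
    rw [Finset.card_product, Finset.card_union_of_disjoint hABd, Finset.card_univ,
      Fintype.card_bool]
    ring
  have hmaps : ∀ p ∈ (A ∪ B) ×ˢ (Finset.univ : Finset Bool),
      f p ∈ S.sigma (fun x => NS G S x) := by
    rintro ⟨x, i⟩ hp
    have hxAB : x ∈ A ∪ B := (Finset.mem_product.mp hp).1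
    have hxS : x ∈ S := hABS x hxAB
    by_cases hxP : x ∈ P
    · obtain ⟨hw1, -, -, hw4, -, -⟩ := hhub x hxP
      cases i <;>
        simp only [hfdef, hxP, if_true, if_false, Bool.false_eq_true, ite_true, ite_false] <;>
        rw [Finset.mem_sigma]
      · exact ⟨hw4, hsymmNS hxS hw1⟩
      · exact ⟨hxS, hw1⟩
    · by_cases hxB : x ∈ B
      · obtain rfl : x = z := hzmem x hxB
        cases i <;>
          simp only [hfdef, hxP, hxB, if_true, if_false, Bool.false_eq_true, ite_true,
            ite_false, not_false_iff] <;> rw [Finset.mem_sigma]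
        · exact ⟨hx₀S, hsymmNS hzS hx₀NS⟩
        · exact ⟨hzS, hx₀NS⟩
      · have hxA : x ∈ A := by
          rcases Finset.mem_union.mp hxAB with h | h
          exacts [h, absurd h hxB]
        by_cases hxH : isHub x
        · obtain ⟨hh1, -, -, -⟩ := hisHub x hxH
          cases i <;>
            simp only [hfdef, hxP, hxB, hxH, if_true, if_false, Bool.false_eq_true, ite_true,
              ite_false, not_false_iff] <;> rw [Finset.mem_sigma]
          · exact ⟨hzS, hsymmNS hxS (mem_NS.mpr ⟨hzS, hh1⟩)⟩
          · exact ⟨hxS, mem_NS.mpr ⟨hzS, hh1⟩⟩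
        · obtain ⟨h1, -, h3, -, -⟩ := hpk x hxA hxP hxH
          cases i <;>
            simp only [hfdef, hxP, hxB, hxH, if_true, if_false, Bool.false_eq_true, ite_true,
              ite_false, not_false_iff] <;> rw [Finset.mem_sigma]
          · exact ⟨hxS, h3⟩
          · exact ⟨hxS, h1⟩
  have hdec : ∀ p ∈ (A ∪ B) ×ˢ (Finset.univ : Finset Bool),
      (fun d : Σ _ : V, V =>
        if d.1 ∈ P then (d.1, true)
        else if d.2 ∈ P then (d.2, false)
        else if d.1 ∈ B then (if d.2 ∈ A then (d.2, false) else (d.1, true))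
        else if d.2 ∈ B then
          (if d.1 ∈ A then
            (if isHub d.1 then (d.1, true) else (d.1, decide ((pk d.1).1 = d.2)))
          else (d.2, false))
        else (d.1, decide ((pk d.1).1 = d.2))) (f p) = p := by
    rintro ⟨x, i⟩ hp
    have hxAB : x ∈ A ∪ B := (Finset.mem_product.mp hp).1
    by_cases hxP : x ∈ P
    · obtain ⟨hw1, -, hw3, -, -, -⟩ := hhub x hxP
      cases i
      · simp [hfdef, hxP, hw3]
      · simp [hfdef, hxP]
    · by_cases hxB : x ∈ B
      · obtain rfl : x = z := hzmem x hxB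
        cases i
        · simp [hfdef, hxP, hxB, hx₀P, hx₀B, hx₀A]
        · simp [hfdef, hxP, hxB, hx₀P, hx₀A]
      · have hxA : x ∈ A := by
          rcases Finset.mem_union.mp hxAB with h | h
          exacts [h, absurd h hxB]
        by_cases hxH : isHub x
        · cases i
          · simp [hfdef, hxP, hxB, hxH, hzP, hzB, hxA]
          · simp [hfdef, hxP, hxB, hxH, hzP, hzB, hxA]
        · obtain ⟨h1, h2, h3, h4, h5⟩ := hpk x hxA hxP hxH
          cases i
          · by_cases hb : (pk x).2 ∈ B
            · simp [hfdef, hxP, hxB, hxH, h4, hb, hxA, h5]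
            · simp [hfdef, hxP, hxB, hxH, h4, hb, h5]
          · by_cases hb : (pk x).1 ∈ B
            · simp [hfdef, hxP, hxB, hxH, h2, hb, hxA]
            · simp [hfdef, hxP, hxB, hxH, h2, hb]
  have hinj : Set.InjOn f ↑((A ∪ B) ×ˢ (Finset.univ : Finset Bool)) := by
    intro p hp q hq he
    have d1 := hdec p (by exact_mod_cast hp)
    have d2 := hdec q (by exact_mod_cast hq)
    rw [← d1, ← d2, he]
  have hfin := Finset.card_le_card_of_injOn f hmaps hinj
  rw [hcard, Finset.card_sigma] at hfin
  exact hfin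

lemma core' (G : SimpleGraph V) [DecidableRel G.Adj] (S A B C : Finset V)
    (hAS : A ⊆ S) (hBS : B ⊆ S) (hCS : C ⊆ S)
    (hABd : Disjoint A B) (hACd : Disjoint A C) (hBCd : Disjoint B C)
    (hAne : A.Nonempty) (hBne : B.Nonempty)
    (hA1 : ∀ u ∈ A, ∃ x ∈ NS G S u, x ∈ A ∪ C)
    (hB1 : ∀ t ∈ B, ∃ x ∈ NS G S t, x ∈ B ∪ C)
    (hA2 : ∀ u ∈ A, (NS G S u).card = 1 → ∀ w ∈ NS G S u, ∀ t ∈ B, G.Adj w t)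
    (hB2 : ∀ t ∈ B, (NS G S t).card = 1 → ∀ w ∈ NS G S t, ∀ s ∈ A, G.Adj w s) :
    2 * (A.card + B.card) ≤ ∑ x ∈ S, (NS G S x).card := by
  classical
  by_cases hsA : (∃ u ∈ A, (NS G S u).card = 1 ∧ ∃ w ∈ NS G S u, w ∈ A) ∧ B.card = 1
  · exact coreSpecial G S A B C hAS hBS hCS hABd hACd hBCd hA1 hB1 hA2 hsA.1 hsA.2
  · by_cases hsB : (∃ t ∈ B, (NS G S t).card = 1 ∧ ∃ w ∈ NS G S t, w ∈ B) ∧ A.card = 1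
    · have h := coreSpecial G S B A C hBS hAS hCS hABd.symm hBCd hACd hB1 hA1 hB2 hsB.1 hsB.2
      omega
    · apply coreIII G S A B C hAS hBS hCS hABd hACd hBCd hAne hBne hA1 hB1 hA2 hB2
      · intro u huA hc w hw hwA
        have h1 : ∃ u ∈ A, (NS G S u).card = 1 ∧ ∃ w ∈ NS G S u, w ∈ A :=
          ⟨u, huA, hc, w, hw, hwA⟩
        have h2 : B.card ≠ 1 := fun hb => hsA ⟨h1, hb⟩
        have h3 : 1 ≤ B.card := Finset.card_pos.mpr hBne
        omega
      · intro t htB hc w hw hwB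
        have h1 : ∃ t ∈ B, (NS G S t).card = 1 ∧ ∃ w ∈ NS G S t, w ∈ B :=
          ⟨t, htB, hc, w, hw, hwB⟩
        have h2 : A.card ≠ 1 := fun hb => hsB ⟨h1, hb⟩
        have h3 : 1 ≤ A.card := Finset.card_pos.mpr hAne
        omega

lemma deg2 (G : SimpleGraph V) [DecidableRel G.Adj]
    (cn : ∀ u w : V, u ≠ w → ∃ x, G.Adj u x ∧ G.Adj w x)
    (nodom : ∀ w : V, ∃ u, u ≠ w ∧ ¬ G.Adj w u)
    (v a b : V) (hab : a ≠ b) (hN : G.neighborFinset v = {a, b}) :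
    4 * Fintype.card V ≤ (∑ x, G.degree x) + 6 := by
  classical
  have hva : G.Adj v a := by
    rw [← SimpleGraph.mem_neighborFinset, hN]; simp
  have hvb : G.Adj v b := by
    rw [← SimpleGraph.mem_neighborFinset, hN]; simp
  have hvx : ∀ x, G.Adj v x ↔ (x = a ∨ x = b) := by
    intro x; rw [← SimpleGraph.mem_neighborFinset, hN]; simp
  have hva' : v ≠ a := fun he => G.irrefl (he ▸ hva)
  have hvb' : v ≠ b := fun he => G.irrefl (he ▸ hvb)
  have hadjab : G.Adj a b := by
    obtain ⟨x, hx1, hx2⟩ := cn v a hva'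
    rcases (hvx x).mp hx1 with rfl | rfl
    · exact absurd hx2 (G.irrefl)
    · exact hx2
  set S : Finset V := Finset.univ \ {v, a, b} with hSdef
  have hSmem : ∀ x, x ∈ S ↔ (¬ x = v ∧ ¬ x = a ∧ ¬ x = b) := by
    intro x; simp [hSdef, not_or]
  set A : Finset V := S.filter (fun x => G.Adj a x ∧ ¬ G.Adj b x) with hAdef
  set B : Finset V := S.filter (fun x => G.Adj b x ∧ ¬ G.Adj a x) with hBdef
  set C : Finset V := S.filter (fun x => G.Adj a x ∧ G.Adj b x) with hCdef
  have hAS : A ⊆ S := Finset.filter_subset _ _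
  have hBS : B ⊆ S := Finset.filter_subset _ _
  have hCS : C ⊆ S := Finset.filter_subset _ _
  have hAmem : ∀ x, x ∈ A ↔ (x ∈ S ∧ G.Adj a x ∧ ¬ G.Adj b x) := fun x => Finset.mem_filter
  have hBmem : ∀ x, x ∈ B ↔ (x ∈ S ∧ G.Adj b x ∧ ¬ G.Adj a x) := fun x => Finset.mem_filter
  have hCmem : ∀ x, x ∈ C ↔ (x ∈ S ∧ G.Adj a x ∧ G.Adj b x) := fun x => Finset.mem_filter
  have hABd : Disjoint A B := by
    rw [Finset.disjoint_left]
    intro x hx hx'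
    exact ((hBmem x).mp hx').2.2 ((hAmem x).mp hx).2.1
  have hACd : Disjoint A C := by
    rw [Finset.disjoint_left]
    intro x hx hx'
    exact ((hAmem x).mp hx).2.2 ((hCmem x).mp hx').2.2
  have hBCd : Disjoint B C := by
    rw [Finset.disjoint_left]
    intro x hx hx'
    exact ((hBmem x).mp hx).2.2 ((hCmem x).mp hx').2.1
  have hSnv : ∀ x ∈ S, ¬ G.Adj v x := by
    intro x hx h
    obtain ⟨h1, h2, h3⟩ := (hSmem x).mp hx
    rcases (hvx x).mp h with rfl | rfl
    · exact h2 rfl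
    · exact h3 rfl
  have hcover : ∀ x ∈ S, G.Adj a x ∨ G.Adj b x := by
    intro x hx
    obtain ⟨hxv, hxa, hxb⟩ := (hSmem x).mp hx
    obtain ⟨y, hy1, hy2⟩ := cn v x (fun he => hxv he.symm)
    rcases (hvx y).mp hy1 with rfl | rfl
    · exact Or.inl hy2.symm
    · exact Or.inr hy2.symm
  have hpart : A ∪ B ∪ C = S := by
    apply Finset.ext
    intro x
    constructor
    · intro hx
      rcases Finset.mem_union.mp hx with hx' | hx'
      · rcases Finset.mem_union.mp hx' with h | h
        exacts [hAS h, hBS h]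
      · exact hCS hx'
    · intro hx
      by_cases h1 : G.Adj a x <;> by_cases h2 : G.Adj b x
      · exact Finset.mem_union_right _ ((hCmem x).mpr ⟨hx, h1, h2⟩)
      · exact Finset.mem_union_left _
          (Finset.mem_union_left _ ((hAmem x).mpr ⟨hx, h1, h2⟩))
      · exact Finset.mem_union_left _
          (Finset.mem_union_right _ ((hBmem x).mpr ⟨hx, h2, h1⟩))
      · rcases hcover x hx with h | h
        exacts [absurd h h1, absurd h h2]
  have hcardpart : A.card + B.card + C.card = S.card := by
    rw [← hpart, Finset.card_union_of_disjoint, Finset.card_union_of_disjoint hABd]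
    exact Finset.disjoint_union_left.mpr ⟨hACd, hBCd⟩
  have hAne : A.Nonempty := by
    obtain ⟨u, hu1, hu2⟩ := nodom b
    have huv : u ≠ v := fun he => hu2 (by rw [he]; exact hvb.symm)
    have hua : u ≠ a := fun he => hu2 (by rw [he]; exact hadjab.symm)
    have huS : u ∈ S := (hSmem u).mpr ⟨huv, hua, hu1⟩
    rcases hcover u huS with h | h
    · exact ⟨u, (hAmem u).mpr ⟨huS, h, fun hb => hu2 hb⟩⟩
    · exact absurd h (fun hb => hu2 hb)
  have hBne : B.Nonempty := by
    obtain ⟨u, hu1, hu2⟩ := nodom a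
    have huv : u ≠ v := fun he => hu2 (by rw [he]; exact hva.symm)
    have hub : u ≠ b := fun he => hu2 (by rw [he]; exact hadjab)
    have huS : u ∈ S := (hSmem u).mpr ⟨huv, hu1, hub⟩
    rcases hcover u huS with h | h
    · exact absurd h (fun ha => hu2 ha)
    · exact ⟨u, (hBmem u).mpr ⟨huS, h, fun ha => hu2 ha⟩⟩
  have hA1 : ∀ u ∈ A, ∃ x ∈ NS G S u, x ∈ A ∪ C := by
    intro u hu
    obtain ⟨huS, hau, hbu⟩ := (hAmem u).mp hu
    have hua : u ≠ a := fun he => G.irrefl (he ▸ hau)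
    obtain ⟨x, hx1, hx2⟩ := cn u a hua
    have hxv : x ≠ v := by
      intro he
      exact hSnv u huS (by rw [← he]; exact hx1.symm)
    have hxa : x ≠ a := fun he => G.irrefl (he ▸ hx2)
    have hxb : x ≠ b := by
      intro he
      exact hbu (by rw [← he]; exact hx1.symm)
    have hxS : x ∈ S := (hSmem x).mpr ⟨hxv, hxa, hxb⟩
    refine ⟨x, mem_NS.mpr ⟨hxS, hx1⟩, ?_⟩
    by_cases hbx : G.Adj b x
    · exact Finset.mem_union_right _ ((hCmem x).mpr ⟨hxS, hx2, hbx⟩)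
    · exact Finset.mem_union_left _ ((hAmem x).mpr ⟨hxS, hx2, hbx⟩)
  have hB1 : ∀ t ∈ B, ∃ x ∈ NS G S t, x ∈ B ∪ C := by
    intro u hu
    obtain ⟨huS, hbu, hau⟩ := (hBmem u).mp hu
    have hub : u ≠ b := fun he => G.irrefl (he ▸ hbu)
    obtain ⟨x, hx1, hx2⟩ := cn u b hub
    have hxv : x ≠ v := by
      intro he
      exact hSnv u huS (by rw [← he]; exact hx1.symm)
    have hxb : x ≠ b := fun he => G.irrefl (he ▸ hx2)
    have hxa : x ≠ a := by
      intro he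
      exact hau (by rw [← he]; exact hx1.symm)
    have hxS : x ∈ S := (hSmem x).mpr ⟨hxv, hxa, hxb⟩
    refine ⟨x, mem_NS.mpr ⟨hxS, hx1⟩, ?_⟩
    by_cases hax : G.Adj a x
    · exact Finset.mem_union_right _ ((hCmem x).mpr ⟨hxS, hax, hx2⟩)
    · exact Finset.mem_union_left _ ((hBmem x).mpr ⟨hxS, hx2, hax⟩)
  have hA2 : ∀ u ∈ A, (NS G S u).card = 1 → ∀ w ∈ NS G S u, ∀ t ∈ B, G.Adj w t := by
    intro u hu hc w hw t ht
    obtain ⟨huS, hau, hbu⟩ := (hAmem u).mp hu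
    obtain ⟨htS, hbt, hat⟩ := (hBmem t).mp ht
    have hut : u ≠ t := fun he => hat (he ▸ hau)
    obtain ⟨x, hx1, hx2⟩ := cn u t hut
    have hxv : x ≠ v := by
      intro he
      exact hSnv u huS (by rw [← he]; exact hx1.symm)
    have hxa : x ≠ a := by
      intro he
      exact hat (by rw [← he]; exact hx2.symm)
    have hxb : x ≠ b := by
      intro he
      exact hbu (by rw [← he]; exact hx1.symm)
    have hxS : x ∈ S := (hSmem x).mpr ⟨hxv, hxa, hxb⟩
    have hxNS : x ∈ NS G S u := mem_NS.mpr ⟨hxS, hx1⟩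
    have hxw : x = w := Finset.card_le_one.mp (le_of_eq hc) x hxNS w hw
    rw [← hxw]
    exact hx2.symm
  have hB2 : ∀ t ∈ B, (NS G S t).card = 1 → ∀ w ∈ NS G S t, ∀ s ∈ A, G.Adj w s := by
    intro u hu hc w hw t ht
    obtain ⟨huS, hbu, hau⟩ := (hBmem u).mp hu
    obtain ⟨htS, hat, hbt⟩ := (hAmem t).mp ht
    have hut : u ≠ t := fun he => hau (he ▸ hat)
    obtain ⟨x, hx1, hx2⟩ := cn u t hut
    have hxv : x ≠ v := by
      intro he
      exact hSnv u huS (by rw [← he]; exact hx1.symm)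
    have hxb : x ≠ b := by
      intro he
      exact hbt (by rw [← he]; exact hx2.symm)
    have hxa : x ≠ a := by
      intro he
      exact hau (by rw [← he]; exact hx1.symm)
    have hxS : x ∈ S := (hSmem x).mpr ⟨hxv, hxa, hxb⟩
    have hxNS : x ∈ NS G S u := mem_NS.mpr ⟨hxS, hx1⟩
    have hxw : x = w := Finset.card_le_one.mp (le_of_eq hc) x hxNS w hw
    rw [← hxw]
    exact hx2.symm
  have hcore := core' G S A B C hAS hBS hCS hABd hACd hBCd hAne hBne hA1 hB1 hA2 hB2
  -- degree estimates
  have hdegv : G.degree v = 2 := by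
    rw [← SimpleGraph.card_neighborFinset_eq_degree, hN]
    rw [Finset.card_insert_of_notMem (by simp [hab]), Finset.card_singleton]
  have hdega : 2 + (A.card + C.card) ≤ G.degree a := by
    have hsub : insert v (insert b (A ∪ C)) ⊆ G.neighborFinset a := by
      intro x hx
      rw [SimpleGraph.mem_neighborFinset]
      rcases Finset.mem_insert.mp hx with rfl | hx'
      · exact hva.symm
      · rcases Finset.mem_insert.mp hx' with rfl | hx''
        · exact hadjab
        · rcases Finset.mem_union.mp hx'' with h | h
          · exact ((hAmem x).mp h).2.1
          · exact ((hCmem x).mp h).2.1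
    have hcd := Finset.card_le_card hsub
    rw [SimpleGraph.card_neighborFinset_eq_degree] at hcd
    have hvnm : v ∉ insert b (A ∪ C) := by
      intro h
      rcases Finset.mem_insert.mp h with he | h'
      · exact hvb' he
      · have : v ∈ S := by
          rcases Finset.mem_union.mp h' with h'' | h''
          exacts [hAS h'', hCS h'']
        exact ((hSmem v).mp this).1 rfl
    have hbnm : b ∉ A ∪ C := by
      intro h'
      have : b ∈ S := by
        rcases Finset.mem_union.mp h' with h'' | h''
        exacts [hAS h'', hCS h'']
      exact ((hSmem b).mp this).2.2 rfl
    rw [Finset.card_insert_of_notMem hvnm, Finset.card_insert_of_notMem hbnm,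
      Finset.card_union_of_disjoint hACd] at hcd
    omega
  have hdegb : 2 + (B.card + C.card) ≤ G.degree b := by
    have hsub : insert v (insert a (B ∪ C)) ⊆ G.neighborFinset b := by
      intro x hx
      rw [SimpleGraph.mem_neighborFinset]
      rcases Finset.mem_insert.mp hx with rfl | hx'
      · exact hvb.symm
      · rcases Finset.mem_insert.mp hx' with rfl | hx''
        · exact hadjab.symm
        · rcases Finset.mem_union.mp hx'' with h | h
          · exact ((hBmem x).mp h).2.1
          · exact ((hCmem x).mp h).2.2
    have hcd := Finset.card_le_card hsub
    rw [SimpleGraph.card_neighborFinset_eq_degree] at hcd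
    have hvnm : v ∉ insert a (B ∪ C) := by
      intro h
      rcases Finset.mem_insert.mp h with he | h'
      · exact hva' he
      · have : v ∈ S := by
          rcases Finset.mem_union.mp h' with h'' | h''
          exacts [hBS h'', hCS h'']
        exact ((hSmem v).mp this).1 rfl
    have hanm : a ∉ B ∪ C := by
      intro h'
      have : a ∈ S := by
        rcases Finset.mem_union.mp h' with h'' | h''
        exacts [hBS h'', hCS h'']
      exact ((hSmem a).mp this).2.1 rfl
    rw [Finset.card_insert_of_notMem hvnm, Finset.card_insert_of_notMem hanm,
      Finset.card_union_of_disjoint hBCd] at hcd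
    omega
  -- degrees inside S
  have hdegA : ∀ x ∈ A, 1 + (NS G S x).card ≤ G.degree x := by
    intro x hx
    obtain ⟨hxS, hax, hbx⟩ := (hAmem x).mp hx
    have hsub : insert a (NS G S x) ⊆ G.neighborFinset x := by
      intro y hy
      rw [SimpleGraph.mem_neighborFinset]
      rcases Finset.mem_insert.mp hy with rfl | hy'
      · exact hax.symm
      · exact (mem_NS.mp hy').2
    have hcd := Finset.card_le_card hsub
    rw [SimpleGraph.card_neighborFinset_eq_degree] at hcd
    have hanm : a ∉ NS G S x := by
      intro h
      exact ((hSmem a).mp (mem_NS.mp h).1).2.1 rfl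
    rw [Finset.card_insert_of_notMem hanm] at hcd
    omega
  have hdegB : ∀ x ∈ B, 1 + (NS G S x).card ≤ G.degree x := by
    intro x hx
    obtain ⟨hxS, hbx, hax⟩ := (hBmem x).mp hx
    have hsub : insert b (NS G S x) ⊆ G.neighborFinset x := by
      intro y hy
      rw [SimpleGraph.mem_neighborFinset]
      rcases Finset.mem_insert.mp hy with rfl | hy'
      · exact hbx.symm
      · exact (mem_NS.mp hy').2
    have hcd := Finset.card_le_card hsub
    rw [SimpleGraph.card_neighborFinset_eq_degree] at hcd
    have hbnm : b ∉ NS G S x := by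
      intro h
      exact ((hSmem b).mp (mem_NS.mp h).1).2.2 rfl
    rw [Finset.card_insert_of_notMem hbnm] at hcd
    omega
  have hdegC : ∀ x ∈ C, 2 + (NS G S x).card ≤ G.degree x := by
    intro x hx
    obtain ⟨hxS, hax, hbx⟩ := (hCmem x).mp hx
    have hsub : insert a (insert b (NS G S x)) ⊆ G.neighborFinset x := by
      intro y hy
      rw [SimpleGraph.mem_neighborFinset]
      rcases Finset.mem_insert.mp hy with rfl | hy'
      · exact hax.symm
      · rcases Finset.mem_insert.mp hy' with rfl | hy''
        · exact hbx.symm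
        · exact (mem_NS.mp hy'').2
    have hcd := Finset.card_le_card hsub
    rw [SimpleGraph.card_neighborFinset_eq_degree] at hcd
    have hbnm : b ∉ NS G S x := by
      intro h
      exact ((hSmem b).mp (mem_NS.mp h).1).2.2 rfl
    have hanm : a ∉ insert b (NS G S x) := by
      intro h
      rcases Finset.mem_insert.mp h with he | h'
      · exact hab he
      · exact ((hSmem a).mp (mem_NS.mp h').1).2.1 rfl
    rw [Finset.card_insert_of_notMem hanm, Finset.card_insert_of_notMem hbnm] at hcd
    omega
  -- sum over S
  have hsumsplit : ∀ (g : V → ℕ),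
      ∑ x ∈ S, g x = ∑ x ∈ A, g x + ∑ x ∈ B, g x + ∑ x ∈ C, g x := by
    intro g
    rw [← hpart, Finset.sum_union (Finset.disjoint_union_left.mpr ⟨hACd, hBCd⟩),
      Finset.sum_union hABd]
  have hsumA : A.card + ∑ x ∈ A, (NS G S x).card ≤ ∑ x ∈ A, G.degree x := by
    have := Finset.sum_le_sum hdegA
    rw [Finset.sum_add_distrib, Finset.sum_const, smul_eq_mul, mul_one] at this
    exact this
  have hsumB : B.card + ∑ x ∈ B, (NS G S x).card ≤ ∑ x ∈ B, G.degree x := by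
    have := Finset.sum_le_sum hdegB
    rw [Finset.sum_add_distrib, Finset.sum_const, smul_eq_mul, mul_one] at this
    exact this
  have hsumC : 2 * C.card + ∑ x ∈ C, (NS G S x).card ≤ ∑ x ∈ C, G.degree x := by
    have := Finset.sum_le_sum hdegC
    rw [Finset.sum_add_distrib, Finset.sum_const, smul_eq_mul, mul_comm] at this
    exact this
  -- global split
  have hglob : ∑ x ∈ S, G.degree x + ∑ x ∈ ({v, a, b} : Finset V), G.degree x
      = ∑ x, G.degree x := by
    rw [hSdef]
    exact Finset.sum_sdiff (Finset.subset_univ _)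
  have hvab : ∑ x ∈ ({v, a, b} : Finset V), G.degree x
      = G.degree v + (G.degree a + G.degree b) := by
    rw [Finset.sum_insert (by simp [hva', hvb']), Finset.sum_insert (by simp [hab]),
      Finset.sum_singleton]
  have hScard : S.card + 3 = Fintype.card V := by
    have h3 : ({v, a, b} : Finset V).card = 3 := by
      rw [Finset.card_insert_of_notMem (by simp [hva', hvb']),
        Finset.card_insert_of_notMem (by simp [hab]), Finset.card_singleton]
    have h4 : ({v, a, b} : Finset V).card ≤ Fintype.card V := by
      rw [← Finset.card_univ]
      exact Finset.card_le_card (Finset.subset_univ _)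
    rw [hSdef, Finset.card_sdiff_of_subset (Finset.subset_univ _), Finset.card_univ] at *
    omega
  have hNS1 := hsumsplit (fun x => (NS G S x).card)
  have hNS2 := hsumsplit (fun x => G.degree x)
  omega

lemma deg3 (G : SimpleGraph V) [DecidableRel G.Adj]
    (cn : ∀ u w : V, u ≠ w → ∃ x, G.Adj u x ∧ G.Adj w x)
    (v a b c : V) (hab : a ≠ b) (hac : a ≠ c) (hbc : b ≠ c)
    (hN : G.neighborFinset v = {a, b, c})
    (hmin : ∀ x, 3 ≤ G.degree x) :
    4 * Fintype.card V ≤ (∑ x, G.degree x) + 6 := by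
  classical
  have hvx : ∀ x, G.Adj v x ↔ (x = a ∨ x = b ∨ x = c) := by
    intro x; rw [← SimpleGraph.mem_neighborFinset, hN]; simp
  have hva : G.Adj v a := (hvx a).mpr (Or.inl rfl)
  have hvb : G.Adj v b := (hvx b).mpr (Or.inr (Or.inl rfl))
  have hvc : G.Adj v c := (hvx c).mpr (Or.inr (Or.inr rfl))
  have hva' : v ≠ a := fun he => G.irrefl (he ▸ hva)
  have hvb' : v ≠ b := fun he => G.irrefl (he ▸ hvb)
  have hvc' : v ≠ c := fun he => G.irrefl (he ▸ hvc)
  -- edges among a b c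
  have hea : G.Adj a b ∨ G.Adj a c := by
    obtain ⟨x, hx1, hx2⟩ := cn v a hva'
    rcases (hvx x).mp hx1 with rfl | rfl | rfl
    · exact absurd hx2 (G.irrefl)
    · exact Or.inl hx2
    · exact Or.inr hx2
  have heb : G.Adj b a ∨ G.Adj b c := by
    obtain ⟨x, hx1, hx2⟩ := cn v b hvb'
    rcases (hvx x).mp hx1 with rfl | rfl | rfl
    · exact Or.inl hx2
    · exact absurd hx2 (G.irrefl)
    · exact Or.inr hx2
  have hec : G.Adj c a ∨ G.Adj c b := by
    obtain ⟨x, hx1, hx2⟩ := cn v c hvc'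
    rcases (hvx x).mp hx1 with rfl | rfl | rfl
    · exact Or.inl hx2
    · exact Or.inr hx2
    · exact absurd hx2 (G.irrefl)
  set Q : Finset V := {v, a, b, c} with hQdef
  have hQcard : Q.card = 4 := by
    rw [hQdef, Finset.card_insert_of_notMem (by simp [hva', hvb', hvc']),
      Finset.card_insert_of_notMem (by simp [hab, hac]),
      Finset.card_insert_of_notMem (by simp [hbc]), Finset.card_singleton]
  have hdom : ∀ x ∈ Finset.univ \ Q, G.Adj a x ∨ G.Adj b x ∨ G.Adj c x := by
    intro x hx
    rw [Finset.mem_sdiff, hQdef] at hx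
    have hx' := hx.2
    simp only [Finset.mem_insert, Finset.mem_singleton, not_or] at hx'
    obtain ⟨h1, h2, h3, h4⟩ := hx'
    obtain ⟨y, hy1, hy2⟩ := cn v x (fun he => h1 he.symm)
    rcases (hvx y).mp hy1 with rfl | rfl | rfl
    · exact Or.inl hy2.symm
    · exact Or.inr (Or.inl hy2.symm)
    · exact Or.inr (Or.inr hy2.symm)
  -- indicator counting
  set F : V → ℕ := fun x =>
    (if G.Adj a x then 1 else 0) + (if G.Adj b x then 1 else 0) + (if G.Adj c x then 1 else 0)
    with hFdef
  have hFsum : ∑ x, F x = G.degree a + G.degree b + G.degree c := by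
    rw [hFdef]
    rw [Finset.sum_add_distrib, Finset.sum_add_distrib]
    congr 1
    · congr 1
      · rw [← SimpleGraph.card_neighborFinset_eq_degree, SimpleGraph.neighborFinset_eq_filter,
          Finset.card_filter]
      · rw [← SimpleGraph.card_neighborFinset_eq_degree, SimpleGraph.neighborFinset_eq_filter,
          Finset.card_filter]
    · rw [← SimpleGraph.card_neighborFinset_eq_degree, SimpleGraph.neighborFinset_eq_filter,
        Finset.card_filter]
  have hFv : F v = 3 := by
    rw [hFdef]
    simp only [if_pos hva.symm, if_pos hvb.symm, if_pos hvc.symm]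
  have hFabc : 4 ≤ F a + F b + F c := by
    rw [hFdef]
    have c1 : G.Adj b a ↔ G.Adj a b := G.adj_comm b a
    have c2 : G.Adj c a ↔ G.Adj a c := G.adj_comm c a
    have c3 : G.Adj c b ↔ G.Adj b c := G.adj_comm c b
    rw [c1] at heb; rw [c2, c3] at hec
    by_cases h1 : G.Adj a b <;> by_cases h2 : G.Adj a c <;> by_cases h3 : G.Adj b c <;>
      simp only [h1, h2, h3, c1, c2, c3, G.irrefl, if_true, if_false, ite_true, ite_false] <;>
      first
        | omega
        | (exfalso; tauto)
  have hQsum : ∑ x ∈ Q, F x = F v + (F a + F b + F c) := by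
    rw [hQdef, Finset.sum_insert (by simp [hva', hvb', hvc']),
      Finset.sum_insert (by simp [hab, hac]), Finset.sum_insert (by simp [hbc]),
      Finset.sum_singleton]
    ring
  have hrest : (Finset.univ \ Q).card ≤ ∑ x ∈ Finset.univ \ Q, F x := by
    calc (Finset.univ \ Q).card = ∑ _x ∈ Finset.univ \ Q, 1 := by
          rw [Finset.sum_const, smul_eq_mul, mul_one]
      _ ≤ ∑ x ∈ Finset.univ \ Q, F x := by
          apply Finset.sum_le_sum
          intro x hx
          rcases hdom x hx with h | h | h <;> rw [hFdef] <;> simp only [h, if_true, ite_true] <;> split_ifs <;> omega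
  have hFsplit : ∑ x ∈ Finset.univ \ Q, F x + ∑ x ∈ Q, F x = ∑ x, F x :=
    Finset.sum_sdiff (Finset.subset_univ _)
  have hdsplit : ∑ x ∈ Finset.univ \ Q, G.degree x + ∑ x ∈ Q, G.degree x
      = ∑ x, G.degree x := Finset.sum_sdiff (Finset.subset_univ _)
  have hdrest : 3 * (Finset.univ \ Q).card ≤ ∑ x ∈ Finset.univ \ Q, G.degree x := by
    calc 3 * (Finset.univ \ Q).card = ∑ _x ∈ Finset.univ \ Q, 3 := by
          rw [Finset.sum_const, smul_eq_mul, mul_comm]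
      _ ≤ _ := Finset.sum_le_sum (fun x _ => hmin x)
  have hdQ : ∑ x ∈ Q, G.degree x
      = G.degree v + (G.degree a + G.degree b + G.degree c) := by
    rw [hQdef, Finset.sum_insert (by simp [hva', hvb', hvc']),
      Finset.sum_insert (by simp [hab, hac]), Finset.sum_insert (by simp [hbc]),
      Finset.sum_singleton]
    ring
  have hdegv : 3 ≤ G.degree v := hmin v
  have hcardQ : (Finset.univ \ Q).card + 4 = Fintype.card V := by
    have h4 : Q.card ≤ Fintype.card V := by
      rw [← Finset.card_univ]
      exact Finset.card_le_card (Finset.subset_univ _)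
    rw [Finset.card_sdiff_of_subset (Finset.subset_univ _), Finset.card_univ] at *
    omega
  omega

end St12

/-- If `G` is an `n`-vertex graph with `diam(G) = rad(G) = 2` satisfying the
triangle-property (every edge lies in a triangle), then `G` has at least
`2n - 3` edges. -/
theorem stmt12 (n : ℕ) (G : SimpleGraph (Fin n)) [DecidableRel G.Adj]
    (hconn : G.Connected)
    (hdiam : ∀ u v : Fin n, G.dist u v ≤ 2)
    (hrad : ∀ v : Fin n, ∃ u : Fin n, 2 ≤ G.dist v u)
    (htri : ∀ u v : Fin n, G.Adj u v → ∃ w : Fin n, G.Adj u w ∧ G.Adj v w) :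
    2 * n - 3 ≤ G.edgeFinset.card := by
  classical
  have hne : Nonempty (Fin n) := hconn.nonempty
  -- every two distinct vertices have a common neighbour
  have cn : ∀ u w : Fin n, u ≠ w → ∃ x, G.Adj u x ∧ G.Adj w x := by
    intro u w huw
    by_cases ha : G.Adj u w
    · exact htri u w ha
    · have hd2 : G.dist u w ≤ 2 := hdiam u w
      have hd0 : G.dist u w ≠ 0 := fun h => huw ((hconn.dist_eq_zero_iff).mp h)
      have hd1 : G.dist u w ≠ 1 := fun h => ha (SimpleGraph.dist_eq_one_iff_adj.mp h)
      have hd : G.dist u w = 2 := by omega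
      obtain ⟨p, hp⟩ := hconn.exists_walk_length_eq_dist u w
      rw [hd] at hp
      cases p with
      | nil => simp at hp
      | cons h q =>
        cases q with
        | nil => simp at hp
        | cons h' q' =>
          cases q' with
          | nil => exact ⟨_, h, h'.symm⟩
          | cons h'' q'' => simp [SimpleGraph.Walk.length_cons] at hp
  -- no dominating vertex
  have nodom : ∀ w : Fin n, ∃ u, u ≠ w ∧ ¬ G.Adj w u := by
    intro w
    obtain ⟨u, hu⟩ := hrad w
    refine ⟨u, ?_, ?_⟩
    · intro he
      rw [he] at hu
      simp [SimpleGraph.dist_self] at hu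
    · intro hadj
      have h1 : G.dist w u ≤ 1 := by
        have := SimpleGraph.dist_le (SimpleGraph.Walk.cons hadj SimpleGraph.Walk.nil)
        simpa using this
      omega
  -- vertex of minimum degree
  obtain ⟨v, -, hv⟩ := Finset.exists_min_image Finset.univ (fun x => G.degree x)
    ⟨Classical.arbitrary (Fin n), Finset.mem_univ _⟩
  have hhs : ∑ x, G.degree x = 2 * G.edgeFinset.card :=
    SimpleGraph.sum_degrees_eq_twice_card_edges G
  have hcardV : Fintype.card (Fin n) = n := Fintype.card_fin n
  suffices h : 4 * n ≤ (∑ x, G.degree x) + 6 by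
    rw [hhs] at h
    omega
  by_cases h4 : 4 ≤ G.degree v
  · have hall : ∀ x : Fin n, 4 ≤ G.degree x := fun x => le_trans h4 (hv x (Finset.mem_univ x))
    have : 4 * n ≤ ∑ x, G.degree x := by
      calc 4 * n = ∑ _x : Fin n, 4 := by
            rw [Finset.sum_const, smul_eq_mul, Finset.card_univ, hcardV, mul_comm]
        _ ≤ ∑ x, G.degree x := Finset.sum_le_sum (fun i _ => hall i)
    omega
  · -- degree v ≤ 3
    have hd2 : 2 ≤ G.degree v := by
      by_contra hlt
      push_neg at hlt
      obtain ⟨u, hu1, hu2⟩ := nodom v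
      obtain ⟨x, hx1, hx2⟩ := cn v u (Ne.symm hu1)
      have hxN : x ∈ G.neighborFinset v := (SimpleGraph.mem_neighborFinset G v x).mpr hx1
      have hc1 : G.degree v = 1 := by
        have hp : 1 ≤ (G.neighborFinset v).card := Finset.card_pos.mpr ⟨x, hxN⟩
        rw [SimpleGraph.card_neighborFinset_eq_degree] at hp
        omega
      obtain ⟨u', hu'1, hu'2⟩ := nodom x
      by_cases hu'v : u' = v
      · subst hu'v
        exact hu'2 hx1.symm
      · obtain ⟨y, hy1, hy2⟩ := cn v u' (fun he => hu'v he.symm)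
        have hyN : y ∈ G.neighborFinset v := (SimpleGraph.mem_neighborFinset G v y).mpr hy1
        have hyx : y = x := by
          have hone : (G.neighborFinset v).card ≤ 1 := by
            rw [SimpleGraph.card_neighborFinset_eq_degree]; omega
          exact Finset.card_le_one.mp hone y hyN x hxN
        rw [hyx] at hy2
        exact hu'2 hy2.symm
    by_cases h2 : G.degree v = 2
    · have hc2 : (G.neighborFinset v).card = 2 := by
        rw [SimpleGraph.card_neighborFinset_eq_degree]; exact h2
      obtain ⟨a, b, hab, hN⟩ := Finset.card_eq_two.mp hc2
      have := St12.deg2 G cn nodom v a b hab hN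
      rw [hcardV] at this
      omega
    · have h3 : G.degree v = 3 := by omega
      have hc3 : (G.neighborFinset v).card = 3 := by
        rw [SimpleGraph.card_neighborFinset_eq_degree]; exact h3
      obtain ⟨a, b, c, hab, hac, hbc, hN⟩ := Finset.card_eq_three.mp hc3
      have hmin : ∀ x, 3 ≤ G.degree x := fun x => h3 ▸ hv x (Finset.mem_univ x)
      have := St12.deg3 G cn v a b c hab hac hbc hN hmin
      rw [hcardV] at this
      omega
end
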